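/- arXiv:1102.0373 — 7 statements merged into one kernel-verified Lean document; each statement's English description precedes it below -/
import Mathlib

section
/- Let N ≥ 2 be an integer, 0 < γ ≤ 2, s ≥ 0, let b : [−1,1] → [0,∞) be measurable with A₀ := ∫_{S^{N−1}} b(e·σ) dσ < ∞ (independent of the unit vector e), and let B : ℝ^N × S^{N−1} → [0,∞) be measurable with B(z,σ) ≤ (1+|z|²)^{γ/2} b((z/|z|)·σ) for all z ≠ 0 and all σ (with z/|z| replaced by a fixed unit vector when z = 0); set A(z) := ∫_{S^{N−1}} B(z,σ) dσ. Then for all μ, ν ∈ B_{s+γ}⁺(ℝ^N) and every Borel function ψ : ℝ^N → ℝ with |ψ(v)| ≤ ⟨v⟩^s for all v, one has ∬_{ℝ^N×ℝ^N} (∫_{S^{N−1}} B(v−v_*,σ) |ψ(v')| dσ) dμ(v) dν(v_*) ≤ 2^{(s+γ)/2} A₀ (‖μ‖_{s+γ}‖ν‖₀ + ‖μ‖₀‖ν‖_{s+γ}), and ∬_{ℝ^N×ℝ^N} A(v−v_*) |ψ(v)| dμ(v) dν(v_*) ≤ 2^{(s+γ)/2} A₀ (‖μ‖_{s+γ}‖ν‖₀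 + ‖μ‖₀‖ν‖_{s+γ}). -/
open Real MeasureTheory Metric Classical
open scoped ENNReal NNReal RealInnerProductSpace

/-- The surface measure on the unit sphere `S^{N-1} ⊆ ℝ^N`. -/
noncomputable def sphereMeasure (N : ℕ) :
    Measure (sphere (0 : EuclideanSpace ℝ (Fin N)) 1) :=
  (volume : Measure (EuclideanSpace ℝ (Fin N))).toSphere

/-- The post-collisional velocity `v' = (v+v_*)/2 + (|v-v_*|/2)σ`. -/
noncomputable def vprime {N : ℕ} (v w : EuclideanSpace ℝ (Fin N))
    (σ : sphere (0 : EuclideanSpace ℝ (Fin N)) 1) : EuclideanSpace ℝ (Fin N) :=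
  (2⁻¹ : ℝ) • (v + w) + (‖v - w‖ / 2) • (σ : EuclideanSpace ℝ (Fin N))

/-- The weighted norm `‖μ‖ₛ = ∫ ⟨v⟩^s dμ`, `⟨v⟩ = (1+|v|²)^{1/2}`, valued in `ℝ≥0∞`. -/
noncomputable def wnorm {N : ℕ} (s : ℝ) (μ : Measure (EuclideanSpace ℝ (Fin N))) : ℝ≥0∞ :=
  ∫⁻ v, ENNReal.ofReal ((1 + ‖v‖ ^ 2) ^ (s / 2)) ∂μ

lemma rpow_subadd' {x y p : ℝ} (hx : 0 ≤ x) (hy : 0 ≤ y) (hp0 : 0 ≤ p) (hp1 : p ≤ 1) :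
    (x + y) ^ p ≤ x ^ p + y ^ p := by
  have h := NNReal.rpow_add_le_add_rpow x.toNNReal y.toNNReal hp0 hp1
  rw [← Real.toNNReal_add hx hy] at h
  have h2 := NNReal.coe_le_coe.2 h
  simpa [NNReal.coe_rpow, Real.coe_toNNReal _ hx, Real.coe_toNNReal _ hy,
    Real.coe_toNNReal _ (add_nonneg hx hy)] using h2

lemma rpow_convex' {x y p : ℝ} (hx : 0 ≤ x) (hy : 0 ≤ y) (hp : 1 ≤ p) :
    (x + y) ^ p ≤ 2 ^ (p - 1) * (x ^ p + y ^ p) := by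
  have h := NNReal.rpow_add_le_mul_rpow_add_rpow x.toNNReal y.toNNReal hp
  rw [← Real.toNNReal_add hx hy] at h
  have h2 := NNReal.coe_le_coe.2 h
  simpa [NNReal.coe_rpow, NNReal.coe_mul, NNReal.coe_add, Real.coe_toNNReal _ hx,
    Real.coe_toNNReal _ hy, Real.coe_toNNReal _ (add_nonneg hx hy)] using h2

lemma key_ineq {s γ : ℝ} (hs : 0 ≤ s) (hγ0 : 0 < γ) (hγ2 : γ ≤ 2)
    {X Y U V : ℝ} (hX : 1 ≤ X) (hY : 1 ≤ Y) (hU0 : 0 ≤ U) (hV0 : 0 ≤ V)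
    (hU : U ≤ 2 * (X + Y - 1)) (hV : V ≤ X + Y - 1) :
    U ^ (γ / 2) * V ^ (s / 2) ≤ 2 ^ ((s + γ) / 2) * (X ^ ((s + γ) / 2) + Y ^ ((s + γ) / 2)) := by
  set p := (s + γ) / 2 with hpdef
  have hZ0 : (0:ℝ) < X + Y - 1 := by linarith
  have hp0 : 0 < p := by rw [hpdef]; linarith
  have h1 : U ^ (γ/2) ≤ 2 ^ (γ/2) * (X+Y-1) ^ (γ/2) := by
    rw [← Real.mul_rpow (by norm_num) hZ0.le]
    exact Real.rpow_le_rpow hU0 hU (by linarith)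
  have h2 : V ^ (s/2) ≤ (X+Y-1) ^ (s/2) := Real.rpow_le_rpow hV0 hV (by linarith)
  have h3 : U ^ (γ/2) * V ^ (s/2) ≤ 2 ^ (γ/2) * (X+Y-1) ^ p := by
    calc U ^ (γ/2) * V ^ (s/2)
        ≤ (2 ^ (γ/2) * (X+Y-1) ^ (γ/2)) * ((X+Y-1) ^ (s/2)) :=
          mul_le_mul h1 h2 (Real.rpow_nonneg hV0 _) (by positivity)
      _ = 2 ^ (γ/2) * (X+Y-1) ^ p := by
          rw [mul_assoc, ← Real.rpow_add hZ0]
          congr 1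
          rw [hpdef]; ring
  refine h3.trans ?_
  have hXp0 : (0:ℝ) ≤ X ^ p := Real.rpow_nonneg (by linarith) _
  have hYp0 : (0:ℝ) ≤ Y ^ p := Real.rpow_nonneg (by linarith) _
  rcases le_or_gt p 1 with hp1 | hp1
  · have hZle : (X + Y - 1) ^ p ≤ X ^ p + Y ^ p := by
      have hre : X + Y - 1 = X + (Y - 1) := by ring
      rw [hre]
      refine (rpow_subadd' (by linarith) (by linarith) hp0.le hp1).trans ?_
      exact add_le_add le_rfl (Real.rpow_le_rpow (by linarith) (by linarith) hp0.le)
    have h2p : (2:ℝ) ^ (γ/2) ≤ 2 ^ p := by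
      apply Real.rpow_le_rpow_of_exponent_le one_le_two
      rw [hpdef]; linarith
    exact mul_le_mul h2p hZle (Real.rpow_nonneg hZ0.le _) (by positivity)
  · have hZle : (X + Y - 1) ^ p ≤ 2 ^ (p-1) * (X ^ p + Y ^ p) := by
      refine (Real.rpow_le_rpow hZ0.le (by linarith : X + Y - 1 ≤ X + Y) hp0.le).trans ?_
      exact rpow_convex' (by linarith) (by linarith) hp1.le
    calc 2 ^ (γ/2) * (X+Y-1) ^ p ≤ 2 ^ (γ/2) * (2 ^ (p-1) * (X ^ p + Y ^ p)) :=
          mul_le_mul_of_nonneg_left hZle (by positivity)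
      _ = 2 ^ (γ/2 + (p-1)) * (X ^ p + Y ^ p) := by
          rw [Real.rpow_add two_pos, mul_assoc]
      _ ≤ 2 ^ p * (X ^ p + Y ^ p) := by
          apply mul_le_mul_of_nonneg_right _ (by positivity)
          exact Real.rpow_le_rpow_of_exponent_le one_le_two (by linarith)

lemma par_id {N : ℕ} (v w : EuclideanSpace ℝ (Fin N)) :
    ‖v+w‖ ^ 2 + ‖v-w‖ ^ 2 = 2*‖v‖^2 + 2*‖w‖^2 := by
  have h1 := norm_add_sq_real v w
  have h2 := norm_sub_sq_real v w
  linarith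

lemma vprime_sq_le {N : ℕ} (v w : EuclideanSpace ℝ (Fin N))
    (σ : sphere (0 : EuclideanSpace ℝ (Fin N)) 1) :
    ‖vprime v w σ‖ ^ 2 ≤ ‖v‖ ^ 2 + ‖w‖ ^ 2 := by
  have hσ : ‖(σ : EuclideanSpace ℝ (Fin N))‖ = 1 := mem_sphere_zero_iff_norm.mp σ.2
  have h1 : ‖vprime v w σ‖ ≤ ‖v+w‖/2 + ‖v-w‖/2 := by
    unfold vprime
    refine (norm_add_le _ _).trans (le_of_eq ?_)
    rw [norm_smul, norm_smul, hσ, mul_one, Real.norm_eq_abs, Real.norm_eq_abs,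
      abs_of_nonneg (by positivity : (0:ℝ) ≤ (2⁻¹:ℝ)),
      abs_of_nonneg (by positivity : (0:ℝ) ≤ ‖v - w‖ / 2)]
    ring
  have hpar := par_id v w
  nlinarith [norm_nonneg (vprime v w σ), norm_nonneg (v+w), norm_nonneg (v-w),
    sq_nonneg (‖v+w‖ - ‖v-w‖)]

lemma sub_sq_le {N : ℕ} (v w : EuclideanSpace ℝ (Fin N)) :
    ‖v-w‖ ^ 2 ≤ 2*‖v‖^2 + 2*‖w‖^2 := by
  have hpar := par_id v w
  nlinarith [sq_nonneg ‖v+w‖]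


/-- **part of Proposition 1.4.** Bilinear moment bounds on the gain and loss
parts of the collision operator: for `B(z,σ) ≤ (1+|z|²)^{γ/2} b((z/|z|)·σ)` with
`A₀ = ∫_{S^{N-1}} b(e·σ) dσ < ∞` and `|ψ(v)| ≤ ⟨v⟩^s`,
`∬ (∫ B(v-v_*,σ)|ψ(v')| dσ) dμ dν` and `∬ A(v-v_*)|ψ(v)| dμ dν` are both bounded by
`2^{(s+γ)/2} A₀ (‖μ‖_{s+γ}‖ν‖₀ + ‖μ‖₀‖ν‖_{s+γ})`. -/
theorem collision_kernel_moment_bounds (N : ℕ) (hN : 2 ≤ N)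
    (γ s : ℝ) (hγ0 : 0 < γ) (hγ2 : γ ≤ 2) (hs : 0 ≤ s)
    (b : ℝ → ℝ) (hbm : Measurable b) (hb0 : ∀ x, 0 ≤ b x)
    (A₀ : ℝ) (hA₀ : 0 ≤ A₀)
    (hA0 : ∀ e : EuclideanSpace ℝ (Fin N), ‖e‖ = 1 →
      ∫⁻ σ, ENNReal.ofReal (b ⟪e, (σ : EuclideanSpace ℝ (Fin N))⟫) ∂(sphereMeasure N)
        = ENNReal.ofReal A₀)
    (e₁ : EuclideanSpace ℝ (Fin N)) (he₁ : ‖e₁‖ = 1)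
    (B : EuclideanSpace ℝ (Fin N) → EuclideanSpace ℝ (Fin N) → ℝ)
    (hBm : Measurable (Function.uncurry B)) (hB0 : ∀ z σ, 0 ≤ B z σ)
    (hBb : ∀ z σ : EuclideanSpace ℝ (Fin N), ‖σ‖ = 1 →
      B z σ ≤ (1 + ‖z‖ ^ 2) ^ (γ / 2) * b ⟪if z = 0 then e₁ else ‖z‖⁻¹ • z, σ⟫)
    (μ ν : Measure (EuclideanSpace ℝ (Fin N)))
    (hμ : wnorm (s + γ) μ < ⊤) (hν : wnorm (s + γ) ν < ⊤)
    (ψ : EuclideanSpace ℝ (Fin N) → ℝ) (hψm : Measurable ψ)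
    (hψ : ∀ v, |ψ v| ≤ (1 + ‖v‖ ^ 2) ^ (s / 2)) :
    (∫⁻ v, ∫⁻ w, (∫⁻ σ, ENNReal.ofReal
          (B (v - w) (σ : EuclideanSpace ℝ (Fin N)) * |ψ (vprime v w σ)|)
          ∂(sphereMeasure N)) ∂ν ∂μ
        ≤ ENNReal.ofReal (2 ^ ((s + γ) / 2) * A₀) *
            (wnorm (s + γ) μ * wnorm 0 ν + wnorm 0 μ * wnorm (s + γ) ν))
    ∧ (∫⁻ v, ∫⁻ w, (∫⁻ σ, ENNReal.ofReal
          (B (v - w) (σ : EuclideanSpace ℝ (Fin N))) ∂(sphereMeasure N)) *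
          ENNReal.ofReal |ψ v| ∂ν ∂μ
        ≤ ENNReal.ofReal (2 ^ ((s + γ) / 2) * A₀) *
            (wnorm (s + γ) μ * wnorm 0 ν + wnorm 0 μ * wnorm (s + γ) ν)) := by
  set W : EuclideanSpace ℝ (Fin N) → ℝ≥0∞ :=
    fun v => ENNReal.ofReal ((1 + ‖v‖ ^ 2) ^ ((s + γ) / 2)) with hWdef
  set c : ℝ≥0∞ := ENNReal.ofReal (2 ^ ((s + γ) / 2) * A₀) with hcdef
  have hWm : Measurable W := by
    apply ENNReal.measurable_ofReal.comp
    have hcont : Continuous fun v : EuclideanSpace ℝ (Fin N) => (1 + ‖v‖ ^ 2) ^ ((s + γ) / 2) :=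
      (continuous_const.add (continuous_norm.pow 2)).rpow_const
        (fun x => Or.inr (by positivity))
    exact hcont.measurable
  have hw0 : ∀ ρ : Measure (EuclideanSpace ℝ (Fin N)), wnorm 0 ρ = ρ Set.univ := by
    intro ρ
    unfold wnorm
    simp
  have hunit : ∀ z : EuclideanSpace ℝ (Fin N),
      ‖(if z = 0 then e₁ else ‖z‖⁻¹ • z : EuclideanSpace ℝ (Fin N))‖ = 1 := by
    intro z
    by_cases hz : z = 0
    · simp [hz, he₁]
    · rw [if_neg hz, norm_smul, norm_inv, norm_norm,
        inv_mul_cancel₀ (norm_ne_zero_iff.2 hz)]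
  -- key pointwise real inequality
  have hkey : ∀ v w : EuclideanSpace ℝ (Fin N), ∀ T : ℝ, 0 ≤ T → T ≤ 1 + ‖v‖^2 + ‖w‖^2 →
      (1 + ‖v - w‖ ^ 2) ^ (γ/2) * T ^ (s/2)
        ≤ 2 ^ ((s+γ)/2) * ((1+‖v‖^2) ^ ((s+γ)/2) + (1+‖w‖^2) ^ ((s+γ)/2)) := by
    intro v w T hT0 hT
    have hsub := sub_sq_le v w
    have h1 : (0:ℝ) ≤ ‖v‖^2 := sq_nonneg _
    have h2 : (0:ℝ) ≤ ‖w‖^2 := sq_nonneg _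
    exact key_ineq hs hγ0 hγ2 (by linarith) (by linarith) (by positivity) hT0
      (by linarith) (by linarith)
  have hconst : ∀ v w : EuclideanSpace ℝ (Fin N),
      ENNReal.ofReal (2 ^ ((s+γ)/2) * ((1+‖v‖^2) ^ ((s+γ)/2) + (1+‖w‖^2) ^ ((s+γ)/2)))
        * ENNReal.ofReal A₀ = c * (W v + W w) := by
    intro v w
    rw [hcdef, hWdef, ENNReal.ofReal_mul (by positivity), ENNReal.ofReal_mul (by positivity),
      ENNReal.ofReal_add (by positivity) (by positivity)]
    ring
  -- inner bound for the gain term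
  have hinner1 : ∀ v w : EuclideanSpace ℝ (Fin N),
      (∫⁻ σ, ENNReal.ofReal
          (B (v - w) (σ : EuclideanSpace ℝ (Fin N)) * |ψ (vprime v w σ)|)
          ∂(sphereMeasure N)) ≤ c * (W v + W w) := by
    intro v w
    set e : EuclideanSpace ℝ (Fin N) := if v - w = 0 then e₁ else ‖v - w‖⁻¹ • (v - w) with he
    set C : ℝ := 2 ^ ((s+γ)/2) * ((1+‖v‖^2) ^ ((s+γ)/2) + (1+‖w‖^2) ^ ((s+γ)/2)) with hCdef
    have hC0 : 0 ≤ C := by rw [hCdef]; positivity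
    calc ∫⁻ σ, ENNReal.ofReal
          (B (v - w) (σ : EuclideanSpace ℝ (Fin N)) * |ψ (vprime v w σ)|)
          ∂(sphereMeasure N)
        ≤ ∫⁻ σ, ENNReal.ofReal C *
            ENNReal.ofReal (b ⟪e, (σ : EuclideanSpace ℝ (Fin N))⟫) ∂(sphereMeasure N) := by
          apply lintegral_mono
          intro σ
          dsimp only
          rw [← ENNReal.ofReal_mul hC0]
          apply ENNReal.ofReal_le_ofReal
          have hσ : ‖(σ : EuclideanSpace ℝ (Fin N))‖ = 1 := mem_sphere_zero_iff_norm.mp σ.2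
          have hb1 := hBb (v - w) σ hσ
          rw [← he] at hb1
          have hψ1 := hψ (vprime v w σ)
          have hmul : B (v-w) (σ : EuclideanSpace ℝ (Fin N)) * |ψ (vprime v w σ)| ≤
              ((1 + ‖v-w‖^2) ^ (γ/2) * b ⟪e, (σ : EuclideanSpace ℝ (Fin N))⟫)
                * (1 + ‖vprime v w σ‖^2) ^ (s/2) :=
            mul_le_mul hb1 hψ1 (abs_nonneg _) (mul_nonneg (by positivity) (hb0 _))
          refine hmul.trans ?_
          have hvp := vprime_sq_le v w σ
          have h2 : (1 + ‖v-w‖^2) ^ (γ/2) * (1 + ‖vprime v w σ‖^2) ^ (s/2) ≤ C :=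
            hkey v w _ (by positivity) (by linarith)
          calc ((1 + ‖v-w‖^2) ^ (γ/2) * b ⟪e, (σ : EuclideanSpace ℝ (Fin N))⟫)
                * (1 + ‖vprime v w σ‖^2) ^ (s/2)
              = ((1 + ‖v-w‖^2) ^ (γ/2) * (1 + ‖vprime v w σ‖^2) ^ (s/2))
                * b ⟪e, (σ : EuclideanSpace ℝ (Fin N))⟫ := by ring
            _ ≤ C * b ⟪e, (σ : EuclideanSpace ℝ (Fin N))⟫ :=
                mul_le_mul_of_nonneg_right h2 (hb0 _)
      _ = ENNReal.ofReal C *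
            ∫⁻ σ, ENNReal.ofReal (b ⟪e, (σ : EuclideanSpace ℝ (Fin N))⟫) ∂(sphereMeasure N) :=
          lintegral_const_mul' _ _ ENNReal.ofReal_ne_top
      _ = ENNReal.ofReal C * ENNReal.ofReal A₀ := by rw [hA0 e (hunit _)]
      _ = c * (W v + W w) := hconst v w
  -- inner bound for the loss term
  have hinner2 : ∀ v w : EuclideanSpace ℝ (Fin N),
      (∫⁻ σ, ENNReal.ofReal (B (v - w) (σ : EuclideanSpace ℝ (Fin N))) ∂(sphereMeasure N)) *
        ENNReal.ofReal |ψ v| ≤ c * (W v + W w) := by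
    intro v w
    set e : EuclideanSpace ℝ (Fin N) := if v - w = 0 then e₁ else ‖v - w‖⁻¹ • (v - w) with he
    set C : ℝ := 2 ^ ((s+γ)/2) * ((1+‖v‖^2) ^ ((s+γ)/2) + (1+‖w‖^2) ^ ((s+γ)/2)) with hCdef
    have step1 : (∫⁻ σ, ENNReal.ofReal (B (v - w) (σ : EuclideanSpace ℝ (Fin N)))
        ∂(sphereMeasure N)) ≤ ENNReal.ofReal ((1 + ‖v-w‖^2) ^ (γ/2)) * ENNReal.ofReal A₀ := by
      calc ∫⁻ σ, ENNReal.ofReal (B (v - w) (σ : EuclideanSpace ℝ (Fin N))) ∂(sphereMeasure N)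
          ≤ ∫⁻ σ, ENNReal.ofReal ((1 + ‖v-w‖^2) ^ (γ/2)) *
              ENNReal.ofReal (b ⟪e, (σ : EuclideanSpace ℝ (Fin N))⟫) ∂(sphereMeasure N) := by
            apply lintegral_mono
            intro σ
            dsimp only
            rw [← ENNReal.ofReal_mul (by positivity)]
            apply ENNReal.ofReal_le_ofReal
            have hσ : ‖(σ : EuclideanSpace ℝ (Fin N))‖ = 1 := mem_sphere_zero_iff_norm.mp σ.2
            have hb1 := hBb (v - w) σ hσ
            rw [← he] at hb1
            exact hb1
        _ = ENNReal.ofReal ((1 + ‖v-w‖^2) ^ (γ/2)) *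
              ∫⁻ σ, ENNReal.ofReal (b ⟪e, (σ : EuclideanSpace ℝ (Fin N))⟫) ∂(sphereMeasure N) :=
            lintegral_const_mul' _ _ ENNReal.ofReal_ne_top
        _ = ENNReal.ofReal ((1 + ‖v-w‖^2) ^ (γ/2)) * ENNReal.ofReal A₀ := by
            rw [hA0 e (hunit _)]
    calc (∫⁻ σ, ENNReal.ofReal (B (v - w) (σ : EuclideanSpace ℝ (Fin N))) ∂(sphereMeasure N)) *
          ENNReal.ofReal |ψ v|
        ≤ (ENNReal.ofReal ((1 + ‖v-w‖^2) ^ (γ/2)) * ENNReal.ofReal A₀) *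
            ENNReal.ofReal ((1 + ‖v‖^2) ^ (s/2)) :=
          mul_le_mul step1 (ENNReal.ofReal_le_ofReal (hψ v)) zero_le zero_le
      _ = ENNReal.ofReal ((1 + ‖v-w‖^2) ^ (γ/2) * (1 + ‖v‖^2) ^ (s/2)) * ENNReal.ofReal A₀ := by
          rw [ENNReal.ofReal_mul (by positivity)]
          ring
      _ ≤ ENNReal.ofReal C * ENNReal.ofReal A₀ := by
          apply mul_le_mul_left
          apply ENNReal.ofReal_le_ofReal
          exact hkey v w (1 + ‖v‖^2) (by positivity) (by nlinarith [sq_nonneg ‖w‖])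
      _ = c * (W v + W w) := hconst v w
  -- outer computation
  have houter : (∫⁻ v, ∫⁻ w, c * (W v + W w) ∂ν ∂μ)
      = c * (wnorm (s + γ) μ * wnorm 0 ν + wnorm 0 μ * wnorm (s + γ) ν) := by
    have hinner_eq : ∀ v : EuclideanSpace ℝ (Fin N),
        ∫⁻ w, c * (W v + W w) ∂ν = c * (W v * ν Set.univ + wnorm (s + γ) ν) := by
      intro v
      rw [lintegral_const_mul' c _ ENNReal.ofReal_ne_top,
        lintegral_add_left measurable_const, lintegral_const]
      rfl
    calc ∫⁻ v, ∫⁻ w, c * (W v + W w) ∂ν ∂μ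
        = ∫⁻ v, c * (W v * ν Set.univ + wnorm (s + γ) ν) ∂μ := lintegral_congr hinner_eq
      _ = c * ((∫⁻ v, W v * ν Set.univ ∂μ) + wnorm (s + γ) ν * μ Set.univ) := by
          rw [lintegral_const_mul' c _ ENNReal.ofReal_ne_top,
            lintegral_add_right _ measurable_const, lintegral_const]
      _ = c * (wnorm (s + γ) μ * wnorm 0 ν + wnorm 0 μ * wnorm (s + γ) ν) := by
          rw [lintegral_mul_const _ hWm, hw0, hw0, mul_comm (wnorm (s + γ) ν) (μ Set.univ)]
          rfl
  constructor
  · refine le_trans ?_ (le_of_eq houter)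
    exact lintegral_mono fun v => lintegral_mono fun w => hinner1 v w
  · refine le_trans ?_ (le_of_eq houter)
    exact lintegral_mono fun v => lintegral_mono fun w => hinner2 v w
end

section
/- Let N ≥ 2 be an integer, 0 < γ ≤ 2, s ≥ 0, let b : [−1,1] → [0,∞) be measurable with A₀ := ∫_{S^{N−1}} b(e·σ) dσ < ∞ (independent of the unit vector e), and let B : ℝ^N × S^{N−1} → [0,∞) be measurable with B(z,σ) ≤ (1+|z|²)^{γ/2} b((z/|z|)·σ) for all z ≠ 0 and all σ (with z/|z| replaced by a fixed unit vector when z = 0); set A(z) := ∫_{S^{N−1}} B(z,σ) dσ. Then for all μ, ν ∈ B_{s+γ}⁺(ℝ^N) and every Borel function ψ : ℝ^N → ℝ with |ψ(v)| ≤ ⟨v⟩^s for all v, one has | ∬_{ℝ^N×ℝ^N} (∫_{S^{N−1}} B(v−v_*,σ) ψ(v') dσ) d(μ⊗μ)(v,v_*) − ∬_{ℝ^N×ℝ^N} (∫_{S^{N−1}} B(v−v_*,σ) ψ(v') dσ) d(ν⊗ν)(v,v_*) | ≤ 2^{(s+γ)/2} A₀ (‖μ+ν‖_{s+γ}‖μ−ν‖₀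 + ‖μ+ν‖₀‖μ−ν‖_{s+γ}), and the same bound holds with the inner integrand ∫_{S^{N−1}} B(v−v_*,σ) ψ(v') dσ replaced by A(v−v_*) ψ(v). -/
open Real MeasureTheory Metric Classical
open scoped ENNReal NNReal RealInnerProductSpace

/-- The weighted norm `‖μ‖ₛ = ∫ ⟨v⟩^s dμ`, as a real number (via `toReal`). -/
noncomputable def rnorm {N : ℕ} (s : ℝ) (μ : Measure (EuclideanSpace ℝ (Fin N))) : ℝ :=
  (∫⁻ v, ENNReal.ofReal ((1 + ‖v‖ ^ 2) ^ (s / 2)) ∂μ).toReal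

/-- The weighted total variation norm `‖μ-ν‖ₛ = ∫ ⟨v⟩^s d|μ-ν|` of the difference of two
finite positive measures, as a real number. -/
noncomputable def tvnorm {N : ℕ} (s : ℝ) (μ ν : Measure (EuclideanSpace ℝ (Fin N)))
    [IsFiniteMeasure μ] [IsFiniteMeasure ν] : ℝ :=
  (∫⁻ v, ENNReal.ofReal ((1 + ‖v‖ ^ 2) ^ (s / 2))
    ∂((μ.toSignedMeasure - ν.toSignedMeasure).totalVariation)).toReal


instance sphereMeasureFin (N : ℕ) : IsFiniteMeasure (sphereMeasure N) := by
  unfold sphereMeasure; infer_instance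

namespace CollAux

variable {N : ℕ}

noncomputable def wt (t : ℝ) (v : EuclideanSpace ℝ (Fin N)) : ℝ := (1 + ‖v‖ ^ 2) ^ (t / 2)

lemma wt_nonneg (t : ℝ) (v : EuclideanSpace ℝ (Fin N)) : 0 ≤ wt t v := by
  unfold wt; positivity

lemma one_le_wt {t : ℝ} (ht : 0 ≤ t) (v : EuclideanSpace ℝ (Fin N)) : 1 ≤ wt t v := by
  unfold wt
  calc (1:ℝ) = 1 ^ (t/2) := (Real.one_rpow _).symm
    _ ≤ (1 + ‖v‖ ^ 2) ^ (t/2) := by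
        apply Real.rpow_le_rpow (by norm_num) (by nlinarith [sq_nonneg ‖v‖]) (by linarith)

lemma wt_measurable (t : ℝ) : Measurable (wt t (N := N)) := by
  unfold wt
  exact (measurable_const.add (measurable_norm.pow_const 2)).pow measurable_const

lemma measure_univ_le_lintegral_wt {t : ℝ} (ht : 0 ≤ t) (α : Measure (EuclideanSpace ℝ (Fin N))) :
    α Set.univ ≤ ∫⁻ v, ENNReal.ofReal (wt t v) ∂α := by
  calc α Set.univ = ∫⁻ _, 1 ∂α := (lintegral_one).symm
    _ ≤ _ := lintegral_mono fun v => by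
        simpa using ENNReal.ofReal_le_ofReal (one_le_wt ht v)

lemma lintegral_wt_fst (t : ℝ) (α β : Measure (EuclideanSpace ℝ (Fin N)))
    [SFinite α] [SFinite β] :
    ∫⁻ x : EuclideanSpace ℝ (Fin N) × EuclideanSpace ℝ (Fin N),
      ENNReal.ofReal (wt t x.1) ∂(α.prod β)
      = (∫⁻ v, ENNReal.ofReal (wt t v) ∂α) * β Set.univ := by
  have h := lintegral_prod_mul (μ := α) (ν := β) (f := fun v => ENNReal.ofReal (wt t v))
    (g := fun _ => (1:ℝ≥0∞)) ((wt_measurable t).ennreal_ofReal.aemeasurable) aemeasurable_const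
  simpa using h

lemma lintegral_wt_snd (t : ℝ) (α β : Measure (EuclideanSpace ℝ (Fin N)))
    [SFinite α] [SFinite β] :
    ∫⁻ x : EuclideanSpace ℝ (Fin N) × EuclideanSpace ℝ (Fin N),
      ENNReal.ofReal (wt t x.2) ∂(α.prod β)
      = α Set.univ * ∫⁻ v, ENNReal.ofReal (wt t v) ∂β := by
  have h := lintegral_prod_mul (μ := α) (ν := β) (f := fun _ => (1:ℝ≥0∞))
    (g := fun v => ENNReal.ofReal (wt t v)) aemeasurable_const
    ((wt_measurable t).ennreal_ofReal.aemeasurable)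
  simpa using h


lemma jordan_facts {α : Type*} [MeasurableSpace α] (μ ν : Measure α)
    [IsFiniteMeasure μ] [IsFiniteMeasure ν] :
    (μ.toSignedMeasure - ν.toSignedMeasure).toJordanDecomposition.posPart ≤ μ ∧
    (μ.toSignedMeasure - ν.toSignedMeasure).toJordanDecomposition.negPart ≤ ν ∧
    μ + (μ.toSignedMeasure - ν.toSignedMeasure).toJordanDecomposition.negPart
      = ν + (μ.toSignedMeasure - ν.toSignedMeasure).toJordanDecomposition.posPart := by
  set sm := μ.toSignedMeasure - ν.toSignedMeasure with hsm
  obtain ⟨i, hi₁, hi₂, hi₃, hppart, hnpart⟩ := sm.toJordanDecomposition_spec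
  have hsub : ∀ (E : Set α), MeasurableSet E → sm E = (μ E).toReal - (ν E).toReal := by
    intro E hE
    rw [hsm, VectorMeasure.sub_apply, Measure.toSignedMeasure_apply_measurable hE,
      Measure.toSignedMeasure_apply_measurable hE]
    rfl
  refine ⟨?_, ?_, ?_⟩
  · rw [Measure.le_iff]
    intro E hE
    rw [hppart, SignedMeasure.toMeasureOfZeroLE_apply _ hi₂ hi₁ hE]
    rw [← ENNReal.ofReal_eq_coe_nnreal]
    calc ENNReal.ofReal (sm (i ∩ E))
        ≤ ENNReal.ofReal ((μ (i ∩ E)).toReal) := by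
          apply ENNReal.ofReal_le_ofReal
          rw [hsub _ (hi₁.inter hE)]
          simp [ENNReal.toReal_nonneg]
      _ = μ (i ∩ E) := ENNReal.ofReal_toReal (measure_ne_top _ _)
      _ ≤ μ E := measure_mono Set.inter_subset_right
  · rw [Measure.le_iff]
    intro E hE
    rw [hnpart, SignedMeasure.toMeasureOfLEZero_apply _ hi₃ hi₁.compl hE]
    rw [← ENNReal.ofReal_eq_coe_nnreal]
    calc ENNReal.ofReal (-sm (iᶜ ∩ E))
        ≤ ENNReal.ofReal ((ν (iᶜ ∩ E)).toReal) := by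
          apply ENNReal.ofReal_le_ofReal
          rw [hsub _ (hi₁.compl.inter hE)]
          simp [ENNReal.toReal_nonneg]
      _ = ν (iᶜ ∩ E) := ENNReal.ofReal_toReal (measure_ne_top _ _)
      _ ≤ ν E := measure_mono Set.inter_subset_right
  · have hJ : sm.toJordanDecomposition.toSignedMeasure = sm :=
      sm.toSignedMeasure_toJordanDecomposition
    have hJ' : sm.toJordanDecomposition.posPart.toSignedMeasure
        - sm.toJordanDecomposition.negPart.toSignedMeasure
        = μ.toSignedMeasure - ν.toSignedMeasure := hJ
    rw [← Measure.toSignedMeasure_eq_toSignedMeasure_iff,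
      Measure.toSignedMeasure_add, Measure.toSignedMeasure_add]
    rw [sub_eq_sub_iff_add_eq_add] at hJ'
    linear_combination (norm := abel) hJ'.symm

lemma kernel_lintegral_bound {t C : ℝ} (hC : 0 ≤ C)
    {K : EuclideanSpace ℝ (Fin N) × EuclideanSpace ℝ (Fin N) → ℝ} (hK : Measurable K)
    (hKb : ∀ x, |K x| ≤ C * (wt t x.1 + wt t x.2))
    (α β : Measure (EuclideanSpace ℝ (Fin N))) [SFinite α] [SFinite β] :
    ∫⁻ x, ENNReal.ofReal |K x| ∂(α.prod β)
      ≤ ENNReal.ofReal C * ((∫⁻ v, ENNReal.ofReal (wt t v) ∂α) * β Set.univ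
          + α Set.univ * ∫⁻ v, ENNReal.ofReal (wt t v) ∂β) := by
  have step : ∀ x, ENNReal.ofReal |K x|
      ≤ ENNReal.ofReal C * (ENNReal.ofReal (wt t x.1) + ENNReal.ofReal (wt t x.2)) := by
    intro x
    calc ENNReal.ofReal |K x| ≤ ENNReal.ofReal (C * (wt t x.1 + wt t x.2)) :=
          ENNReal.ofReal_le_ofReal (hKb x)
      _ = ENNReal.ofReal C * (ENNReal.ofReal (wt t x.1) + ENNReal.ofReal (wt t x.2)) := by
          rw [ENNReal.ofReal_mul hC, ENNReal.ofReal_add (wt_nonneg _ _) (wt_nonneg _ _)]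
  calc ∫⁻ x, ENNReal.ofReal |K x| ∂(α.prod β)
      ≤ ∫⁻ x, ENNReal.ofReal C * (ENNReal.ofReal (wt t x.1)
          + ENNReal.ofReal (wt t x.2)) ∂(α.prod β) := lintegral_mono step
    _ = ENNReal.ofReal C * ((∫⁻ v, ENNReal.ofReal (wt t v) ∂α) * β Set.univ
          + α Set.univ * ∫⁻ v, ENNReal.ofReal (wt t v) ∂β) := by
        have hm1 : Measurable fun x : EuclideanSpace ℝ (Fin N) × EuclideanSpace ℝ (Fin N) =>
            ENNReal.ofReal (wt t x.1) := ((wt_measurable t).comp measurable_fst).ennreal_ofReal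
        have hm2 : Measurable fun x : EuclideanSpace ℝ (Fin N) × EuclideanSpace ℝ (Fin N) =>
            ENNReal.ofReal (wt t x.2) := ((wt_measurable t).comp measurable_snd).ennreal_ofReal
        rw [lintegral_const_mul _ (f := fun x : EuclideanSpace ℝ (Fin N) × EuclideanSpace ℝ (Fin N) => ENNReal.ofReal (wt t x.1) + ENNReal.ofReal (wt t x.2)) (hm1.add hm2), lintegral_add_left hm1,
          lintegral_wt_fst, lintegral_wt_snd]

lemma kernel_integrable {t C : ℝ} (ht : 0 ≤ t) (hC : 0 ≤ C)
    {K : EuclideanSpace ℝ (Fin N) × EuclideanSpace ℝ (Fin N) → ℝ} (hK : Measurable K)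
    (hKb : ∀ x, |K x| ≤ C * (wt t x.1 + wt t x.2))
    (α β : Measure (EuclideanSpace ℝ (Fin N))) [SFinite α] [SFinite β]
    (hα : ∫⁻ v, ENNReal.ofReal (wt t v) ∂α ≠ ⊤) (hβ : ∫⁻ v, ENNReal.ofReal (wt t v) ∂β ≠ ⊤) :
    Integrable K (α.prod β) := by
  refine ⟨hK.aestronglyMeasurable, ?_⟩
  rw [hasFiniteIntegral_iff_norm]
  have : ∀ x, ENNReal.ofReal ‖K x‖ = ENNReal.ofReal |K x| := by
    intro x; rw [Real.norm_eq_abs]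
  rw [lintegral_congr this]
  refine lt_of_le_of_lt (kernel_lintegral_bound hC hK hKb α β) ?_
  have hαu : α Set.univ < ⊤ := lt_of_le_of_lt (measure_univ_le_lintegral_wt ht α) hα.lt_top
  have hβu : β Set.univ < ⊤ := lt_of_le_of_lt (measure_univ_le_lintegral_wt ht β) hβ.lt_top
  exact ENNReal.mul_lt_top ENNReal.ofReal_lt_top
    (ENNReal.add_lt_top.2 ⟨ENNReal.mul_lt_top hα.lt_top hβu, ENNReal.mul_lt_top hαu hβ.lt_top⟩)

lemma abs_integral_kernel_le {N : ℕ} {t C : ℝ} (ht : 0 ≤ t) (hC : 0 ≤ C)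
    {K : EuclideanSpace ℝ (Fin N) × EuclideanSpace ℝ (Fin N) → ℝ} (hK : Measurable K)
    (hKb : ∀ x, |K x| ≤ C * (wt t x.1 + wt t x.2))
    (α β : Measure (EuclideanSpace ℝ (Fin N))) [SFinite α] [SFinite β]
    (hα : ∫⁻ v, ENNReal.ofReal (wt t v) ∂α ≠ ⊤) (hβ : ∫⁻ v, ENNReal.ofReal (wt t v) ∂β ≠ ⊤) :
    |∫ x, K x ∂(α.prod β)| ≤ (ENNReal.ofReal C * ((∫⁻ v, ENNReal.ofReal (wt t v) ∂α) * β Set.univ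
          + α Set.univ * ∫⁻ v, ENNReal.ofReal (wt t v) ∂β)).toReal := by
  have h1 : |∫ x, K x ∂(α.prod β)| ≤ ∫ x, |K x| ∂(α.prod β) := by
    simpa [Real.norm_eq_abs] using norm_integral_le_integral_norm (μ := α.prod β) K
  have h2 : ∫ x, |K x| ∂(α.prod β) = (∫⁻ x, ENNReal.ofReal |K x| ∂(α.prod β)).toReal := by
    exact integral_eq_lintegral_of_nonneg_ae (Filter.Eventually.of_forall fun x => abs_nonneg _)
      hK.abs.aestronglyMeasurable
  refine h1.trans (h2.le.trans ?_)
  have hαu : α Set.univ ≠ ⊤ := (lt_of_le_of_lt (measure_univ_le_lintegral_wt ht α) hα.lt_top).ne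
  have hβu : β Set.univ ≠ ⊤ := (lt_of_le_of_lt (measure_univ_le_lintegral_wt ht β) hβ.lt_top).ne
  apply ENNReal.toReal_mono
  · exact ENNReal.mul_ne_top ENNReal.ofReal_ne_top
      (ENNReal.add_ne_top.2 ⟨ENNReal.mul_ne_top hα hβu, ENNReal.mul_ne_top hαu hβ⟩)
  · exact kernel_lintegral_bound hC hK hKb α β



lemma main_abs {N : ℕ} {t : ℝ} (ht : 0 ≤ t) {C : ℝ} (hC : 0 ≤ C)
    (μ ν : Measure (EuclideanSpace ℝ (Fin N))) [IsFiniteMeasure μ] [IsFiniteMeasure ν]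
    (hμ : ∫⁻ v, ENNReal.ofReal (wt t v) ∂μ ≠ ⊤) (hν : ∫⁻ v, ENNReal.ofReal (wt t v) ∂ν ≠ ⊤)
    {K : EuclideanSpace ℝ (Fin N) × EuclideanSpace ℝ (Fin N) → ℝ} (hK : Measurable K)
    (hKb : ∀ x, |K x| ≤ C * (wt t x.1 + wt t x.2)) :
    |∫ x, K x ∂(μ.prod μ) - ∫ x, K x ∂(ν.prod ν)|
      ≤ C * (rnorm t (μ + ν) * tvnorm 0 μ ν + rnorm 0 (μ + ν) * tvnorm t μ ν) := by
  classical
  set sm := μ.toSignedMeasure - ν.toSignedMeasure with hsm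
  set p := sm.toJordanDecomposition.posPart with hpdef
  set n := sm.toJordanDecomposition.negPart with hndef
  obtain ⟨hple, hnle, hsum⟩ := jordan_facts μ ν
  have hGp : ∫⁻ v, ENNReal.ofReal (wt t v) ∂p ≠ ⊤ :=
    ((lintegral_mono' hple le_rfl).trans_lt hμ.lt_top).ne
  have hGn : ∫⁻ v, ENNReal.ofReal (wt t v) ∂n ≠ ⊤ :=
    ((lintegral_mono' hnle le_rfl).trans_lt hν.lt_top).ne
  have hint : ∀ (α β : Measure (EuclideanSpace ℝ (Fin N))) [SFinite α] [SFinite β],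
      (∫⁻ v, ENNReal.ofReal (wt t v) ∂α ≠ ⊤) → (∫⁻ v, ENNReal.ofReal (wt t v) ∂β ≠ ⊤) →
      Integrable K (α.prod β) := fun α β _ _ hα hβ =>
    kernel_integrable ht hC hK hKb α β hα hβ
  have iμμ := hint μ μ hμ hμ
  have iμν := hint μ ν hμ hν
  have iνν := hint ν ν hν hν
  have iμp := hint μ p hμ hGp
  have iμn := hint μ n hμ hGn
  have ipν := hint p ν hGp hν
  have inν := hint n ν hGn hν
  -- identity
  have e1 : μ.prod μ + μ.prod n = μ.prod ν + μ.prod p := by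
    rw [← Measure.prod_add, ← Measure.prod_add, hsum]
  have e2 : μ.prod ν + n.prod ν = ν.prod ν + p.prod ν := by
    rw [← Measure.add_prod, ← Measure.add_prod, hsum]
  have s1 : (∫ x, K x ∂μ.prod μ) + ∫ x, K x ∂μ.prod n
      = (∫ x, K x ∂μ.prod ν) + ∫ x, K x ∂μ.prod p := by
    rw [← integral_add_measure iμμ iμn, ← integral_add_measure iμν iμp, e1]
  have s2 : (∫ x, K x ∂μ.prod ν) + ∫ x, K x ∂n.prod ν
      = (∫ x, K x ∂ν.prod ν) + ∫ x, K x ∂p.prod ν := by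
    rw [← integral_add_measure iμν inν, ← integral_add_measure iνν ipν, e2]
  have key : (∫ x, K x ∂μ.prod μ) - ∫ x, K x ∂ν.prod ν
      = ((∫ x, K x ∂μ.prod p) - ∫ x, K x ∂μ.prod n)
        + ((∫ x, K x ∂p.prod ν) - ∫ x, K x ∂n.prod ν) := by linarith
  -- abbreviations for ennreal quantities
  set Gμ := ∫⁻ v, ENNReal.ofReal (wt t v) ∂μ with hGμdef
  set Gν := ∫⁻ v, ENNReal.ofReal (wt t v) ∂ν with hGνdef
  set Gp := ∫⁻ v, ENNReal.ofReal (wt t v) ∂p with hGpdef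
  set Gn := ∫⁻ v, ENNReal.ofReal (wt t v) ∂n with hGndef
  have hμu : μ Set.univ ≠ ⊤ := measure_ne_top _ _
  have hνu : ν Set.univ ≠ ⊤ := measure_ne_top _ _
  have hpu : p Set.univ ≠ ⊤ := measure_ne_top _ _
  have hnu : n Set.univ ≠ ⊤ := measure_ne_top _ _
  have b1 := abs_integral_kernel_le ht hC hK hKb μ p hμ hGp
  have b2 := abs_integral_kernel_le ht hC hK hKb μ n hμ hGn
  have b3 := abs_integral_kernel_le ht hC hK hKb p ν hGp hν
  have b4 := abs_integral_kernel_le ht hC hK hKb n ν hGn hν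
  have habs : |(∫ x, K x ∂μ.prod μ) - ∫ x, K x ∂ν.prod ν|
      ≤ (ENNReal.ofReal C * (Gμ * p Set.univ + μ Set.univ * Gp)).toReal
        + (ENNReal.ofReal C * (Gμ * n Set.univ + μ Set.univ * Gn)).toReal
        + (ENNReal.ofReal C * (Gp * ν Set.univ + p Set.univ * Gν)).toReal
        + (ENNReal.ofReal C * (Gn * ν Set.univ + n Set.univ * Gν)).toReal := by
    rw [key]
    calc |((∫ x, K x ∂μ.prod p) - ∫ x, K x ∂μ.prod n)
          + ((∫ x, K x ∂p.prod ν) - ∫ x, K x ∂n.prod ν)|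
        ≤ |(∫ x, K x ∂μ.prod p) - ∫ x, K x ∂μ.prod n|
          + |(∫ x, K x ∂p.prod ν) - ∫ x, K x ∂n.prod ν| := abs_add_le _ _
      _ ≤ (|∫ x, K x ∂μ.prod p| + |∫ x, K x ∂μ.prod n|)
          + (|∫ x, K x ∂p.prod ν| + |∫ x, K x ∂n.prod ν|) :=
          add_le_add (abs_sub _ _) (abs_sub _ _)
      _ ≤ _ := by linarith
  refine habs.trans ?_
  -- convert to real arithmetic
  have hfin : ∀ (X Y U V : ℝ≥0∞), X ≠ ⊤ → Y ≠ ⊤ → U ≠ ⊤ → V ≠ ⊤ →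
      (ENNReal.ofReal C * (X * Y + U * V)).toReal
        = C * (X.toReal * Y.toReal + U.toReal * V.toReal) := by
    intro X Y U V hX hY hU hV
    rw [ENNReal.toReal_mul, ENNReal.toReal_add (ENNReal.mul_ne_top hX hY)
      (ENNReal.mul_ne_top hU hV), ENNReal.toReal_mul, ENNReal.toReal_mul,
      ENNReal.toReal_ofReal hC]
  rw [hfin _ _ _ _ hμ hpu hμu hGp, hfin _ _ _ _ hμ hnu hμu hGn,
    hfin _ _ _ _ hGp hνu hpu hν, hfin _ _ _ _ hGn hνu hnu hν]
  -- identify the norms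
  have hrt : rnorm t (μ + ν) = Gμ.toReal + Gν.toReal := by
    unfold rnorm
    rw [show (fun v : EuclideanSpace ℝ (Fin N) => ENNReal.ofReal ((1 + ‖v‖ ^ 2) ^ (t / 2)))
        = fun v => ENNReal.ofReal (wt t v) from rfl, lintegral_add_measure,
      ENNReal.toReal_add hμ hν]
  have hr0 : rnorm 0 (μ + ν) = (μ Set.univ).toReal + (ν Set.univ).toReal := by
    unfold rnorm
    simp only [zero_div, Real.rpow_zero, ENNReal.ofReal_one, lintegral_one,
      Measure.add_apply]
    rw [ENNReal.toReal_add hμu hνu]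
  have htv : (μ.toSignedMeasure - ν.toSignedMeasure).totalVariation = p + n := rfl
  have htvt : tvnorm t μ ν = Gp.toReal + Gn.toReal := by
    unfold tvnorm
    rw [htv, show (fun v : EuclideanSpace ℝ (Fin N) => ENNReal.ofReal ((1 + ‖v‖ ^ 2) ^ (t / 2)))
        = fun v => ENNReal.ofReal (wt t v) from rfl, lintegral_add_measure,
      ENNReal.toReal_add hGp hGn]
  have htv0 : tvnorm 0 μ ν = (p Set.univ).toReal + (n Set.univ).toReal := by
    unfold tvnorm
    rw [htv]
    simp only [zero_div, Real.rpow_zero, ENNReal.ofReal_one, lintegral_one,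
      Measure.add_apply]
    rw [ENNReal.toReal_add hpu hnu]
  rw [hrt, hr0, htvt, htv0]
  ring_nf
  nlinarith [le_refl (0:ℝ)]


section Kernels

variable {N : ℕ} {γ s : ℝ} {b : ℝ → ℝ} {A₀ : ℝ} {e₁ : EuclideanSpace ℝ (Fin N)}
  {B : EuclideanSpace ℝ (Fin N) → EuclideanSpace ℝ (Fin N) → ℝ}
  {ψ : EuclideanSpace ℝ (Fin N) → ℝ}

lemma vprime_sq_le (v w : EuclideanSpace ℝ (Fin N))
    (σ : sphere (0 : EuclideanSpace ℝ (Fin N)) 1) :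
    ‖vprime v w σ‖ ^ 2 ≤ ‖v‖ ^ 2 + ‖w‖ ^ 2 := by
  have hσ : ‖(σ : EuclideanSpace ℝ (Fin N))‖ = 1 := by
    have := σ.2
    rwa [mem_sphere_zero_iff_norm] at this
  have h1 : ‖vprime v w σ‖ ≤ ‖v + w‖ / 2 + ‖v - w‖ / 2 := by
    refine (norm_add_le _ _).trans ?_
    rw [norm_smul, norm_smul, hσ]
    simp [abs_of_nonneg, norm_nonneg, Real.norm_eq_abs]
    linarith [norm_nonneg (v + w)]
  have hpar : ‖v + w‖ * ‖v + w‖ + ‖v - w‖ * ‖v - w‖ = 2 * (‖v‖ * ‖v‖ + ‖w‖ * ‖w‖) :=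
    by linear_combination parallelogram_law_with_norm ℝ v w
  nlinarith [norm_nonneg (vprime v w σ), norm_nonneg (v + w), norm_nonneg (v - w),
    sq_nonneg (‖v + w‖ - ‖v - w‖)]

lemma rpow_two_add_le {p : ℝ} (hp0 : 0 ≤ p) (hp1 : p ≤ 1) {x y : ℝ} (hx : 0 ≤ x) (hy : 0 ≤ y) :
    (x + y) ^ p ≤ x ^ p + y ^ p := by
  have h := NNReal.rpow_add_le_add_rpow x.toNNReal y.toNNReal hp0 hp1
  have hxy : ((x.toNNReal + y.toNNReal : ℝ≥0) : ℝ) = x + y := by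
    push_cast [Real.coe_toNNReal _ hx, Real.coe_toNNReal _ hy]; ring
  calc (x + y) ^ p = (((x.toNNReal + y.toNNReal) ^ p : ℝ≥0) : ℝ) := by
        rw [NNReal.coe_rpow, hxy]
    _ ≤ ((x.toNNReal ^ p + y.toNNReal ^ p : ℝ≥0) : ℝ) := by exact_mod_cast h
    _ = x ^ p + y ^ p := by
        push_cast [NNReal.coe_rpow, Real.coe_toNNReal _ hx, Real.coe_toNNReal _ hy]; ring

lemma rpow_two_add_le' {p : ℝ} (hp1 : 1 ≤ p) {x y : ℝ} (hx : 0 ≤ x) (hy : 0 ≤ y) :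
    (x + y) ^ p ≤ 2 ^ (p - 1) * (x ^ p + y ^ p) := by
  have h := NNReal.rpow_add_le_mul_rpow_add_rpow x.toNNReal y.toNNReal hp1
  have hxy : ((x.toNNReal + y.toNNReal : ℝ≥0) : ℝ) = x + y := by
    push_cast [Real.coe_toNNReal _ hx, Real.coe_toNNReal _ hy]; ring
  calc (x + y) ^ p = (((x.toNNReal + y.toNNReal) ^ p : ℝ≥0) : ℝ) := by
        rw [NNReal.coe_rpow, hxy]
    _ ≤ ((2 ^ (p - 1) * (x.toNNReal ^ p + y.toNNReal ^ p) : ℝ≥0) : ℝ) := by exact_mod_cast h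
    _ = 2 ^ (p - 1) * (x ^ p + y ^ p) := by
        push_cast [NNReal.coe_rpow, Real.coe_toNNReal _ hx, Real.coe_toNNReal _ hy]; ring

lemma weight_ineq (hγ0 : 0 < γ) (hγ2 : γ ≤ 2) (hs : 0 ≤ s) (v w : EuclideanSpace ℝ (Fin N)) :
    (1 + ‖v - w‖ ^ 2) ^ (γ / 2) * (1 + ‖v‖ ^ 2 + ‖w‖ ^ 2) ^ (s / 2)
      ≤ 2 ^ ((s + γ) / 2) * (wt (s + γ) v + wt (s + γ) w) := by
  set a := 1 + ‖v‖ ^ 2 with hadef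
  set c := 1 + ‖w‖ ^ 2 with hcdef
  set D := 1 + ‖v‖ ^ 2 + ‖w‖ ^ 2 with hDdef
  set q := (s + γ) / 2 with hqdef
  have ha : (1:ℝ) ≤ a := by nlinarith [sq_nonneg ‖v‖]
  have hc : (1:ℝ) ≤ c := by nlinarith [sq_nonneg ‖w‖]
  have hD1 : (1:ℝ) ≤ D := by nlinarith [sq_nonneg ‖v‖, sq_nonneg ‖w‖]
  have hD0 : (0:ℝ) < D := by linarith
  have hDac : D ≤ a + c := by simp only [hadef, hcdef, hDdef]; nlinarith
  have hq0 : 0 ≤ q := by rw [hqdef]; linarith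
  have h1 : 1 + ‖v - w‖ ^ 2 ≤ 2 * D := by
    have := norm_sub_le v w
    nlinarith [norm_nonneg (v - w), norm_nonneg v, norm_nonneg w, sq_nonneg (‖v‖ - ‖w‖)]
  have step1 : (1 + ‖v - w‖ ^ 2) ^ (γ / 2) ≤ 2 ^ (γ / 2) * D ^ (γ / 2) := by
    calc (1 + ‖v - w‖ ^ 2) ^ (γ / 2) ≤ (2 * D) ^ (γ / 2) :=
          Real.rpow_le_rpow (by positivity) h1 (by linarith)
      _ = 2 ^ (γ / 2) * D ^ (γ / 2) := Real.mul_rpow (by norm_num) (by linarith)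
  have step2 : (1 + ‖v - w‖ ^ 2) ^ (γ / 2) * D ^ (s / 2) ≤ 2 ^ (γ / 2) * D ^ q := by
    have hDs : (0:ℝ) ≤ D ^ (s / 2) := by positivity
    have := mul_le_mul_of_nonneg_right step1 hDs
    calc (1 + ‖v - w‖ ^ 2) ^ (γ / 2) * D ^ (s / 2)
        ≤ 2 ^ (γ / 2) * D ^ (γ / 2) * D ^ (s / 2) := this
      _ = 2 ^ (γ / 2) * D ^ q := by
          rw [mul_assoc, ← Real.rpow_add hD0]
          rw [hqdef]
          ring_nf
  have step3 : D ^ q ≤ (a + c) ^ q := Real.rpow_le_rpow (le_of_lt hD0) hDac hq0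
  have hwt : wt (s + γ) v = a ^ q ∧ wt (s + γ) w = c ^ q := ⟨rfl, rfl⟩
  rw [hwt.1, hwt.2]
  have ha0 : (0:ℝ) ≤ a := by linarith
  have hc0 : (0:ℝ) ≤ c := by linarith
  rcases le_or_gt q 1 with hq1 | hq1
  · have step4 : (a + c) ^ q ≤ a ^ q + c ^ q := rpow_two_add_le hq0 hq1 ha0 hc0
    have h2 : (2:ℝ) ^ (γ / 2) ≤ 2 ^ q := by
      apply Real.rpow_le_rpow_of_exponent_le (by norm_num)
      rw [hqdef]; linarith
    calc (1 + ‖v - w‖ ^ 2) ^ (γ / 2) * D ^ (s / 2) ≤ 2 ^ (γ / 2) * D ^ q := step2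
      _ ≤ 2 ^ (γ / 2) * (a ^ q + c ^ q) := by
          apply mul_le_mul_of_nonneg_left (step3.trans step4) (by positivity)
      _ ≤ 2 ^ q * (a ^ q + c ^ q) := by
          apply mul_le_mul_of_nonneg_right h2 (by positivity)
  · have step4 : (a + c) ^ q ≤ 2 ^ (q - 1) * (a ^ q + c ^ q) :=
      rpow_two_add_le' hq1.le ha0 hc0
    have h2 : (2:ℝ) ^ (γ / 2) * 2 ^ (q - 1) ≤ 2 ^ q := by
      rw [← Real.rpow_add (by norm_num)]
      apply Real.rpow_le_rpow_of_exponent_le (by norm_num)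
      linarith
    calc (1 + ‖v - w‖ ^ 2) ^ (γ / 2) * D ^ (s / 2) ≤ 2 ^ (γ / 2) * D ^ q := step2
      _ ≤ 2 ^ (γ / 2) * (2 ^ (q - 1) * (a ^ q + c ^ q)) := by
          apply mul_le_mul_of_nonneg_left (step3.trans step4) (by positivity)
      _ = (2 ^ (γ / 2) * 2 ^ (q - 1)) * (a ^ q + c ^ q) := by ring
      _ ≤ 2 ^ q * (a ^ q + c ^ q) := by
          apply mul_le_mul_of_nonneg_right h2 (by positivity)


lemma unit_dir (e₁ : EuclideanSpace ℝ (Fin N)) (he₁ : ‖e₁‖ = 1) (z : EuclideanSpace ℝ (Fin N)) :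
    ‖if z = 0 then e₁ else ‖z‖⁻¹ • z‖ = 1 := by
  by_cases hz : z = 0
  · simp [hz, he₁]
  · rw [if_neg hz]
    exact norm_smul_inv_norm (𝕜 := ℝ) hz

lemma b_integrable (hbm : Measurable b) (hb0 : ∀ x, 0 ≤ b x) (hA₀ : 0 ≤ A₀)
    (hA0 : ∀ e : EuclideanSpace ℝ (Fin N), ‖e‖ = 1 →
      ∫⁻ σ, ENNReal.ofReal (b ⟪e, (σ : EuclideanSpace ℝ (Fin N))⟫) ∂(sphereMeasure N)
        = ENNReal.ofReal A₀)
    (e : EuclideanSpace ℝ (Fin N)) (he : ‖e‖ = 1) :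
    Integrable (fun σ : sphere (0 : EuclideanSpace ℝ (Fin N)) 1 =>
      b ⟪e, (σ : EuclideanSpace ℝ (Fin N))⟫) (sphereMeasure N) := by
  have hm : Measurable (fun σ : sphere (0 : EuclideanSpace ℝ (Fin N)) 1 =>
      b ⟪e, (σ : EuclideanSpace ℝ (Fin N))⟫) :=
    hbm.comp ((Continuous.inner continuous_const continuous_subtype_val).measurable)
  refine ⟨hm.aestronglyMeasurable, ?_⟩
  rw [hasFiniteIntegral_iff_norm]
  have : ∀ σ : sphere (0 : EuclideanSpace ℝ (Fin N)) 1,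
      ENNReal.ofReal ‖b ⟪e, (σ : EuclideanSpace ℝ (Fin N))⟫‖
        = ENNReal.ofReal (b ⟪e, (σ : EuclideanSpace ℝ (Fin N))⟫) := by
    intro σ
    rw [Real.norm_eq_abs, abs_of_nonneg (hb0 _)]
  rw [lintegral_congr this, hA0 e he]
  exact ENNReal.ofReal_lt_top

lemma b_integral_eq (hbm : Measurable b) (hb0 : ∀ x, 0 ≤ b x) (hA₀ : 0 ≤ A₀)
    (hA0 : ∀ e : EuclideanSpace ℝ (Fin N), ‖e‖ = 1 →
      ∫⁻ σ, ENNReal.ofReal (b ⟪e, (σ : EuclideanSpace ℝ (Fin N))⟫) ∂(sphereMeasure N)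
        = ENNReal.ofReal A₀)
    (e : EuclideanSpace ℝ (Fin N)) (he : ‖e‖ = 1) :
    ∫ σ, b ⟪e, (σ : EuclideanSpace ℝ (Fin N))⟫ ∂(sphereMeasure N) = A₀ := by
  have hm : Measurable (fun σ : sphere (0 : EuclideanSpace ℝ (Fin N)) 1 =>
      b ⟪e, (σ : EuclideanSpace ℝ (Fin N))⟫) :=
    hbm.comp ((Continuous.inner continuous_const continuous_subtype_val).measurable)
  rw [integral_eq_lintegral_of_nonneg_ae (Filter.Eventually.of_forall fun σ => hb0 _)
    hm.aestronglyMeasurable, hA0 e he, ENNReal.toReal_ofReal hA₀]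

lemma K1_pointwise (hγ0 : 0 < γ) (hs : 0 ≤ s)
    (hbm : Measurable b) (hb0 : ∀ x, 0 ≤ b x) (hA₀ : 0 ≤ A₀)
    (hA0 : ∀ e : EuclideanSpace ℝ (Fin N), ‖e‖ = 1 →
      ∫⁻ σ, ENNReal.ofReal (b ⟪e, (σ : EuclideanSpace ℝ (Fin N))⟫) ∂(sphereMeasure N)
        = ENNReal.ofReal A₀)
    (he₁ : ‖e₁‖ = 1) (hB0 : ∀ z σ, 0 ≤ B z σ)
    (hBb : ∀ z σ : EuclideanSpace ℝ (Fin N), ‖σ‖ = 1 →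
      B z σ ≤ (1 + ‖z‖ ^ 2) ^ (γ / 2) * b ⟪if z = 0 then e₁ else ‖z‖⁻¹ • z, σ⟫)
    (hψm : Measurable ψ) (hψ : ∀ v, |ψ v| ≤ (1 + ‖v‖ ^ 2) ^ (s / 2))
    (v w : EuclideanSpace ℝ (Fin N)) :
    |∫ σ, B (v - w) (σ : EuclideanSpace ℝ (Fin N)) * ψ (vprime v w σ) ∂(sphereMeasure N)|
      ≤ A₀ * ((1 + ‖v - w‖ ^ 2) ^ (γ / 2) * (1 + ‖v‖ ^ 2 + ‖w‖ ^ 2) ^ (s / 2)) := by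
  set z := v - w with hzdef
  set e : EuclideanSpace ℝ (Fin N) := if z = 0 then e₁ else ‖z‖⁻¹ • z with hedef
  have he : ‖e‖ = 1 := unit_dir e₁ he₁ z
  set c1 := (1 + ‖z‖ ^ 2) ^ (γ / 2) with hc1def
  set c2 := (1 + ‖v‖ ^ 2 + ‖w‖ ^ 2) ^ (s / 2) with hc2def
  have hc1 : 0 ≤ c1 := by rw [hc1def]; positivity
  have hc2 : 0 ≤ c2 := by rw [hc2def]; positivity
  have hb_int := b_integrable hbm hb0 hA₀ hA0 e he
  have hbound : ∀ σ : sphere (0 : EuclideanSpace ℝ (Fin N)) 1,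
      ‖B z (σ : EuclideanSpace ℝ (Fin N)) * ψ (vprime v w σ)‖
        ≤ c1 * c2 * b ⟪e, (σ : EuclideanSpace ℝ (Fin N))⟫ := by
    intro σ
    have hσ : ‖(σ : EuclideanSpace ℝ (Fin N))‖ = 1 := by
      have := σ.2; rwa [mem_sphere_zero_iff_norm] at this
    have hB : B z (σ : EuclideanSpace ℝ (Fin N)) ≤ c1 * b ⟪e, (σ : EuclideanSpace ℝ (Fin N))⟫ :=
      hBb z _ hσ
    have hψ' : |ψ (vprime v w σ)| ≤ c2 := by
      refine (hψ _).trans ?_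
      rw [hc2def]
      apply Real.rpow_le_rpow (by positivity) ?_ (by linarith)
      nlinarith [vprime_sq_le v w σ]
    rw [Real.norm_eq_abs, abs_mul, abs_of_nonneg (hB0 z _)]
    calc B z (σ : EuclideanSpace ℝ (Fin N)) * |ψ (vprime v w σ)|
        ≤ (c1 * b ⟪e, (σ : EuclideanSpace ℝ (Fin N))⟫) * c2 := by
          apply mul_le_mul hB hψ' (abs_nonneg _)
          exact mul_nonneg hc1 (hb0 _)
      _ = c1 * c2 * b ⟪e, (σ : EuclideanSpace ℝ (Fin N))⟫ := by ring
  have htot : ‖∫ σ, B z (σ : EuclideanSpace ℝ (Fin N)) * ψ (vprime v w σ) ∂(sphereMeasure N)‖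
      ≤ ∫ σ, c1 * c2 * b ⟪e, (σ : EuclideanSpace ℝ (Fin N))⟫ ∂(sphereMeasure N) :=
    norm_integral_le_of_norm_le (hb_int.const_mul _) (Filter.Eventually.of_forall hbound)
  rw [Real.norm_eq_abs] at htot
  refine htot.trans ?_
  rw [integral_const_mul _ _, b_integral_eq hbm hb0 hA₀ hA0 e he]
  ring_nf
  exact le_refl _

lemma K2_pointwise (hγ0 : 0 < γ) (hs : 0 ≤ s)
    (hbm : Measurable b) (hb0 : ∀ x, 0 ≤ b x) (hA₀ : 0 ≤ A₀)
    (hA0 : ∀ e : EuclideanSpace ℝ (Fin N), ‖e‖ = 1 →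
      ∫⁻ σ, ENNReal.ofReal (b ⟪e, (σ : EuclideanSpace ℝ (Fin N))⟫) ∂(sphereMeasure N)
        = ENNReal.ofReal A₀)
    (he₁ : ‖e₁‖ = 1) (hBm : Measurable (Function.uncurry B)) (hB0 : ∀ z σ, 0 ≤ B z σ)
    (hBb : ∀ z σ : EuclideanSpace ℝ (Fin N), ‖σ‖ = 1 →
      B z σ ≤ (1 + ‖z‖ ^ 2) ^ (γ / 2) * b ⟪if z = 0 then e₁ else ‖z‖⁻¹ • z, σ⟫)
    (hψm : Measurable ψ) (hψ : ∀ v, |ψ v| ≤ (1 + ‖v‖ ^ 2) ^ (s / 2))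
    (v w : EuclideanSpace ℝ (Fin N)) :
    |(∫ σ, B (v - w) (σ : EuclideanSpace ℝ (Fin N)) ∂(sphereMeasure N)) * ψ v|
      ≤ A₀ * ((1 + ‖v - w‖ ^ 2) ^ (γ / 2) * (1 + ‖v‖ ^ 2 + ‖w‖ ^ 2) ^ (s / 2)) := by
  set z := v - w with hzdef
  set e : EuclideanSpace ℝ (Fin N) := if z = 0 then e₁ else ‖z‖⁻¹ • z with hedef
  have he : ‖e‖ = 1 := unit_dir e₁ he₁ z
  set c1 := (1 + ‖z‖ ^ 2) ^ (γ / 2) with hc1def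
  set c2 := (1 + ‖v‖ ^ 2 + ‖w‖ ^ 2) ^ (s / 2) with hc2def
  have hc1 : 0 ≤ c1 := by rw [hc1def]; positivity
  have hc2 : 0 ≤ c2 := by rw [hc2def]; positivity
  have hb_int := b_integrable hbm hb0 hA₀ hA0 e he
  have hσm : Measurable (fun σ : sphere (0 : EuclideanSpace ℝ (Fin N)) 1 =>
      B z (σ : EuclideanSpace ℝ (Fin N))) := by
    have : Measurable (fun σ : sphere (0 : EuclideanSpace ℝ (Fin N)) 1 =>
        (z, (σ : EuclideanSpace ℝ (Fin N)))) :=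
      measurable_const.prodMk measurable_subtype_coe
    exact hBm.comp this
  have hBint : Integrable (fun σ : sphere (0 : EuclideanSpace ℝ (Fin N)) 1 =>
      B z (σ : EuclideanSpace ℝ (Fin N))) (sphereMeasure N) := by
    refine Integrable.mono' (hb_int.const_mul c1) hσm.aestronglyMeasurable
      (Filter.Eventually.of_forall fun σ => ?_)
    have hσ : ‖(σ : EuclideanSpace ℝ (Fin N))‖ = 1 := by
      have := σ.2; rwa [mem_sphere_zero_iff_norm] at this
    rw [Real.norm_eq_abs, abs_of_nonneg (hB0 z _)]
    exact hBb z _ hσ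
  have hInt_le : ∫ σ, B z (σ : EuclideanSpace ℝ (Fin N)) ∂(sphereMeasure N) ≤ c1 * A₀ := by
    have := integral_mono hBint (hb_int.const_mul c1) (fun σ => by
      have hσ : ‖(σ : EuclideanSpace ℝ (Fin N))‖ = 1 := by
        have := σ.2; rwa [mem_sphere_zero_iff_norm] at this
      exact hBb z _ hσ)
    rwa [integral_const_mul _ _, b_integral_eq hbm hb0 hA₀ hA0 e he] at this
  have hInt_nonneg : 0 ≤ ∫ σ, B z (σ : EuclideanSpace ℝ (Fin N)) ∂(sphereMeasure N) :=
    integral_nonneg fun σ => hB0 _ _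
  have hψv : |ψ v| ≤ c2 := by
    refine (hψ v).trans ?_
    rw [hc2def]
    apply Real.rpow_le_rpow (by positivity) (by nlinarith [sq_nonneg ‖w‖]) (by linarith)
  rw [abs_mul, abs_of_nonneg hInt_nonneg]
  calc (∫ σ, B z (σ : EuclideanSpace ℝ (Fin N)) ∂(sphereMeasure N)) * |ψ v|
      ≤ (c1 * A₀) * c2 := by
        apply mul_le_mul hInt_le hψv (abs_nonneg _) (mul_nonneg hc1 hA₀)
    _ = A₀ * (c1 * c2) := by ring


lemma vprime_cont : Continuous (fun q : (EuclideanSpace ℝ (Fin N) × EuclideanSpace ℝ (Fin N)) ×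
    sphere (0 : EuclideanSpace ℝ (Fin N)) 1 => vprime q.1.1 q.1.2 q.2) := by
  unfold vprime
  fun_prop

lemma K1_measurable (hBm : Measurable (Function.uncurry B)) (hψm : Measurable ψ) :
    Measurable (fun x : EuclideanSpace ℝ (Fin N) × EuclideanSpace ℝ (Fin N) =>
      ∫ σ, B (x.1 - x.2) (σ : EuclideanSpace ℝ (Fin N)) * ψ (vprime x.1 x.2 σ)
        ∂(sphereMeasure N)) := by
  have hf : Measurable (fun q : (EuclideanSpace ℝ (Fin N) × EuclideanSpace ℝ (Fin N)) ×
      sphere (0 : EuclideanSpace ℝ (Fin N)) 1 =>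
      B (q.1.1 - q.1.2) (q.2 : EuclideanSpace ℝ (Fin N)) * ψ (vprime q.1.1 q.1.2 q.2)) := by
    have h1 : Measurable (fun q : (EuclideanSpace ℝ (Fin N) × EuclideanSpace ℝ (Fin N)) ×
        sphere (0 : EuclideanSpace ℝ (Fin N)) 1 =>
        B (q.1.1 - q.1.2) (q.2 : EuclideanSpace ℝ (Fin N))) := by
      have : Measurable (fun q : (EuclideanSpace ℝ (Fin N) × EuclideanSpace ℝ (Fin N)) ×
          sphere (0 : EuclideanSpace ℝ (Fin N)) 1 =>
          (q.1.1 - q.1.2, (q.2 : EuclideanSpace ℝ (Fin N)))) :=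
        (measurable_fst.fst.sub measurable_fst.snd).prodMk
          (measurable_subtype_coe.comp measurable_snd)
      exact hBm.comp this
    exact h1.mul (hψm.comp vprime_cont.measurable)
  exact (hf.stronglyMeasurable.integral_prod_right').measurable

lemma K2_measurable (hBm : Measurable (Function.uncurry B)) (hψm : Measurable ψ) :
    Measurable (fun x : EuclideanSpace ℝ (Fin N) × EuclideanSpace ℝ (Fin N) =>
      (∫ σ, B (x.1 - x.2) (σ : EuclideanSpace ℝ (Fin N)) ∂(sphereMeasure N)) * ψ x.1) := by
  have h1 : Measurable (fun x : EuclideanSpace ℝ (Fin N) × EuclideanSpace ℝ (Fin N) =>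
      ∫ σ, B (x.1 - x.2) (σ : EuclideanSpace ℝ (Fin N)) ∂(sphereMeasure N)) := by
    have hf : Measurable (fun q : (EuclideanSpace ℝ (Fin N) × EuclideanSpace ℝ (Fin N)) ×
        sphere (0 : EuclideanSpace ℝ (Fin N)) 1 =>
        B (q.1.1 - q.1.2) (q.2 : EuclideanSpace ℝ (Fin N))) := by
      have : Measurable (fun q : (EuclideanSpace ℝ (Fin N) × EuclideanSpace ℝ (Fin N)) ×
          sphere (0 : EuclideanSpace ℝ (Fin N)) 1 =>
          (q.1.1 - q.1.2, (q.2 : EuclideanSpace ℝ (Fin N)))) :=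
        (measurable_fst.fst.sub measurable_fst.snd).prodMk
          (measurable_subtype_coe.comp measurable_snd)
      exact hBm.comp this
    exact (hf.stronglyMeasurable.integral_prod_right').measurable
  exact h1.mul (hψm.comp measurable_fst)

end Kernels

end CollAux

/-- **Lipschitz bound of Proposition 1.4.** With the same kernel assumptions as
Statement 3 and `|ψ(v)| ≤ ⟨v⟩^s`,
`|∬ K d(μ⊗μ) - ∬ K d(ν⊗ν)| ≤ 2^{(s+γ)/2} A₀ (‖μ+ν‖_{s+γ}‖μ-ν‖₀ + ‖μ+ν‖₀‖μ-ν‖_{s+γ})`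
both for `K(v,v_*) = ∫_{S^{N-1}} B(v-v_*,σ)ψ(v') dσ` and for `K(v,v_*) = A(v-v_*)ψ(v)`. -/
theorem collision_operator_difference_bounds (N : ℕ) (hN : 2 ≤ N)
    (γ s : ℝ) (hγ0 : 0 < γ) (hγ2 : γ ≤ 2) (hs : 0 ≤ s)
    (b : ℝ → ℝ) (hbm : Measurable b) (hb0 : ∀ x, 0 ≤ b x)
    (A₀ : ℝ) (hA₀ : 0 ≤ A₀)
    (hA0 : ∀ e : EuclideanSpace ℝ (Fin N), ‖e‖ = 1 →
      ∫⁻ σ, ENNReal.ofReal (b ⟪e, (σ : EuclideanSpace ℝ (Fin N))⟫) ∂(sphereMeasure N)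
        = ENNReal.ofReal A₀)
    (e₁ : EuclideanSpace ℝ (Fin N)) (he₁ : ‖e₁‖ = 1)
    (B : EuclideanSpace ℝ (Fin N) → EuclideanSpace ℝ (Fin N) → ℝ)
    (hBm : Measurable (Function.uncurry B)) (hB0 : ∀ z σ, 0 ≤ B z σ)
    (hBb : ∀ z σ : EuclideanSpace ℝ (Fin N), ‖σ‖ = 1 →
      B z σ ≤ (1 + ‖z‖ ^ 2) ^ (γ / 2) * b ⟪if z = 0 then e₁ else ‖z‖⁻¹ • z, σ⟫)
    (μ ν : Measure (EuclideanSpace ℝ (Fin N)))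
    [IsFiniteMeasure μ] [IsFiniteMeasure ν]
    (hμ : ∫⁻ v, ENNReal.ofReal ((1 + ‖v‖ ^ 2) ^ ((s + γ) / 2)) ∂μ < ⊤)
    (hν : ∫⁻ v, ENNReal.ofReal ((1 + ‖v‖ ^ 2) ^ ((s + γ) / 2)) ∂ν < ⊤)
    (ψ : EuclideanSpace ℝ (Fin N) → ℝ) (hψm : Measurable ψ)
    (hψ : ∀ v, |ψ v| ≤ (1 + ‖v‖ ^ 2) ^ (s / 2)) :
    (|(∫ x, (∫ σ, B (x.1 - x.2) (σ : EuclideanSpace ℝ (Fin N)) * ψ (vprime x.1 x.2 σ)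
            ∂(sphereMeasure N)) ∂(μ.prod μ))
        - ∫ x, (∫ σ, B (x.1 - x.2) (σ : EuclideanSpace ℝ (Fin N)) * ψ (vprime x.1 x.2 σ)
            ∂(sphereMeasure N)) ∂(ν.prod ν)|
      ≤ 2 ^ ((s + γ) / 2) * A₀ *
          (rnorm (s + γ) (μ + ν) * tvnorm 0 μ ν + rnorm 0 (μ + ν) * tvnorm (s + γ) μ ν))
    ∧ (|(∫ x, (∫ σ, B (x.1 - x.2) (σ : EuclideanSpace ℝ (Fin N)) ∂(sphereMeasure N)) * ψ x.1
            ∂(μ.prod μ))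
        - ∫ x, (∫ σ, B (x.1 - x.2) (σ : EuclideanSpace ℝ (Fin N)) ∂(sphereMeasure N)) * ψ x.1
            ∂(ν.prod ν)|
      ≤ 2 ^ ((s + γ) / 2) * A₀ *
          (rnorm (s + γ) (μ + ν) * tvnorm 0 μ ν + rnorm 0 (μ + ν) * tvnorm (s + γ) μ ν)) := by
  have ht : (0:ℝ) ≤ s + γ := by linarith
  have hC : (0:ℝ) ≤ 2 ^ ((s + γ) / 2) * A₀ := by positivity
  have hμ' : ∫⁻ v, ENNReal.ofReal (CollAux.wt (s + γ) v) ∂μ ≠ ⊤ := hμ.ne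
  have hν' : ∫⁻ v, ENNReal.ofReal (CollAux.wt (s + γ) v) ∂ν ≠ ⊤ := hν.ne
  have hbound1 : ∀ x : EuclideanSpace ℝ (Fin N) × EuclideanSpace ℝ (Fin N),
      |∫ σ, B (x.1 - x.2) (σ : EuclideanSpace ℝ (Fin N)) * ψ (vprime x.1 x.2 σ)
          ∂(sphereMeasure N)|
        ≤ (2 ^ ((s + γ) / 2) * A₀) * (CollAux.wt (s + γ) x.1 + CollAux.wt (s + γ) x.2) := by
    intro x
    refine (CollAux.K1_pointwise hγ0 hs hbm hb0 hA₀ hA0 he₁ hB0 hBb hψm hψ x.1 x.2).trans ?_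
    calc A₀ * ((1 + ‖x.1 - x.2‖ ^ 2) ^ (γ / 2) * (1 + ‖x.1‖ ^ 2 + ‖x.2‖ ^ 2) ^ (s / 2))
        ≤ A₀ * (2 ^ ((s + γ) / 2) * (CollAux.wt (s + γ) x.1 + CollAux.wt (s + γ) x.2)) :=
          mul_le_mul_of_nonneg_left (CollAux.weight_ineq hγ0 hγ2 hs x.1 x.2) hA₀
      _ = (2 ^ ((s + γ) / 2) * A₀) * (CollAux.wt (s + γ) x.1 + CollAux.wt (s + γ) x.2) := by
          ring
  have hbound2 : ∀ x : EuclideanSpace ℝ (Fin N) × EuclideanSpace ℝ (Fin N),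
      |(∫ σ, B (x.1 - x.2) (σ : EuclideanSpace ℝ (Fin N)) ∂(sphereMeasure N)) * ψ x.1|
        ≤ (2 ^ ((s + γ) / 2) * A₀) * (CollAux.wt (s + γ) x.1 + CollAux.wt (s + γ) x.2) := by
    intro x
    refine (CollAux.K2_pointwise hγ0 hs hbm hb0 hA₀ hA0 he₁ hBm hB0 hBb hψm hψ x.1 x.2).trans ?_
    calc A₀ * ((1 + ‖x.1 - x.2‖ ^ 2) ^ (γ / 2) * (1 + ‖x.1‖ ^ 2 + ‖x.2‖ ^ 2) ^ (s / 2))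
        ≤ A₀ * (2 ^ ((s + γ) / 2) * (CollAux.wt (s + γ) x.1 + CollAux.wt (s + γ) x.2)) :=
          mul_le_mul_of_nonneg_left (CollAux.weight_ineq hγ0 hγ2 hs x.1 x.2) hA₀
      _ = (2 ^ ((s + γ) / 2) * A₀) * (CollAux.wt (s + γ) x.1 + CollAux.wt (s + γ) x.2) := by
          ring
  constructor
  · exact CollAux.main_abs ht hC μ ν hμ' hν' (CollAux.K1_measurable hBm hψm) hbound1
  · exact CollAux.main_abs ht hC μ ν hμ' hν' (CollAux.K2_measurable hBm hψm) hbound2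
end

section
/- Let p ≥ 1 be a real number and k_p := ⌊(p+1)/2⌋. Then for all x, y ≥ 0: Σ_{k=0}^{k_p−1} C(p,k) (x^k y^{p−k} + x^{p−k} y^k) ≤ (x+y)^p ≤ Σ_{k=0}^{k_p} C(p,k) (x^k y^{p−k} + x^{p−k} y^k). -/
open Real Finset

/-- The generalized binomial coefficient `C(p,k) = p(p-1)⋯(p-k+1)/k!` for real `p`,
with `C(p,0) = 1`. -/
noncomputable def genBinom (p : ℝ) (k : ℕ) : ℝ :=
  (∏ i ∈ Finset.range k, (p - i)) / (Nat.factorial k)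


lemma genBinom_zero (p : ℝ) : genBinom p 0 = 1 := by simp [genBinom]

lemma genBinom_succ (p : ℝ) (k : ℕ) :
    genBinom p (k + 1) = genBinom p k * (p - k) / (k + 1) := by
  unfold genBinom
  rw [Finset.prod_range_succ, Nat.factorial_succ]
  have h1 : (Nat.factorial k : ℝ) ≠ 0 := by positivity
  push_cast
  rw [div_mul_eq_mul_div, div_div, eq_div_iff (by positivity), div_mul_eq_mul_div,
    div_eq_iff (by positivity)]
  ring

lemma genBinom_succ_mul (p : ℝ) (k : ℕ) :
    ((k : ℝ) + 1) * genBinom p (k + 1) = p * genBinom (p - 1) k := by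
  unfold genBinom
  rw [Finset.prod_range_succ', Nat.factorial_succ]
  have h2 : ∀ i ∈ Finset.range k, (p - ((i : ℕ) + 1 : ℕ)) = (p - 1) - i := by
    intro i _; push_cast; ring
  rw [Finset.prod_congr rfl h2]
  have h1 : (Nat.factorial k : ℝ) ≠ 0 := by positivity
  push_cast
  rw [mul_div_assoc', mul_div_assoc', div_eq_div_iff (by positivity) (by positivity)]
  ring

lemma genBinom_nonneg {p : ℝ} {k : ℕ} (h : (k : ℝ) ≤ p + 1) : 0 ≤ genBinom p k := by
  apply div_nonneg _ (by positivity)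
  apply Finset.prod_nonneg
  intro i hi
  have hik : (i : ℝ) + 1 ≤ (k : ℝ) := by exact_mod_cast Finset.mem_range.1 hi
  linarith

lemma genBinom_le_of_add_le (p : ℝ) :
    ∀ d j : ℕ, ((j : ℝ) + ((j : ℝ) + d) ≤ p) → genBinom p j ≤ genBinom p (j + d) := by
  intro d
  induction d using Nat.strong_induction_on with
  | _ d ih =>
    match d with
    | 0 => intro j h; simp
    | 1 =>
      intro j h
      have hj : (j : ℝ) ≤ p + 1 := by push_cast at h ⊢; linarith
      have h0 : 0 ≤ genBinom p j := genBinom_nonneg hj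
      rw [genBinom_succ]
      rw [mul_div_assoc]
      nth_rewrite 1 [← mul_one (genBinom p j)]
      apply mul_le_mul_of_nonneg_left _ h0
      rw [le_div_iff₀ (by positivity)]
      push_cast at h
      linarith
    | (d + 2) =>
      intro j h
      push_cast at h
      have key : genBinom p (j + 1) ≤ genBinom p (j + 1 + d) := by
        apply ih (d) (by omega)
        push_cast
        linarith
      have hpj : (0:ℝ) < p - j := by linarith
      have hnn : 0 ≤ genBinom p (j + 1) := genBinom_nonneg (by push_cast; linarith)
      -- genBinom p j = genBinom p (j+1) * (j+1)/(p-j)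
      have e1 : genBinom p j = genBinom p (j + 1) * ((j : ℝ) + 1) / (p - j) := by
        rw [genBinom_succ]
        field_simp
      have e2 : genBinom p (j + (d + 2)) = genBinom p (j + 1 + d) * (p - ((j:ℝ) + 1 + d)) / ((j:ℝ) + 2 + d) := by
        have : j + (d + 2) = (j + 1 + d) + 1 := by omega
        rw [this, genBinom_succ]
        push_cast
        ring_nf
      rw [e1, e2]
      rw [div_le_div_iff₀ hpj (by positivity)]
      have hr : ((j:ℝ) + 1) * ((j:ℝ) + 2 + d) ≤ (p - ((j:ℝ)+1+d)) * (p - j) := by nlinarith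
      have hA2 : 0 ≤ genBinom p (j + 1 + d) := genBinom_nonneg (by push_cast; linarith)
      calc genBinom p (j+1) * ((j:ℝ)+1) * ((j:ℝ)+2+(d:ℝ))
          = genBinom p (j+1) * (((j:ℝ)+1) * ((j:ℝ)+2+(d:ℝ))) := by ring
        _ ≤ genBinom p (j+1+d) * ((p - ((j:ℝ)+1+(d:ℝ))) * (p - (j:ℝ))) :=
            mul_le_mul key hr (by positivity) hA2
        _ = genBinom p (j+1+d) * (p - ((j:ℝ)+1+(d:ℝ))) * (p - (j:ℝ)) := by ring

lemma genBinom_ge_of_le_add (p : ℝ) :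
    ∀ d j : ℕ, (p ≤ (j : ℝ) + ((j : ℝ) + d)) → ((j : ℝ) + d ≤ p + 1) →
      genBinom p (j + d) ≤ genBinom p j := by
  intro d
  induction d using Nat.strong_induction_on with
  | _ d ih =>
    match d with
    | 0 => intro j _ _; simp
    | 1 =>
      intro j h h2
      have hj : (j : ℝ) ≤ p + 1 := by push_cast at h2 ⊢; linarith
      have h0 : 0 ≤ genBinom p j := genBinom_nonneg hj
      rw [genBinom_succ, mul_div_assoc]
      nth_rewrite 2 [← mul_one (genBinom p j)]
      apply mul_le_mul_of_nonneg_left _ h0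
      rw [div_le_one (by positivity)]
      push_cast at h h2
      linarith
    | (d + 2) =>
      intro j h h2
      push_cast at h h2
      have hpj : (0:ℝ) < p - j := by linarith
      have key : genBinom p (j + 1 + d) ≤ genBinom p (j + 1) := by
        apply ih d (by omega)
        · push_cast; linarith
        · push_cast; linarith
      have hnn : 0 ≤ genBinom p (j + 1) := genBinom_nonneg (by push_cast; linarith)
      have e1 : genBinom p j = genBinom p (j + 1) * ((j : ℝ) + 1) / (p - j) := by
        rw [genBinom_succ]
        field_simp
      have e2 : genBinom p (j + (d + 2)) = genBinom p (j + 1 + d) * (p - ((j:ℝ) + 1 + d)) / ((j:ℝ) + 2 + d) := by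
        have : j + (d + 2) = (j + 1 + d) + 1 := by omega
        rw [this, genBinom_succ]
        push_cast
        ring_nf
      rw [e1, e2]
      rw [div_le_div_iff₀ (by positivity) hpj]
      have hr : (p - ((j:ℝ)+1+d)) * (p - (j:ℝ)) ≤ ((j:ℝ) + 1) * ((j:ℝ) + 2 + d) := by nlinarith
      have hb1 : 0 ≤ (p - ((j:ℝ)+1+d)) * (p - (j:ℝ)) := by nlinarith
      calc genBinom p (j+1+d) * (p - ((j:ℝ)+1+(d:ℝ))) * (p - (j:ℝ))
          = genBinom p (j+1+d) * ((p - ((j:ℝ)+1+(d:ℝ))) * (p - (j:ℝ))) := by ring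
        _ ≤ genBinom p (j+1) * (((j:ℝ)+1) * ((j:ℝ)+2+(d:ℝ))) := mul_le_mul key hr hb1 hnn
        _ = genBinom p (j+1) * ((j:ℝ)+1) * ((j:ℝ)+2+(d:ℝ)) := by ring

lemma hasDerivAt_taylorSum (p : ℝ) (N : ℕ) (t : ℝ) (ht : -1 < t) :
    HasDerivAt (fun s => (1 + s) ^ p - ∑ k ∈ range (N + 2), genBinom p k * s ^ k)
      (p * ((1 + t) ^ (p - 1) - ∑ k ∈ range (N + 1), genBinom (p - 1) k * t ^ k)) t := by
  have h1 : HasDerivAt (fun s : ℝ => (1 + s) ^ p) (1 * p * (1 + t) ^ (p - 1)) t := by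
    exact (HasDerivAt.const_add 1 (hasDerivAt_id t)).rpow_const (Or.inl (by simp only [id_eq]; intro hc; linarith))
  have h2 : HasDerivAt (fun s : ℝ => ∑ k ∈ range (N + 2), genBinom p k * s ^ k)
      (∑ k ∈ range (N + 2), genBinom p k * (k * t ^ (k - 1))) t := by
    apply HasDerivAt.fun_sum
    intro k _
    exact (hasDerivAt_pow k t).const_mul _
  have e : ∑ k ∈ range (N + 2), genBinom p k * (k * t ^ (k - 1))
      = p * ∑ k ∈ range (N + 1), genBinom (p - 1) k * t ^ k := by
    rw [Finset.sum_range_succ']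
    simp only [Nat.cast_zero, zero_mul, mul_zero, add_zero, Finset.mul_sum]
    apply Finset.sum_congr rfl
    intro k _
    have h := genBinom_succ_mul p k
    have : (k + 1 : ℕ) - 1 = k := by omega
    rw [this]
    push_cast
    linear_combination t ^ k * h
  rw [e] at h2
  have := h1.fun_sub h2
  exact this.congr_deriv (by ring)

lemma taylorSum_zero (p : ℝ) (N : ℕ) :
    (1 + (0:ℝ)) ^ p - ∑ k ∈ range (N + 1), genBinom p k * (0:ℝ) ^ k = 0 := by
  rw [Finset.sum_range_succ']
  simp [genBinom_zero]

lemma taylor_lower : ∀ (N : ℕ) (p : ℝ), (N : ℝ) ≤ p → ∀ t : ℝ, 0 ≤ t →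
    ∑ k ∈ range (N + 1), genBinom p k * t ^ k ≤ (1 + t) ^ p := by
  intro N
  induction N with
  | zero =>
    intro p hp t ht
    simp [Finset.sum_range_one, genBinom_zero]
    exact Real.one_le_rpow (by linarith) (by exact_mod_cast hp)
  | succ N ih =>
    intro p hp t ht
    rw [← sub_nonneg]
    set F : ℝ → ℝ := fun s => (1 + s) ^ p - ∑ k ∈ range (N + 2), genBinom p k * s ^ k with hF
    have hd : ∀ s ∈ Set.Ici (0:ℝ), HasDerivAt F
        (p * ((1 + s) ^ (p - 1) - ∑ k ∈ range (N + 1), genBinom (p - 1) k * s ^ k)) s := by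
      intro s hs
      exact hasDerivAt_taylorSum p N s (by simp at hs; linarith)
    have hp' : (N : ℝ) ≤ p - 1 := by push_cast at hp; linarith
    have hmono : MonotoneOn F (Set.Ici (0:ℝ)) := by
      apply monotoneOn_of_deriv_nonneg (convex_Ici 0)
      · exact fun s hs => (hd s hs).continuousAt.continuousWithinAt
      · intro s hs
        rw [interior_Ici] at hs
        exact ((hd s (Set.mem_Ici.2 (le_of_lt hs))).differentiableAt).differentiableWithinAt
      · intro s hs
        rw [interior_Ici] at hs
        rw [(hd s (Set.mem_Ici.2 (le_of_lt hs))).deriv]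
        have hper := ih (p - 1) hp' s (le_of_lt hs)
        have hp0 : (0:ℝ) ≤ p := by push_cast at hp; linarith
        exact mul_nonneg hp0 (by linarith)
    have h0 : F 0 = 0 := taylorSum_zero p (N + 1)
    have := hmono (Set.self_mem_Ici) (Set.mem_Ici.2 ht) ht
    rw [h0] at this
    exact this

lemma taylor_upper : ∀ (N : ℕ) (p : ℝ), (N : ℝ) - 1 ≤ p → p ≤ (N : ℝ) → ∀ t : ℝ, 0 ≤ t →
    (1 + t) ^ p ≤ ∑ k ∈ range (N + 1), genBinom p k * t ^ k := by
  intro N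
  induction N with
  | zero =>
    intro p hp1 hp2 t ht
    simp [Finset.sum_range_one, genBinom_zero]
    exact Real.rpow_le_one_of_one_le_of_nonpos (by linarith) (by exact_mod_cast hp2)
  | succ N ih =>
    intro p hp1 hp2 t ht
    rw [← sub_nonpos]
    set F : ℝ → ℝ := fun s => (1 + s) ^ p - ∑ k ∈ range (N + 2), genBinom p k * s ^ k with hF
    have hd : ∀ s ∈ Set.Ici (0:ℝ), HasDerivAt F
        (p * ((1 + s) ^ (p - 1) - ∑ k ∈ range (N + 1), genBinom (p - 1) k * s ^ k)) s := by
      intro s hs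
      exact hasDerivAt_taylorSum p N s (by simp at hs; linarith)
    have hanti : AntitoneOn F (Set.Ici (0:ℝ)) := by
      apply antitoneOn_of_deriv_nonpos (convex_Ici 0)
      · exact fun s hs => (hd s hs).continuousAt.continuousWithinAt
      · intro s hs
        rw [interior_Ici] at hs
        exact ((hd s (Set.mem_Ici.2 (le_of_lt hs))).differentiableAt).differentiableWithinAt
      · intro s hs
        rw [interior_Ici] at hs
        rw [(hd s (Set.mem_Ici.2 (le_of_lt hs))).deriv]
        have hper := ih (p - 1) (by push_cast at hp1 ⊢; linarith)
          (by push_cast at hp2 ⊢; linarith) s (le_of_lt hs)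
        have hp0 : (0:ℝ) ≤ p := by push_cast at hp1; linarith
        exact mul_nonpos_of_nonneg_of_nonpos hp0 (by linarith)
    have h0 : F 0 = 0 := taylorSum_zero p (N + 1)
    have := hanti (Set.self_mem_Ici) (Set.mem_Ici.2 ht) ht
    rw [h0] at this
    exact this

lemma scale_eq (p : ℝ) (k : ℕ) {x y : ℝ} (hy : 0 < y) :
    y ^ p * (genBinom p k * (x / y) ^ k) = genBinom p k * (x ^ (k:ℝ) * y ^ (p - (k:ℝ))) := by
  rw [div_pow, Real.rpow_sub hy, ← Real.rpow_natCast x k, ← Real.rpow_natCast y k]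
  ring

lemma base_eq (p : ℝ) {x y : ℝ} (hx : 0 ≤ x) (hy : 0 < y) :
    y ^ p * (1 + x / y) ^ p = (x + y) ^ p := by
  rw [← Real.mul_rpow (le_of_lt hy) (by positivity)]
  congr 1
  field_simp
  ring

lemma taylor_lower2 (N : ℕ) (p : ℝ) (hN : (N : ℝ) ≤ p) {x y : ℝ} (hx : 0 ≤ x) (hy : 0 < y) :
    ∑ k ∈ range (N + 1), genBinom p k * (x ^ (k:ℝ) * y ^ (p - (k:ℝ))) ≤ (x + y) ^ p := by
  have h := taylor_lower N p hN (x / y) (by positivity)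
  have hmul := mul_le_mul_of_nonneg_left h (le_of_lt (Real.rpow_pos_of_pos hy p))
  rw [Finset.mul_sum] at hmul
  rw [base_eq p hx hy] at hmul
  calc ∑ k ∈ range (N + 1), genBinom p k * (x ^ (k:ℝ) * y ^ (p - (k:ℝ)))
      = ∑ k ∈ range (N + 1), y ^ p * (genBinom p k * (x / y) ^ k) :=
        Finset.sum_congr rfl fun k _ => (scale_eq p k hy).symm
    _ ≤ (x + y) ^ p := hmul

lemma taylor_upper2 (N : ℕ) (p : ℝ) (hN1 : (N : ℝ) - 1 ≤ p) (hN2 : p ≤ (N : ℝ)) {x y : ℝ}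
    (hx : 0 ≤ x) (hy : 0 < y) :
    (x + y) ^ p ≤ ∑ k ∈ range (N + 1), genBinom p k * (x ^ (k:ℝ) * y ^ (p - (k:ℝ))) := by
  have h := taylor_upper N p hN1 hN2 (x / y) (by positivity)
  have hmul := mul_le_mul_of_nonneg_left h (le_of_lt (Real.rpow_pos_of_pos hy p))
  rw [Finset.mul_sum] at hmul
  rw [base_eq p hx hy] at hmul
  calc (x + y) ^ p ≤ ∑ k ∈ range (N + 1), y ^ p * (genBinom p k * (x / y) ^ k) := hmul
    _ = ∑ k ∈ range (N + 1), genBinom p k * (x ^ (k:ℝ) * y ^ (p - (k:ℝ))) :=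
        Finset.sum_congr rfl fun k _ => scale_eq p k hy

lemma pow_shift {x y : ℝ} (hx : 0 ≤ x) (hxy : x ≤ y) (hy : 0 < y) {α β γ δ : ℝ}
    (hγ : 0 ≤ γ) (hαγ : γ ≤ α) (hsum : α + β = γ + δ) :
    x ^ α * y ^ β ≤ x ^ γ * y ^ δ := by
  have hc : 0 ≤ α - γ := by linarith
  have hδ : δ = β + (α - γ) := by linarith
  rcases eq_or_lt_of_le hx with h0 | hxpos
  · -- x = 0
    rcases eq_or_lt_of_le hc with hc0 | hcpos
    · have hαγ' : α = γ := by linarith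
      have : δ = β := by linarith
      rw [hαγ', this]
    · have hα : (0:ℝ) < α := by linarith
      rw [← h0, Real.zero_rpow (ne_of_gt hα), zero_mul]
      positivity
  · have h1 : x ^ α = x ^ γ * x ^ (α - γ) := by
      rw [← Real.rpow_add hxpos]; ring_nf
    have h2 : y ^ δ = y ^ β * y ^ (α - γ) := by
      rw [hδ, Real.rpow_add hy]
    rw [h1, h2]
    have h3 : x ^ (α - γ) ≤ y ^ (α - γ) := Real.rpow_le_rpow hx hxy hc
    calc x ^ γ * x ^ (α - γ) * y ^ β = x ^ (α - γ) * (x ^ γ * y ^ β) := by ring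
      _ ≤ y ^ (α - γ) * (x ^ γ * y ^ β) := by
          apply mul_le_mul_of_nonneg_right h3
          positivity
      _ = x ^ γ * (y ^ β * y ^ (α - γ)) := by ring

section main
variable {p x y : ℝ}

lemma floor_facts (hp : 1 ≤ p) :
    1 ≤ ⌊(p + 1) / 2⌋₊ ∧ ⌊(p + 1) / 2⌋₊ ≤ ⌊p⌋₊ ∧ (⌊p⌋₊ : ℝ) ≤ p ∧ p < ⌊p⌋₊ + 1 ∧
      ⌊p⌋₊ ≤ 2 * ⌊(p + 1) / 2⌋₊ ∧ 2 * ⌊(p + 1) / 2⌋₊ ≤ ⌊p⌋₊ + 1 := by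
  have hp0 : (0:ℝ) ≤ p := by linarith
  have h1 : (⌊p⌋₊ : ℝ) ≤ p := Nat.floor_le hp0
  have h2 : p < ⌊p⌋₊ + 1 := Nat.lt_floor_add_one p
  have h3 : ((⌊(p + 1) / 2⌋₊ : ℕ) : ℝ) ≤ (p + 1) / 2 := Nat.floor_le (by linarith)
  have h4 : (p + 1) / 2 < ⌊(p + 1) / 2⌋₊ + 1 := Nat.lt_floor_add_one _
  refine ⟨?_, ?_, h1, h2, ?_, ?_⟩
  · exact Nat.le_floor (by push_cast; linarith)
  · exact Nat.floor_mono (by linarith)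
  · have hr : (⌊p⌋₊ : ℝ) < 2 * (⌊(p + 1) / 2⌋₊ : ℝ) + 1 := by linarith
    have : ⌊p⌋₊ < 2 * ⌊(p + 1) / 2⌋₊ + 1 := by exact_mod_cast hr
    omega
  · have hr : (2 * ⌊(p + 1) / 2⌋₊ : ℕ) < (⌊p⌋₊ : ℝ) + 2 := by push_cast; linarith
    have : 2 * ⌊(p + 1) / 2⌋₊ < ⌊p⌋₊ + 2 := by exact_mod_cast hr
    omega

lemma main_lower (hp : 1 ≤ p) (hx : 0 ≤ x) (hxy : x ≤ y) (hy : 0 < y) :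
    (∑ k ∈ Finset.range ⌊(p + 1) / 2⌋₊,
        genBinom p k * (x ^ (k : ℝ) * y ^ (p - k) + x ^ (p - k) * y ^ (k : ℝ)))
      ≤ (x + y) ^ p := by
  obtain ⟨hm1, hms, hsp, hps, hs2m, h2ms⟩ := floor_facts hp
  set m := ⌊(p + 1) / 2⌋₊ with hm
  set s := ⌊p⌋₊ with hs
  have hsub : range m ⊆ range (s + 1) := Finset.range_subset_range.2 (by omega)
  -- termwise bound for the reflected part
  have hterm : ∀ j ∈ range m,
      genBinom p j * (x ^ (p - (j:ℝ)) * y ^ (j:ℝ))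
        ≤ genBinom p (s - j) * (x ^ ((s - j : ℕ) : ℝ) * y ^ (p - ((s - j : ℕ) : ℝ))) := by
    intro j hj
    have hjm : j < m := Finset.mem_range.1 hj
    have hjs : j ≤ s := by omega
    have hcast : ((s - j : ℕ) : ℝ) = (s : ℝ) - (j : ℝ) := by
      push_cast [Nat.cast_sub hjs]; ring
    have hcoef : genBinom p j ≤ genBinom p (s - j) := by
      have hd : j + (s - 2 * j) = s - j := by omega
      have := genBinom_le_of_add_le p (s - 2 * j) j (by
        push_cast [Nat.cast_sub (show 2 * j ≤ s by omega)]
        linarith)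
      rwa [hd] at this
    have hmono : x ^ (p - (j:ℝ)) * y ^ (j:ℝ)
        ≤ x ^ ((s - j : ℕ) : ℝ) * y ^ (p - ((s - j : ℕ) : ℝ)) := by
      rw [hcast]
      apply pow_shift hx hxy hy
      · have : (j:ℝ) ≤ s := by exact_mod_cast hjs
        linarith
      · linarith
      · ring
    have h0 : 0 ≤ genBinom p j := genBinom_nonneg (by
      have : (j:ℝ) ≤ s := by exact_mod_cast hjs
      linarith)
    exact mul_le_mul hcoef hmono (by positivity) (le_trans h0 hcoef)
  -- sum of reflected part is bounded by the extra terms of the long sum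
  have hS2 : ∑ j ∈ range m, genBinom p j * (x ^ (p - (j:ℝ)) * y ^ (j:ℝ))
      ≤ ∑ k ∈ range (s + 1) \ range m, genBinom p k * (x ^ (k:ℝ) * y ^ (p - (k:ℝ))) := by
    have hinj : ∀ a ∈ range m, ∀ b ∈ range m, s - a = s - b → a = b := by
      intro a ha b hb hab
      have := Finset.mem_range.1 ha
      have := Finset.mem_range.1 hb
      omega
    calc ∑ j ∈ range m, genBinom p j * (x ^ (p - (j:ℝ)) * y ^ (j:ℝ))
        ≤ ∑ j ∈ range m, genBinom p (s - j) * (x ^ ((s - j : ℕ) : ℝ) * y ^ (p - ((s - j : ℕ) : ℝ))) :=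
          Finset.sum_le_sum hterm
      _ = ∑ k ∈ (range m).image (fun j => s - j), genBinom p k * (x ^ (k:ℝ) * y ^ (p - (k:ℝ))) :=
          by rw [Finset.sum_image hinj]
      _ ≤ ∑ k ∈ range (s + 1) \ range m, genBinom p k * (x ^ (k:ℝ) * y ^ (p - (k:ℝ))) := by
          apply Finset.sum_le_sum_of_subset_of_nonneg
          · intro k hk
            simp only [Finset.mem_image, Finset.mem_range] at hk
            obtain ⟨j, hj, rfl⟩ := hk
            simp only [Finset.mem_sdiff, Finset.mem_range]
            omega
          · intro k hk _
            have hk' : k ≤ s := by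
              have := (Finset.mem_sdiff.1 hk).1
              simp only [Finset.mem_range] at this
              omega
            have : (k:ℝ) ≤ p + 1 := by
              have : (k:ℝ) ≤ s := by exact_mod_cast hk'
              linarith
            have := genBinom_nonneg this
            positivity
  calc (∑ k ∈ Finset.range m,
        genBinom p k * (x ^ (k : ℝ) * y ^ (p - k) + x ^ (p - k) * y ^ (k : ℝ)))
      = (∑ k ∈ range m, genBinom p k * (x ^ (k:ℝ) * y ^ (p - (k:ℝ))))
        + ∑ j ∈ range m, genBinom p j * (x ^ (p - (j:ℝ)) * y ^ (j:ℝ)) := by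
        rw [← Finset.sum_add_distrib]
        exact Finset.sum_congr rfl fun k _ => by ring
    _ ≤ (∑ k ∈ range m, genBinom p k * (x ^ (k:ℝ) * y ^ (p - (k:ℝ))))
        + ∑ k ∈ range (s + 1) \ range m, genBinom p k * (x ^ (k:ℝ) * y ^ (p - (k:ℝ))) :=
        add_le_add_right hS2 _
    _ = ∑ k ∈ range (s + 1), genBinom p k * (x ^ (k:ℝ) * y ^ (p - (k:ℝ))) := by
        rw [add_comm, Finset.sum_sdiff hsub]
    _ ≤ (x + y) ^ p := taylor_lower2 s p hsp hx hy

lemma main_upper (hp : 1 ≤ p) (hx : 0 ≤ x) (hxy : x ≤ y) (hy : 0 < y) :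
    (x + y) ^ p ≤
      ∑ k ∈ Finset.range (⌊(p + 1) / 2⌋₊ + 1),
        genBinom p k * (x ^ (k : ℝ) * y ^ (p - k) + x ^ (p - k) * y ^ (k : ℝ)) := by
  obtain ⟨hm1, hms, hsp, hps, hs2m, h2ms⟩ := floor_facts hp
  set m := ⌊(p + 1) / 2⌋₊ with hm
  set s := ⌊p⌋₊ with hs
  have hsub : range (m + 1) ⊆ range (s + 2) := Finset.range_subset_range.2 (by omega)
  -- termwise bound for the extra terms of the long sum
  have hterm : ∀ k ∈ range (s + 2) \ range (m + 1),
      genBinom p k * (x ^ (k:ℝ) * y ^ (p - (k:ℝ)))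
        ≤ genBinom p (s + 1 - k) * (x ^ (p - ((s + 1 - k : ℕ) : ℝ)) * y ^ ((s + 1 - k : ℕ) : ℝ)) := by
    intro k hk
    have hk1 : k < s + 2 := by
      have := (Finset.mem_sdiff.1 hk).1; simpa using this
    have hk2 : m + 1 ≤ k := by
      have := (Finset.mem_sdiff.1 hk).2; simp at this; omega
    have hcast : ((s + 1 - k : ℕ) : ℝ) = (s : ℝ) + 1 - (k : ℝ) := by
      push_cast [Nat.cast_sub (show k ≤ s + 1 by omega)]; ring
    have hcast2 : ((2 * k - s - 1 : ℕ) : ℝ) = 2 * (k : ℝ) - (s : ℝ) - 1 := by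
      push_cast [Nat.cast_sub (show s ≤ 2 * k by omega),
        Nat.cast_sub (show 1 ≤ 2 * k - s by omega)]
      ring
    have hks : (k : ℝ) ≤ (s : ℝ) + 1 := by exact_mod_cast (show k ≤ s + 1 by omega)
    have hcoef : genBinom p k ≤ genBinom p (s + 1 - k) := by
      have hd : (s + 1 - k) + (2 * k - s - 1) = k := by omega
      have := genBinom_ge_of_le_add p (2 * k - s - 1) (s + 1 - k)
        (by rw [hcast, hcast2]; linarith)
        (by rw [hcast, hcast2]; linarith)
      rwa [hd] at this
    have hkm : ((m : ℝ) + 1) ≤ (k : ℝ) := by exact_mod_cast hk2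
    have hmr : (1 : ℝ) ≤ (m : ℝ) := by exact_mod_cast hm1
    have hmono : x ^ (k:ℝ) * y ^ (p - (k:ℝ))
        ≤ x ^ (p - ((s + 1 - k : ℕ) : ℝ)) * y ^ ((s + 1 - k : ℕ) : ℝ) := by
      rw [hcast]
      apply pow_shift hx hxy hy
      · linarith
      · linarith
      · ring
    have h0 : 0 ≤ genBinom p k := genBinom_nonneg (by linarith)
    exact mul_le_mul hcoef hmono (by positivity) (le_trans h0 hcoef)
  have hS2 : ∑ k ∈ range (s + 2) \ range (m + 1), genBinom p k * (x ^ (k:ℝ) * y ^ (p - (k:ℝ)))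
      ≤ ∑ j ∈ range (m + 1), genBinom p j * (x ^ (p - (j:ℝ)) * y ^ (j:ℝ)) := by
    have hinj : ∀ a ∈ range (s + 2) \ range (m + 1), ∀ b ∈ range (s + 2) \ range (m + 1),
        s + 1 - a = s + 1 - b → a = b := by
      intro a ha b hb hab
      have ha' := Finset.mem_sdiff.1 ha
      have hb' := Finset.mem_sdiff.1 hb
      simp only [Finset.mem_range] at ha' hb'
      omega
    calc ∑ k ∈ range (s + 2) \ range (m + 1), genBinom p k * (x ^ (k:ℝ) * y ^ (p - (k:ℝ)))
        ≤ ∑ k ∈ range (s + 2) \ range (m + 1),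
            genBinom p (s + 1 - k) * (x ^ (p - ((s + 1 - k : ℕ) : ℝ)) * y ^ ((s + 1 - k : ℕ) : ℝ)) :=
          Finset.sum_le_sum hterm
      _ = ∑ j ∈ (range (s + 2) \ range (m + 1)).image (fun k => s + 1 - k),
            genBinom p j * (x ^ (p - (j:ℝ)) * y ^ (j:ℝ)) := by rw [Finset.sum_image hinj]
      _ ≤ ∑ j ∈ range (m + 1), genBinom p j * (x ^ (p - (j:ℝ)) * y ^ (j:ℝ)) := by
          apply Finset.sum_le_sum_of_subset_of_nonneg
          · intro j hj
            simp only [Finset.mem_image, Finset.mem_sdiff, Finset.mem_range] at hj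
            obtain ⟨k, ⟨hk1, hk2⟩, rfl⟩ := hj
            simp only [Finset.mem_range]
            omega
          · intro j hj _
            have hj' : j ≤ m := by
              have := Finset.mem_range.1 hj; omega
            have hjr : (j : ℝ) ≤ m := by exact_mod_cast hj'
            have hmr : (m : ℝ) ≤ s := by exact_mod_cast hms
            have := genBinom_nonneg (show (j:ℝ) ≤ p + 1 by linarith)
            positivity
  calc (x + y) ^ p
      ≤ ∑ k ∈ range (s + 2), genBinom p k * (x ^ (k:ℝ) * y ^ (p - (k:ℝ))) :=
        taylor_upper2 (s + 1) p (by push_cast; linarith) (by push_cast; linarith) hx hy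
    _ = (∑ k ∈ range (m + 1), genBinom p k * (x ^ (k:ℝ) * y ^ (p - (k:ℝ))))
        + ∑ k ∈ range (s + 2) \ range (m + 1), genBinom p k * (x ^ (k:ℝ) * y ^ (p - (k:ℝ))) := by
        rw [← Finset.sum_sdiff hsub]
        ring
    _ ≤ (∑ k ∈ range (m + 1), genBinom p k * (x ^ (k:ℝ) * y ^ (p - (k:ℝ))))
        + ∑ j ∈ range (m + 1), genBinom p j * (x ^ (p - (j:ℝ)) * y ^ (j:ℝ)) :=
        add_le_add_right hS2 _
    _ = ∑ k ∈ Finset.range (m + 1),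
        genBinom p k * (x ^ (k : ℝ) * y ^ (p - k) + x ^ (p - k) * y ^ (k : ℝ)) := by
        rw [← Finset.sum_add_distrib]
        exact Finset.sum_congr rfl fun k _ => by ring
end main

lemma sum_zero_case (p : ℝ) (hp : 1 ≤ p) (n : ℕ) :
    ∑ k ∈ Finset.range n,
        genBinom p k * ((0:ℝ) ^ (k : ℝ) * (0:ℝ) ^ (p - k) + (0:ℝ) ^ (p - k) * (0:ℝ) ^ (k : ℝ))
      = 0 := by
  apply Finset.sum_eq_zero
  intro k _
  have hz : ∀ a b : ℝ, a + b = p → (0:ℝ) ^ a * (0:ℝ) ^ b = 0 := by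
    intro a b hab
    rcases eq_or_ne a 0 with rfl | ha
    · have hb : b ≠ 0 := by intro h; rw [h] at hab; linarith
      rw [Real.zero_rpow hb, mul_zero]
    · rw [Real.zero_rpow ha, zero_mul]
  rw [hz (k:ℝ) (p - k) (by ring), hz (p - k) (k:ℝ) (by ring)]
  ring

lemma sum_symm (p x y : ℝ) (n : ℕ) :
    ∑ k ∈ Finset.range n,
        genBinom p k * (y ^ (k : ℝ) * x ^ (p - k) + y ^ (p - k) * x ^ (k : ℝ))
      = ∑ k ∈ Finset.range n,
        genBinom p k * (x ^ (k : ℝ) * y ^ (p - k) + x ^ (p - k) * y ^ (k : ℝ)) :=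
  Finset.sum_congr rfl fun k _ => by ring

/-- **Lemma 3.1, fractional binomial expansion.** For real `p ≥ 1`,
`k_p = ⌊(p+1)/2⌋` and all `x, y ≥ 0`:
`Σ_{k=0}^{k_p-1} C(p,k)(x^k y^{p-k} + x^{p-k} y^k) ≤ (x+y)^p
  ≤ Σ_{k=0}^{k_p} C(p,k)(x^k y^{p-k} + x^{p-k} y^k)`. -/
theorem fractional_binomial_expansion (p : ℝ) (hp : 1 ≤ p) (x y : ℝ)
    (hx : 0 ≤ x) (hy : 0 ≤ y) :
    (∑ k ∈ Finset.range ⌊(p + 1) / 2⌋₊,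
        genBinom p k * (x ^ (k : ℝ) * y ^ (p - k) + x ^ (p - k) * y ^ (k : ℝ)))
      ≤ (x + y) ^ p
    ∧ (x + y) ^ p ≤
      ∑ k ∈ Finset.range (⌊(p + 1) / 2⌋₊ + 1),
        genBinom p k * (x ^ (k : ℝ) * y ^ (p - k) + x ^ (p - k) * y ^ (k : ℝ)) := by
  rcases le_total x y with hxy | hxy
  · rcases eq_or_lt_of_le hy with h0 | hypos
    · -- y = 0, hence x = 0
      have hx0 : x = 0 := le_antisymm (by rw [← h0] at hxy; exact hxy) hx
      subst hx0
      rw [← h0]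
      have h00 : ((0:ℝ) + 0) ^ p = 0 := by
        rw [add_zero]
        exact Real.zero_rpow (by linarith)
      constructor
      · rw [h00, sum_zero_case p hp]
      · rw [h00, sum_zero_case p hp]
    · exact ⟨main_lower hp hx hxy hypos, main_upper hp hx hxy hypos⟩
  · rcases eq_or_lt_of_le hx with h0 | hxpos
    · -- x = 0, hence y = 0
      have hy0 : y = 0 := le_antisymm (by rw [← h0] at hxy; exact hxy) hy
      subst hy0
      rw [← h0]
      have h00 : ((0:ℝ) + 0) ^ p = 0 := by
        rw [add_zero]
        exact Real.zero_rpow (by linarith)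
      constructor
      · rw [h00, sum_zero_case p hp]
      · rw [h00, sum_zero_case p hp]
    · have h1 := main_lower hp hy hxy hxpos
      have h2 := main_upper hp hy hxy hxpos
      rw [sum_symm, add_comm y x] at h1 h2
      exact ⟨h1, h2⟩
end

section
/- Let 0 < α < ∞ and 0 < R < ∞, let g : [0,R] → ℝ be continuous, and let S : [0,R] → ℝ be continuously differentiable with S(0) = 0 and S'(x) < 0 for all x ∈ [0,R). Then lim_{λ→∞} ( (−λ S'(0))^α / Γ(α) ) · ∫₀^R x^{α−1} g(x) e^{λ S(x)} dx = g(0); equivalently, ∫₀^R x^{α−1} g(x) e^{λ S(x)} dx = Γ(α) (−λ S'(0))^{−α} (g(0) + o(1)) as λ → ∞. -/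
open Real Filter intervalIntegral

/-- **Lemma 3.2, a stationary phase result.** Let `0 < α`, `0 < R`,
`g` continuous on `[0,R]`, `S` continuously differentiable on `[0,R]` with `S(0) = 0`
and `S'(x) < 0` on `[0,R)`. Then
`((-λ S'(0))^α / Γ(α)) ∫₀^R x^{α-1} g(x) e^{λ S(x)} dx → g(0)` as `λ → ∞`. -/
theorem stationary_phase_boundary (α R : ℝ) (hα : 0 < α) (hR : 0 < R)
    (g S S' : ℝ → ℝ)
    (hg : ContinuousOn g (Set.Icc 0 R))
    (hS : ∀ x ∈ Set.Icc 0 R, HasDerivWithinAt S (S' x) (Set.Icc 0 R) x)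
    (hS' : ContinuousOn S' (Set.Icc 0 R))
    (hS0 : S 0 = 0) (hSneg : ∀ x ∈ Set.Ico 0 R, S' x < 0) :
    Tendsto (fun lam : ℝ =>
        ((-lam * S' 0) ^ α / Real.Gamma α) *
          ∫ x in (0:ℝ)..R, x ^ (α - 1) * g x * Real.exp (lam * S x))
      atTop (nhds (g 0)) := by
  have h0R : (0:ℝ) ∈ Set.Icc 0 R := ⟨le_refl 0, hR.le⟩
  have hcpos : (0:ℝ) < -S' 0 := by have := hSneg 0 ⟨le_refl 0, hR⟩; linarith
  set c : ℝ := -S' 0 with hc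
  have hScont : ContinuousOn S (Set.Icc 0 R) := fun x hx => (hS x hx).continuousWithinAt
  -- S is strictly decreasing
  have hanti : StrictAntiOn S (Set.Icc 0 R) := by
    apply strictAntiOn_of_deriv_neg (convex_Icc 0 R) hScont
    intro x hx
    rw [interior_Icc] at hx
    have hD : HasDerivAt S (S' x) x :=
      (hS x (Set.Ioo_subset_Icc_self hx)).hasDerivAt (Icc_mem_nhds hx.1 hx.2)
    rw [hD.deriv]
    exact hSneg x ⟨hx.1.le, hx.2⟩
  have hSlt : ∀ x ∈ Set.Ioc 0 R, S x < 0 := by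
    intro x hx
    have := hanti h0R ⟨hx.1.le, hx.2⟩ hx.1
    rwa [hS0] at this
  -- the slope function φ
  set φ : ℝ → ℝ := fun x => if x = 0 then S' 0 else S x / x with hφdef
  have hφ0 : φ 0 = S' 0 := if_pos rfl
  have hφval : ∀ x, S x = x * φ x := by
    intro x
    by_cases h : x = 0
    · subst h; simp [hφdef, hS0]
    · simp only [hφdef, if_neg h]; field_simp
  have hφcont : ContinuousOn φ (Set.Icc 0 R) := by
    intro x hx
    rcases eq_or_ne x 0 with rfl | hx0
    · rw [← continuousWithinAt_diff_self]
      have h1 : Tendsto (slope S 0) (nhdsWithin 0 (Set.Icc 0 R \ {0})) (nhds (S' 0)) :=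
        hasDerivWithinAt_iff_tendsto_slope.mp (hS 0 h0R)
      have h2 : ∀ᶠ y in nhdsWithin 0 (Set.Icc 0 R \ {0}), slope S 0 y = φ y := by
        filter_upwards [self_mem_nhdsWithin] with y hy
        have hy2 : y ≠ 0 := fun h => hy.2 (by simp [h])
        simp [slope_def_field, hφdef, if_neg hy2, hS0]
      have h3 : Tendsto φ (nhdsWithin 0 (Set.Icc 0 R \ {0})) (nhds (S' 0)) :=
        h1.congr' h2
      rw [ContinuousWithinAt, hφ0]
      exact h3
    · have h1 : ContinuousWithinAt (fun y => S y / y) (Set.Icc 0 R) x :=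
        (hScont x hx).div continuousWithinAt_id hx0
      apply h1.congr_of_eventuallyEq
      · filter_upwards [(eventually_ne_nhds hx0).filter_mono nhdsWithin_le_nhds] with y hy
        simp [hφdef, if_neg hy]
      · simp [hφdef, if_neg hx0]
  obtain ⟨x₀, hx₀mem, hx₀max⟩ :=
    isCompact_Icc.exists_isMaxOn (Set.nonempty_Icc.mpr hR.le) hφcont
  have hφx₀neg : φ x₀ < 0 := by
    rcases eq_or_ne x₀ 0 with rfl | h
    · rw [hφ0]; linarith
    · have hx₀pos : 0 < x₀ := lt_of_le_of_ne hx₀mem.1 (Ne.symm h)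
      simp only [hφdef, if_neg h]
      exact div_neg_of_neg_of_pos (hSlt x₀ ⟨hx₀pos, hx₀mem.2⟩) hx₀pos
  set b : ℝ := -φ x₀ with hb
  have hbpos : 0 < b := by simp only [hb]; linarith
  have hSle : ∀ x ∈ Set.Icc 0 R, S x ≤ -(b * x) := by
    intro x hx
    have h1 : φ x ≤ φ x₀ := hx₀max hx
    have h2 := hφval x
    nlinarith [hx.1]
  -- bound for g
  obtain ⟨M, hM⟩ := isCompact_Icc.exists_bound_of_continuousOn hg
  have hM0 : 0 ≤ M := le_trans (norm_nonneg _) (hM 0 h0R)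
  -- family of integrands after substitution x = t / lam
  set F : ℝ → ℝ → ℝ := fun lam t => Set.indicator (Set.Ioc 0 (lam * R))
      (fun t => t ^ (α - 1) * g (t / lam) * Real.exp (lam * S (t / lam))) t with hF
  set bound : ℝ → ℝ := fun t => M * (t ^ (α - 1) * Real.exp (-(b * t))) with hbound
  set L : ℝ → ℝ := fun t => t ^ (α - 1) * g 0 * Real.exp (-(c * t)) with hL
  -- dominated convergence
  have hmain : Tendsto (fun lam => ∫ t in Set.Ioi (0:ℝ), F lam t) atTop
      (nhds (∫ t in Set.Ioi (0:ℝ), L t)) := by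
    apply MeasureTheory.tendsto_integral_filter_of_dominated_convergence bound
    · -- measurability
      filter_upwards [eventually_gt_atTop (0:ℝ)] with lam hlam
      apply (aestronglyMeasurable_indicator_iff measurableSet_Ioc).mpr
      rw [MeasureTheory.Measure.restrict_restrict measurableSet_Ioc,
        Set.inter_eq_left.mpr Set.Ioc_subset_Ioi_self]
      apply ContinuousOn.aestronglyMeasurable _ measurableSet_Ioc
      have hmaps : Set.MapsTo (fun t : ℝ => t / lam) (Set.Ioc 0 (lam * R)) (Set.Icc 0 R) := by
        intro t ht
        exact ⟨div_nonneg ht.1.le hlam.le, (div_le_iff₀ hlam).mpr (by linarith [ht.2])⟩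
      have hdiv : ContinuousOn (fun t : ℝ => t / lam) (Set.Ioc 0 (lam * R)) :=
        (continuous_id.div_const lam).continuousOn
      have h1 : ContinuousOn (fun t : ℝ => t ^ (α - 1)) (Set.Ioc 0 (lam * R)) := by
        intro t ht
        exact (Real.continuousAt_rpow_const t (α - 1) (Or.inl (ne_of_gt ht.1))).continuousWithinAt
      have h2 : ContinuousOn (fun t : ℝ => g (t / lam)) (Set.Ioc 0 (lam * R)) :=
        hg.comp hdiv hmaps
      have h3 : ContinuousOn (fun t : ℝ => Real.exp (lam * S (t / lam))) (Set.Ioc 0 (lam * R)) :=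
        Real.continuous_exp.comp_continuousOn (continuousOn_const.mul (hScont.comp hdiv hmaps))
      exact (h1.mul h2).mul h3
    · -- domination
      filter_upwards [eventually_gt_atTop (0:ℝ)] with lam hlam
      filter_upwards [MeasureTheory.ae_restrict_mem measurableSet_Ioi] with t ht
      by_cases hmem : t ∈ Set.Ioc 0 (lam * R)
      · rw [hF]
        simp only
        rw [Set.indicator_of_mem hmem]
        have htR : t / lam ∈ Set.Icc 0 R :=
          ⟨div_nonneg hmem.1.le hlam.le, (div_le_iff₀ hlam).mpr (by linarith [hmem.2])⟩
        have h1 : Real.exp (lam * S (t / lam)) ≤ Real.exp (-(b * t)) := by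
          apply Real.exp_le_exp.mpr
          have h2 := hSle _ htR
          have h3 : lam * S (t / lam) ≤ lam * (-(b * (t / lam))) :=
            mul_le_mul_of_nonneg_left h2 hlam.le
          have h4 : lam * (-(b * (t / lam))) = -(b * t) := by field_simp
          linarith
        have hta : (0:ℝ) ≤ t ^ (α - 1) := Real.rpow_nonneg (le_of_lt ht) _
        have hgb : ‖g (t / lam)‖ ≤ M := hM _ htR
        rw [norm_mul, norm_mul, Real.norm_eq_abs (t ^ (α - 1)),
          abs_of_nonneg hta, Real.norm_eq_abs (Real.exp _), abs_of_nonneg (Real.exp_pos _).le]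
        calc t ^ (α - 1) * ‖g (t / lam)‖ * Real.exp (lam * S (t / lam))
            ≤ t ^ (α - 1) * M * Real.exp (-(b * t)) := by
              gcongr <;> first | exact (Real.exp_pos _).le | exact h1
          _ = M * (t ^ (α - 1) * Real.exp (-(b * t))) := by ring
      · rw [hF]
        simp only
        rw [Set.indicator_of_notMem hmem, norm_zero, hbound]
        have : (0:ℝ) ≤ t ^ (α - 1) := Real.rpow_nonneg (le_of_lt ht) _
        positivity
    · -- bound integrable
      have h1 : MeasureTheory.IntegrableOn
          (fun x : ℝ => Real.exp (-(b * x)) * (b * x) ^ (α - 1)) (Set.Ioi 0) := by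
        have h2 := (MeasureTheory.integrableOn_Ioi_comp_mul_left_iff
          (fun x : ℝ => Real.exp (-x) * x ^ (α - 1)) 0 hbpos).mpr
        simp only [mul_zero] at h2
        exact h2 (Real.GammaIntegral_convergent hα)
      have h3 : MeasureTheory.IntegrableOn
          (fun x : ℝ => M * (b ^ (α - 1))⁻¹ * (Real.exp (-(b * x)) * (b * x) ^ (α - 1)))
          (Set.Ioi 0) := h1.const_mul _
      apply h3.congr_fun _ measurableSet_Ioi
      intro x hx
      have hx0 : (0:ℝ) < x := hx
      show M * (b ^ (α - 1))⁻¹ * (Real.exp (-(b * x)) * (b * x) ^ (α - 1))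
          = M * (x ^ (α - 1) * Real.exp (-(b * x)))
      rw [Real.mul_rpow hbpos.le hx0.le]
      have hbne : b ^ (α - 1) ≠ 0 := ne_of_gt (Real.rpow_pos_of_pos hbpos _)
      field_simp
    · -- pointwise limit
      filter_upwards [MeasureTheory.ae_restrict_mem measurableSet_Ioi] with t ht
      have ht0 : (0:ℝ) < t := ht
      have htend0 : Tendsto (fun lam : ℝ => t / lam) atTop (nhds 0) :=
        tendsto_const_nhds.div_atTop tendsto_id
      have hev : ∀ᶠ lam in atTop, t / lam ∈ Set.Icc 0 R ∧ t ∈ Set.Ioc 0 (lam * R) ∧ lam ≠ 0 := by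
        filter_upwards [eventually_ge_atTop (t / R), eventually_gt_atTop (0:ℝ)] with lam h1 h2
        have htl : t ≤ lam * R := by
          rw [div_le_iff₀ hR] at h1; linarith
        exact ⟨⟨by positivity, (div_le_iff₀ h2).mpr (by linarith)⟩, ⟨ht0, htl⟩, ne_of_gt h2⟩
      have htendw : Tendsto (fun lam : ℝ => t / lam) atTop (nhdsWithin 0 (Set.Icc 0 R)) :=
        tendsto_nhdsWithin_iff.mpr ⟨htend0, hev.mono fun lam h => h.1⟩
      have hgt : Tendsto (fun lam : ℝ => g (t / lam)) atTop (nhds (g 0)) :=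
        (hg 0 h0R).tendsto.comp htendw
      have hφt : Tendsto (fun lam : ℝ => φ (t / lam)) atTop (nhds (-c)) := by
        have h1 := (hφcont 0 h0R).tendsto.comp htendw
        rw [hφ0] at h1
        have : S' 0 = -c := by rw [hc, neg_neg]
        rwa [this] at h1
      have hexp : Tendsto (fun lam : ℝ => Real.exp (lam * S (t / lam))) atTop
          (nhds (Real.exp (-(c * t)))) := by
        have h1 : Tendsto (fun lam : ℝ => t * φ (t / lam)) atTop (nhds (t * -c)) :=
          hφt.const_mul t
        have h2 : (fun lam : ℝ => t * φ (t / lam)) =ᶠ[atTop]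
            (fun lam : ℝ => lam * S (t / lam)) := by
          filter_upwards [hev] with lam hl
          have hx : lam * (t / lam) = t := by
            rw [← mul_div_assoc, mul_comm, mul_div_assoc, div_self hl.2.2, mul_one]
          rw [hφval (t / lam), ← mul_assoc, hx]
        have h3 := (Real.continuous_exp.tendsto (t * -c)).comp (h1.congr' h2)
        have h4 : t * -c = -(c * t) := by ring
        rw [h4] at h3
        exact h3
      have hFeq : (fun lam : ℝ => t ^ (α - 1) * g (t / lam) * Real.exp (lam * S (t / lam)))
          =ᶠ[atTop] (fun lam : ℝ => F lam t) := by
        filter_upwards [hev] with lam hl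
        rw [hF]
        simp only
        rw [Set.indicator_of_mem hl.2.1]
      apply Tendsto.congr' hFeq
      exact (tendsto_const_nhds.mul hgt).mul hexp
  -- value of the limit integral
  have hLint : ∫ t in Set.Ioi (0:ℝ), L t = g 0 * ((1 / c) ^ α * Real.Gamma α) := by
    have h1 : L = fun t => g 0 * (t ^ (α - 1) * Real.exp (-(c * t))) := by
      funext t; rw [hL]; ring
    rw [h1, MeasureTheory.integral_const_mul, Real.integral_rpow_mul_exp_neg_mul_Ioi hα hcpos]
  -- multiply by the constant
  have hfinal : Tendsto (fun lam => (c ^ α / Real.Gamma α) * ∫ t in Set.Ioi (0:ℝ), F lam t)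
      atTop (nhds (g 0)) := by
    have h1 := hmain.const_mul (c ^ α / Real.Gamma α)
    rw [hLint] at h1
    have hΓ : Real.Gamma α ≠ 0 := ne_of_gt (Real.Gamma_pos_of_pos hα)
    have hcα : c ^ α ≠ 0 := ne_of_gt (Real.rpow_pos_of_pos hcpos α)
    have h2 : c ^ α / Real.Gamma α * (g 0 * ((1 / c) ^ α * Real.Gamma α)) = g 0 := by
      rw [one_div, Real.inv_rpow hcpos.le]
      field_simp
    rwa [h2] at h1
  -- identify the two expressions for large lam
  apply Filter.Tendsto.congr' _ hfinal
  filter_upwards [eventually_gt_atTop (0:ℝ)] with lam hlam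
  have hlamne : lam ≠ 0 := ne_of_gt hlam
  have e1 : ∫ t in Set.Ioi (0:ℝ), F lam t
      = ∫ t in (0:ℝ)..(lam * R), t ^ (α - 1) * g (t / lam) * Real.exp (lam * S (t / lam)) := by
    rw [hF]
    simp only
    rw [MeasureTheory.setIntegral_indicator measurableSet_Ioc,
      Set.inter_eq_right.mpr Set.Ioc_subset_Ioi_self,
      intervalIntegral.integral_of_le (by positivity : (0:ℝ) ≤ lam * R)]
  have e2 : ∀ t ∈ Set.uIcc (0:ℝ) (lam * R),
      t ^ (α - 1) * g (t / lam) * Real.exp (lam * S (t / lam))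
      = lam ^ (α - 1) * ((t / lam) ^ (α - 1) * g (t / lam) * Real.exp (lam * S (t / lam))) := by
    intro t htm
    rw [Set.uIcc_of_le (by positivity : (0:ℝ) ≤ lam * R)] at htm
    have ht0 : 0 ≤ t := htm.1
    have h1 : t = lam * (t / lam) := by field_simp
    have h2 : t ^ (α - 1) = lam ^ (α - 1) * (t / lam) ^ (α - 1) := by
      conv_lhs => rw [h1]
      exact Real.mul_rpow hlam.le (by positivity)
    rw [h2]; ring
  have e3 : ∫ t in (0:ℝ)..(lam * R), t ^ (α - 1) * g (t / lam) * Real.exp (lam * S (t / lam))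
      = lam ^ (α - 1) * (lam * ∫ x in (0:ℝ)..R, x ^ (α - 1) * g x * Real.exp (lam * S x)) := by
    rw [intervalIntegral.integral_congr e2, intervalIntegral.integral_const_mul]
    congr 1
    have h1 := intervalIntegral.integral_comp_div (a := 0) (b := lam * R) (c := lam)
      (fun x => x ^ (α - 1) * g x * Real.exp (lam * S x)) hlamne
    rw [h1, zero_div, mul_div_cancel_left₀ _ hlamne, smul_eq_mul]
  have e4 : lam ^ (α - 1) * lam = lam ^ α := by
    rw [← Real.rpow_add_one hlamne (α - 1)]
    norm_num
  have e5 : (-lam * S' 0) ^ α = lam ^ α * c ^ α := by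
    have : -lam * S' 0 = lam * c := by rw [hc]; ring
    rw [this, Real.mul_rpow hlam.le hcpos.le]
  set I : ℝ := ∫ x in (0:ℝ)..R, x ^ (α - 1) * g x * Real.exp (lam * S x) with hI
  rw [e1, e3, e5]
  rw [show lam ^ (α - 1) * (lam * I) = lam ^ α * I by rw [← mul_assoc, e4]]
  ring
end

section
/- For every real number p ≥ 3, with k_p := ⌊(p+1)/2⌋, one has Σ_{k=1}^{k_p} C(p,k) B(k, p−k) ≤ 4 log p. -/
open Real Finset

/-- The Beta function `B(x,y) = ∫₀¹ t^{x-1} (1-t)^{y-1} dt`. -/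
noncomputable def betaFn (x y : ℝ) : ℝ :=
  ∫ t in (0:ℝ)..1, t ^ (x - 1) * (1 - t) ^ (y - 1)

lemma betaFn_eq_complex (x y : ℝ) :
    ((betaFn x y : ℝ) : ℂ) = Complex.betaIntegral x y := by
  rw [betaFn, Complex.betaIntegral, ← intervalIntegral.integral_ofReal]
  refine intervalIntegral.integral_congr fun t ht => ?_
  rw [Set.uIcc_of_le (by norm_num : (0:ℝ) ≤ 1)] at ht
  obtain ⟨h0, h1⟩ := ht
  push_cast
  rw [show ((x:ℂ) - 1) = ((x - 1 : ℝ) : ℂ) by push_cast; ring,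
    show ((y:ℂ) - 1) = ((y - 1 : ℝ) : ℂ) by push_cast; ring,
    show (1 - (t:ℂ)) = ((1 - t : ℝ) : ℂ) by push_cast; ring,
    ← Complex.ofReal_cpow h0, ← Complex.ofReal_cpow (by linarith : (0:ℝ) ≤ 1 - t)]

lemma betaFn_nat_eval (p : ℝ) (k : ℕ) (hk : 1 ≤ k) (hkp : (k : ℝ) < p) :
    betaFn (k : ℝ) (p - k) =
      (Nat.factorial (k - 1)) / ∏ j ∈ Finset.range k, (p - k + j) := by
  have hpk : (0:ℝ) < p - k := by linarith
  have h1 : ((betaFn (k : ℝ) (p - k) : ℝ) : ℂ) = Complex.betaIntegral (k : ℝ) ((p - k : ℝ)) :=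
    betaFn_eq_complex _ _
  rw [Complex.betaIntegral_symm] at h1
  have hk' : ((k : ℝ) : ℂ) = ((k - 1 : ℕ) : ℂ) + 1 := by
    push_cast [Nat.cast_sub hk]
    ring
  rw [hk', Complex.betaIntegral_eval_nat_add_one_right (by simpa using hpk) (k-1),
    Nat.sub_add_cancel hk] at h1
  have h2 : ((Nat.factorial (k-1) : ℂ)) / ∏ j ∈ Finset.range k, (((p - k : ℝ):ℂ) + j)
      = (((Nat.factorial (k - 1)) / ∏ j ∈ Finset.range k, (p - k + j) : ℝ) : ℂ) := by
    push_cast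
    ring
  rw [h2] at h1
  exact_mod_cast h1

lemma term_eq (p : ℝ) (k : ℕ) (hk : 1 ≤ k) (hkp : (k : ℝ) < p) :
    genBinom p k * betaFn (k : ℝ) (p - k) = p / (k * (p - k)) := by
  obtain ⟨m, rfl⟩ : ∃ m, k = m + 1 := ⟨k - 1, (Nat.succ_pred_eq_of_pos hk).symm⟩
  rw [betaFn_nat_eval p (m+1) hk hkp, genBinom, Nat.add_sub_cancel]
  have hm : ((m:ℝ) + 1) < p := by exact_mod_cast hkp
  have hA : ∀ i ∈ Finset.range m, (0:ℝ) < p - 1 - i := by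
    intro i hi
    have hi' : (i:ℝ) ≤ (m:ℝ) - 1 := by
      have := Finset.mem_range.mp hi
      have : (i:ℝ) + 1 ≤ m := by exact_mod_cast this
      linarith
    linarith
  set A := ∏ i ∈ Finset.range m, (p - 1 - i) with hAdef
  have hApos : 0 < A := Finset.prod_pos hA
  have h1 : ∏ i ∈ Finset.range (m+1), (p - i) = p * A := by
    rw [Finset.prod_range_succ']
    simp only [Nat.cast_zero, sub_zero]
    rw [mul_comm]
    congr 1
    exact Finset.prod_congr rfl fun i _ => by push_cast; ring
  have h2 : (∏ j ∈ Finset.range (m+1), (p - (↑(m+1):ℝ) + j)) = A * (p - ((m:ℝ)+1)) := by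
    rw [← Finset.prod_range_reflect (fun j : ℕ => p - (↑(m+1):ℝ) + j) (m+1),
      Finset.prod_range_succ]
    have e1 : ∀ j ∈ Finset.range m, p - (↑(m+1):ℝ) + ↑(m+1-1-j) = p - 1 - j := by
      intro j hj
      have hj' : j ≤ m := Nat.le_of_lt (Finset.mem_range.mp hj)
      rw [Nat.add_sub_cancel, Nat.cast_sub hj']
      push_cast; ring
    rw [Finset.prod_congr rfl e1, ← hAdef]
    simp only [Nat.add_sub_cancel, Nat.sub_self, Nat.cast_zero, add_zero]
    push_cast
    ring
  rw [h1, h2]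
  have hfac : (Nat.factorial (m+1) : ℝ) = ((m:ℝ)+1) * Nat.factorial m := by
    rw [Nat.factorial_succ]; push_cast; ring
  have hfm : (Nat.factorial m : ℝ) ≠ 0 := by positivity
  have hpk : p - ((m:ℝ)+1) ≠ 0 := by linarith
  have hm0 : ((m:ℝ)+1) ≠ 0 := by positivity
  rw [hfac]
  push_cast
  field_simp

/-- **Lemma 3.3, first estimate.** For every real `p ≥ 3`, with
`k_p = ⌊(p+1)/2⌋`, one has `Σ_{k=1}^{k_p} C(p,k) B(k, p-k) ≤ 4 log p`. -/
theorem beta_binomial_sum_log_bound (p : ℝ) (hp : 3 ≤ p) :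
    ∑ k ∈ Finset.Icc 1 ⌊(p + 1) / 2⌋₊, genBinom p k * betaFn (k : ℝ) (p - k)
      ≤ 4 * Real.log p := by
  set m := ⌊(p + 1) / 2⌋₊ with hm
  have hp0 : 0 < p := by linarith
  have hmle : (m:ℝ) ≤ (p+1)/2 := Nat.floor_le (by linarith)
  have hsum : ∑ k ∈ Finset.Icc 1 m, genBinom p k * betaFn (k : ℝ) (p - k)
      = ∑ k ∈ Finset.Icc 1 m, (1/(k:ℝ) + 1/(p-k)) := by
    refine Finset.sum_congr rfl fun k hk => ?_
    obtain ⟨hk1, hk2⟩ := Finset.mem_Icc.mp hk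
    have hk2' : (k:ℝ) ≤ (p+1)/2 := le_trans (Nat.cast_le.mpr hk2) hmle
    have hkp : (k:ℝ) < p := by linarith
    have hk0 : (0:ℝ) < k := by exact_mod_cast hk1
    rw [term_eq p k hk1 hkp,
      div_add_div _ _ (ne_of_gt hk0) (ne_of_gt (by linarith : (0:ℝ) < p - k))]
    congr 1
    ring
  rw [hsum, Finset.sum_add_distrib]
  have hH : ∑ k ∈ Finset.Icc 1 m, 1/(k:ℝ) ≤ 1 + Real.log m := by
    have h1 := harmonic_le_one_add_log m
    have he : (harmonic m : ℝ) = ∑ k ∈ Finset.Icc 1 m, 1/(k:ℝ) := by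
      rw [harmonic_eq_sum_Icc]
      push_cast
      simp [one_div]
    linarith [he ▸ h1]
  have hm2 : 2 ≤ m := by
    apply Nat.le_floor
    push_cast
    linarith
  have hm1 : (1:ℝ) ≤ m := by exact_mod_cast Nat.one_le_of_lt hm2
  have hlogm : Real.log m ≤ Real.log p := by
    apply Real.log_le_log (by linarith)
    linarith
  have hS2 : ∑ k ∈ Finset.Icc 1 m, 1/(p-(k:ℝ)) ≤ 2 := by
    calc ∑ k ∈ Finset.Icc 1 m, 1/(p-(k:ℝ))
        ≤ ∑ _k ∈ Finset.Icc 1 m, 2/(p-1) := by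
          refine Finset.sum_le_sum fun k hk => ?_
          obtain ⟨hk1, hk2⟩ := Finset.mem_Icc.mp hk
          have hk2' : (k:ℝ) ≤ (p+1)/2 := le_trans (Nat.cast_le.mpr hk2) hmle
          rw [div_le_div_iff₀ (by linarith) (by linarith)]
          linarith
      _ = (m:ℝ) * (2/(p-1)) := by
          rw [Finset.sum_const, Nat.card_Icc, Nat.add_sub_cancel, nsmul_eq_mul]
      _ ≤ ((p+1)/2) * (2/(p-1)) := by
          apply mul_le_mul_of_nonneg_right hmle
          have : (0:ℝ) < p - 1 := by linarith
          positivity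
      _ ≤ 2 := by
          rw [div_mul_div_comm, div_le_iff₀ (by linarith : (0:ℝ) < 2*(p-1))]
          linarith
  have hlog1 : (1:ℝ) ≤ Real.log p := by
    rw [← Real.log_exp 1]
    apply Real.log_le_log (Real.exp_pos 1)
    linarith [Real.exp_one_lt_d9]
  linarith
end

section
/- For every real number a > 1 there exists a finite constant C_a > 0, depending only on a, such that for every real number p ≥ 3, with k_p := ⌊(p+1)/2⌋, one has Σ_{k=0}^{k_p−1} C(p−2,k) B(a(k+1), a(p−k−1)) ≤ C_a (ap)^{−a}. -/
open Real Finset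

open intervalIntegral


lemma contRpow {e : ℝ} (he : 0 ≤ e) : Continuous fun t : ℝ => (1 - t) ^ e :=
  (Real.continuous_rpow_const he).comp (continuous_const.sub continuous_id)

lemma kernelCont {x y : ℝ} (hx : 1 ≤ x) (hy : 1 ≤ y) :
    Continuous fun t : ℝ => t ^ (x - 1) * (1 - t) ^ (y - 1) :=
  (Real.continuous_rpow_const (by linarith)).mul (contRpow (by linarith))

lemma descCast (m : ℕ) : ∀ k : ℕ, k ≤ m → ∏ i ∈ range k, ((m : ℝ) - i) = (m.descFactorial k : ℝ) := by
  intro k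
  induction k with
  | zero => simp
  | succ k ih =>
    intro hk
    rw [Finset.prod_range_succ, ih (by omega), Nat.descFactorial_succ]
    have : ((m - k : ℕ) : ℝ) = (m : ℝ) - k := by
      rw [Nat.cast_sub (by omega)]
    rw [Nat.cast_mul, this]; ring

lemma exp_le_rpow_bound {A c p : ℝ} (hA : 0 < A) (hc : 0 < c) (hp : 0 < p) :
    Real.exp (-(c*p)) ≤ Real.exp (A*(Real.log (A/c) - 1)) * p ^ (-A) := by
  rw [Real.rpow_neg hp.le, Real.rpow_def_of_pos hp, ← Real.exp_neg, ← Real.exp_add]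
  apply Real.exp_le_exp.mpr
  have key : Real.log (p*(c/A)) ≤ p*(c/A) - 1 := Real.log_le_sub_one_of_pos (by positivity)
  have hlog : Real.log (p*(c/A)) = Real.log p - Real.log (A/c) := by
    rw [Real.log_mul hp.ne' (by positivity)]
    rw [show c/A = (A/c)⁻¹ by rw [inv_div], Real.log_inv]
    ring
  rw [hlog] at key
  have h2 := mul_le_mul_of_nonneg_left key hA.le
  have hA' : A ≠ 0 := hA.ne'
  field_simp at h2 ⊢
  nlinarith

-- pointwise bound on [1/2,1]
lemma region2_pointwise {a p x y t : ℝ} (ha : 1 < a) (hp : 3 ≤ p)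
    (hxy : x + y = a * p) (hx1 : a ≤ x) (hy1 : a * (p-1) / 2 ≤ y)
    (ht : t ∈ Set.Icc (1/2 : ℝ) 1) :
    t ^ (x-1) * (1-t) ^ (y-1) ≤ 4 * 2 ^ a * (1/2 : ℝ) ^ (a*p) := by
  obtain ⟨ht1, ht2⟩ := ht
  have ha0 : (0:ℝ) < a := by linarith
  have hx : 1 < x := lt_of_lt_of_le ha hx1
  have hy : 1 < y := by nlinarith
  have ht0 : (0:ℝ) < t := by linarith
  have hbound : (0:ℝ) ≤ 4 * 2 ^ a * (1/2 : ℝ) ^ (a*p) := by positivity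
  rcases eq_or_lt_of_le ht2 with h1 | h1
  · subst h1
    rw [show (1:ℝ) - 1 = 0 by ring, Real.zero_rpow (by linarith : y - 1 ≠ 0)]
    simpa using hbound
  have hu0 : (0:ℝ) < 1 - t := by linarith
  have hu2 : 1 - t ≤ 1/2 := by linarith
  have htu : t * (1-t) ≤ 1/4 := by nlinarith
  have htu0 : (0:ℝ) ≤ t * (1-t) := by positivity
  have hhalf : ((1:ℝ)/4) = ((1:ℝ)/2) ^ (2:ℝ) := by
    rw [show (2:ℝ) = ((2:ℕ):ℝ) by norm_num, Real.rpow_natCast]; norm_num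
  rcases le_total x y with hxy2 | hxy2
  · -- x ≤ y
    have e1 : t ^ (x-1) * (1-t) ^ (y-1) = (t*(1-t)) ^ (x-1) * (1-t) ^ (y-x) := by
      rw [Real.mul_rpow ht0.le hu0.le, mul_assoc, ← Real.rpow_add hu0]
      ring_nf
    rw [e1]
    have b1 : (t*(1-t)) ^ (x-1) ≤ ((1:ℝ)/4) ^ (x-1) :=
      Real.rpow_le_rpow htu0 htu (by linarith)
    have b2 : (1-t) ^ (y-x) ≤ ((1:ℝ)/2) ^ (y-x) :=
      Real.rpow_le_rpow hu0.le hu2 (by linarith)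
    have := mul_le_mul b1 b2 (Real.rpow_nonneg hu0.le _) (by positivity)
    refine this.trans ?_
    rw [hhalf, ← Real.rpow_mul (by norm_num), ← Real.rpow_add (by norm_num : (0:ℝ) < 1/2)]
    rw [show 2*(x-1) + (y-x) = (a*p) + (-2) by rw [← hxy]; ring]
    rw [Real.rpow_add (by norm_num : (0:ℝ) < 1/2)]
    have h4 : ((1:ℝ)/2) ^ (-2:ℝ) = 4 := by
      rw [Real.rpow_neg (by norm_num), ← hhalf]; norm_num
    rw [h4]
    have h2a : (1:ℝ) ≤ 2 ^ a := Real.one_le_rpow (by norm_num) ha0.le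
    nlinarith [Real.rpow_nonneg (by norm_num : (0:ℝ) ≤ 1/2) (a*p)]
  · -- y ≤ x
    have e1 : t ^ (x-1) * (1-t) ^ (y-1) = (t*(1-t)) ^ (y-1) * t ^ (x-y) := by
      rw [Real.mul_rpow ht0.le hu0.le]
      rw [show t ^ (x-1) = t ^ (y-1) * t ^ (x-y) by rw [← Real.rpow_add ht0]; ring_nf]
      ring
    rw [e1]
    have b1 : (t*(1-t)) ^ (y-1) ≤ ((1:ℝ)/4) ^ (y-1) :=
      Real.rpow_le_rpow htu0 htu (by linarith)
    have b2 : t ^ (x-y) ≤ 1 := Real.rpow_le_one ht0.le ht2 (by linarith)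
    have hstep : (t*(1-t)) ^ (y-1) * t ^ (x-y) ≤ ((1:ℝ)/4) ^ (y-1) :=
      (mul_le_mul b1 b2 (Real.rpow_nonneg ht0.le _) (by positivity)).trans (by rw [mul_one])
    refine hstep.trans ?_
    rw [hhalf, ← Real.rpow_mul (by norm_num)]
    have hexp : a*p + (-(a+2)) ≤ 2*(y-1) := by nlinarith
    have hmono : ((1:ℝ)/2) ^ (2*(y-1)) ≤ ((1:ℝ)/2) ^ (a*p + (-(a+2))) :=
      Real.rpow_le_rpow_of_exponent_ge (by norm_num) (by norm_num) hexp
    refine hmono.trans ?_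
    rw [Real.rpow_add (by norm_num : (0:ℝ) < 1/2)]
    have h4 : ((1:ℝ)/2) ^ (-(a+2):ℝ) = 4 * 2 ^ a := by
      rw [Real.rpow_neg (by norm_num), one_div, Real.inv_rpow (by norm_num), inv_inv,
        Real.rpow_add (by norm_num : (0:ℝ) < 2)]
      rw [show ((2:ℝ) ^ (2:ℝ)) = 4 by
        rw [show (2:ℝ) = ((2:ℕ):ℝ) by norm_num, Real.rpow_natCast]; norm_num]
      ring
    rw [h4]; ring_nf; rfl

lemma region1_pointwise {a p : ℝ} (ha : 1 < a) (hp : 3 ≤ p) {m K : ℕ}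
    (hm1 : p - 2 ≤ m) (hm2 : (m:ℝ) ≤ p - 1) (hKm : K ≤ m + 1)
    {t : ℝ} (ht : t ∈ Set.Icc (0:ℝ) (1/2)) :
    ∑ k ∈ range K, (m.choose k : ℝ) * (t ^ (a*((k:ℝ)+1)-1) * (1-t) ^ (a*(p-(k:ℝ)-1)-1))
      ≤ 2 * t^(a-1) * Real.exp (-((1-(1/2:ℝ)^(a-1))/3 * p * t)) := by
  obtain ⟨ht0, ht2⟩ := ht
  have ha0 : (0:ℝ) < a := by linarith
  set b : ℝ := 1 - t with hb
  have hb0 : (0:ℝ) < b := by simp only [hb]; linarith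
  have hb1 : b ≤ 1 := by simp only [hb]; linarith
  set s : ℝ := (1/2:ℝ)^(a-1) with hs
  have hs0 : 0 < s := Real.rpow_pos_of_pos (by norm_num) _
  have hs1 : s < 1 := Real.rpow_lt_one (by norm_num) (by norm_num) (by linarith)
  -- step 1: per-term bound
  have step1 : ∀ k ∈ range K,
      (m.choose k : ℝ) * (t ^ (a*((k:ℝ)+1)-1) * b ^ (a*(p-(k:ℝ)-1)-1))
        ≤ 2 * t^(a-1) * ((m.choose k : ℝ) * (t^a)^k * (b^a)^(m-k)) := by
    intro k hk
    have hkm : k ≤ m := by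
      have := Finset.mem_range.mp hk; omega
    have hcast : ((m - k : ℕ) : ℝ) = (m:ℝ) - k := by rw [Nat.cast_sub hkm]
    rcases eq_or_lt_of_le ht0 with h0 | h0
    · -- t = 0
      rw [← h0]
      rw [Real.zero_rpow (by nlinarith : a*((k:ℝ)+1)-1 ≠ 0),
          Real.zero_rpow (by linarith : a - 1 ≠ 0)]
      simp
    · -- t > 0
      have e1 : t ^ (a*((k:ℝ)+1)-1) = t^(a-1) * (t^a)^k := by
        rw [← Real.rpow_natCast (t^a) k, ← Real.rpow_mul h0.le, ← Real.rpow_add h0]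
        congr 1; ring
      have e2 : b ^ (a*(p-(k:ℝ)-1)-1) ≤ 2 * (b^a)^(m-k) := by
        have e2a : b ^ (a*(p-(k:ℝ)-1)-1)
            = (b^a)^(m-k) * b ^ (a*(p-(k:ℝ)-1)-1 - a*((m:ℝ)-k)) := by
          rw [← Real.rpow_natCast (b^a) (m-k), ← Real.rpow_mul hb0.le, ← Real.rpow_add hb0,
            hcast]
          congr 1; ring
        rw [e2a]
        have h3 : b ^ (a*(p-(k:ℝ)-1)-1 - a*((m:ℝ)-k)) ≤ b ^ (-1:ℝ) := by
          apply Real.rpow_le_rpow_of_exponent_ge hb0 hb1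
          nlinarith
        have h4 : b ^ (-1:ℝ) ≤ 2 := by
          rw [Real.rpow_neg_one]
          rw [show (2:ℝ) = (1/2:ℝ)⁻¹ by norm_num]
          exact inv_anti₀ (by norm_num) (by simp only [hb]; linarith)
        have h5 : (0:ℝ) ≤ (b^a)^(m-k) := by positivity
        calc (b^a)^(m-k) * b ^ (a*(p-(k:ℝ)-1)-1 - a*((m:ℝ)-k))
            ≤ (b^a)^(m-k) * 2 := by
              exact mul_le_mul_of_nonneg_left (h3.trans h4) h5
          _ = 2 * (b^a)^(m-k) := by ring
      have base := mul_le_mul_of_nonneg_left e2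
        (show (0:ℝ) ≤ (m.choose k:ℝ) * (t^(a-1) * (t^a)^k) by positivity)
      refine le_trans (le_of_eq (by rw [e1]; ring))
        (le_trans base (le_of_eq (by ring)))
  have sum1 := Finset.sum_le_sum step1
  refine sum1.trans ?_
  rw [← Finset.mul_sum]
  -- step 2: binomial sum
  have step2 : ∑ k ∈ range K, (m.choose k : ℝ) * (t^a)^k * (b^a)^(m-k)
      ≤ (t^a + b^a)^m := by
    have hsub : range K ⊆ range (m+1) := Finset.range_subset_range.mpr hKm
    have hfull : ∑ k ∈ range (m+1), (m.choose k : ℝ) * (t^a)^k * (b^a)^(m-k)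
        = (t^a + b^a)^m := by
      rw [add_pow]
      apply Finset.sum_congr rfl
      intro k _; ring
    rw [← hfull]
    apply Finset.sum_le_sum_of_subset_of_nonneg hsub
    intro k _ _
    have := Real.rpow_nonneg ht0 a
    have := Real.rpow_nonneg hb0.le a
    positivity
  -- step 3: (t^a+b^a) ≤ 1 - (1-s)t
  have step3 : t^a + b^a ≤ 1 - (1-s)*t := by
    have h1 : t^a ≤ s * t := by
      rcases eq_or_lt_of_le ht0 with h0 | h0
      · rw [← h0, Real.zero_rpow (by linarith : a ≠ 0)]; simp
      · have e : t^a = t^(1:ℝ) * t^(a-1) := by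
          rw [← Real.rpow_add h0]; norm_num
        rw [Real.rpow_one] at e
        rw [e]
        have : t^(a-1) ≤ s := Real.rpow_le_rpow ht0 ht2 (by linarith)
        nlinarith
    have h2 : b^a ≤ b := by
      calc b^a ≤ b^(1:ℝ) := Real.rpow_le_rpow_of_exponent_ge hb0 hb1 (by linarith)
        _ = b := Real.rpow_one b
    simp only [hb] at h2 ⊢
    nlinarith
  have h1mst : (0:ℝ) ≤ 1 - (1-s)*t := by nlinarith
  have steppow : (t^a + b^a)^m ≤ (1 - (1-s)*t)^m := by
    apply pow_le_pow_left₀ _ step3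
    have := Real.rpow_nonneg ht0 a
    have := Real.rpow_nonneg hb0.le a
    positivity
  have stepexp : (1 - (1-s)*t)^m ≤ Real.exp (-((1-s)/3 * p * t)) := by
    have h1 : (1 - (1-s)*t) ≤ Real.exp (-((1-s)*t)) := by
      have := Real.add_one_le_exp (-((1-s)*t))
      linarith
    calc (1 - (1-s)*t)^m ≤ (Real.exp (-((1-s)*t)))^m := pow_le_pow_left₀ h1mst h1 m
      _ = Real.exp ((m:ℝ) * (-((1-s)*t))) := by rw [← Real.exp_nat_mul]
      _ ≤ Real.exp (-((1-s)/3 * p * t)) := by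
          apply Real.exp_le_exp.mpr
          have hm3 : p/3 ≤ (m:ℝ) := by linarith
          have hst : 0 ≤ (1-s)*t := by nlinarith
          nlinarith
  calc 2 * t^(a-1) * ∑ k ∈ range K, (m.choose k : ℝ) * (t^a)^k * (b^a)^(m-k)
      ≤ 2 * t^(a-1) * ((t^a + b^a)^m) := by
        apply mul_le_mul_of_nonneg_left step2 (by positivity)
    _ ≤ 2 * t^(a-1) * Real.exp (-((1-s)/3 * p * t)) := by
        apply mul_le_mul_of_nonneg_left (steppow.trans stepexp) (by positivity)

lemma exp_neg_le_fact_div (x : ℝ) (hx : 0 < x) (n : ℕ) :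
    Real.exp (-x) ≤ (n.factorial : ℝ) / x ^ n := by
  rw [le_div_iff₀ (pow_pos hx n)]
  have h1 : x ^ n / (n.factorial : ℝ) ≤ Real.exp x := by
    refine le_trans ?_ (Real.sum_le_exp_of_nonneg hx.le (n+1))
    exact Finset.single_le_sum (f := fun i => x^i / (i.factorial:ℝ))
      (fun i _ => by positivity) (Finset.self_mem_range_succ n)
  have h2 : x ^ n ≤ Real.exp x * (n.factorial : ℝ) := by
    rw [div_le_iff₀ (by positivity)] at h1; linarith
  have h3 : Real.exp (-x) * Real.exp x = 1 := by
    rw [← Real.exp_add]; simp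
  calc Real.exp (-x) * x ^ n ≤ Real.exp (-x) * (Real.exp x * (n.factorial:ℝ)) :=
        mul_le_mul_of_nonneg_left h2 (Real.exp_pos _).le
    _ = (n.factorial : ℝ) := by rw [← mul_assoc, h3, one_mul]

lemma region1_integral {a p δ : ℝ} (ha : 1 < a) (hp : 3 ≤ p) (hδ : 0 < δ) (hδ1 : δ ≤ 1)
    {n : ℕ} (hn : a < n) :
    (∫ t in (0:ℝ)..(1/2), 2 * t^(a-1) * Real.exp (-(δ/3 * p * t)))
      ≤ (2/a + 2*(n.factorial:ℝ)*(3/δ)^n/((n:ℝ)-a)) * p^(-a) := by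
  have ha0 : (0:ℝ) < a := by linarith
  have hp0 : (0:ℝ) < p := by linarith
  have hip : 1/p ≤ 1/2 := by
    rw [div_le_div_iff₀ hp0 (by norm_num)]; linarith
  have hip0 : (0:ℝ) < 1/p := by positivity
  have contG : Continuous fun t : ℝ => 2 * t^(a-1) * Real.exp (-(δ/3 * p * t)) := by
    apply Continuous.mul
    · exact continuous_const.mul (Real.continuous_rpow_const (by linarith))
    · exact Real.continuous_exp.comp (by continuity)
  have intG1 : IntervalIntegrable (fun t : ℝ => 2 * t^(a-1) * Real.exp (-(δ/3 * p * t)))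
      MeasureTheory.volume 0 (1/p) := contG.intervalIntegrable _ _
  have intG2 : IntervalIntegrable (fun t : ℝ => 2 * t^(a-1) * Real.exp (-(δ/3 * p * t)))
      MeasureTheory.volume (1/p) (1/2) := contG.intervalIntegrable _ _
  rw [← integral_add_adjacent_intervals intG1 intG2]
  -- piece 1
  have piece1 : (∫ t in (0:ℝ)..(1/p), 2 * t^(a-1) * Real.exp (-(δ/3 * p * t)))
      ≤ (2/a) * p^(-a) := by
    have mono1 : (∫ t in (0:ℝ)..(1/p), 2 * t^(a-1) * Real.exp (-(δ/3 * p * t)))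
        ≤ ∫ t in (0:ℝ)..(1/p), 2 * t^(a-1) := by
      apply integral_mono_on hip0.le intG1
      · exact (continuous_const.mul (Real.continuous_rpow_const (by linarith))).intervalIntegrable _ _
      · intro t ht
        obtain ⟨ht0, _⟩ := ht
        have he : Real.exp (-(δ/3 * p * t)) ≤ 1 := by
          rw [Real.exp_le_one_iff]
          have : 0 ≤ δ/3 * p * t := by positivity
          linarith
        nlinarith [Real.rpow_nonneg ht0 (a-1), Real.exp_pos (-(δ/3 * p * t))]
    refine mono1.trans ?_
    rw [show (fun t : ℝ => 2 * t^(a-1)) = (fun t : ℝ => (2:ℝ) * t^(a-1)) from rfl]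
    rw [integral_const_mul (2:ℝ) (fun t : ℝ => t^(a-1))]
    rw [integral_rpow (Or.inl (by linarith : (-1:ℝ) < a-1))]
    rw [show a - 1 + 1 = a by ring, Real.zero_rpow ha0.ne']
    rw [show (1:ℝ)/p = p⁻¹ by rw [one_div], Real.inv_rpow hp0.le, ← Real.rpow_neg hp0.le]
    rw [sub_zero]
    ring_nf
    rfl
  -- piece 2
  have piece2 : (∫ t in (1/p:ℝ)..(1/2), 2 * t^(a-1) * Real.exp (-(δ/3 * p * t)))
      ≤ (2*(n.factorial:ℝ)*(3/δ)^n/((n:ℝ)-a)) * p^(-a) := by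
    have hna : (0:ℝ) < (n:ℝ) - a := by linarith
    have h0uIcc : (0:ℝ) ∉ Set.uIcc (1/p:ℝ) (1/2) :=
      Set.notMem_uIcc_of_lt hip0 (by norm_num)
    set Cn : ℝ := 2*(n.factorial:ℝ)*(3/δ)^n*(1/p)^n with hCn
    have hCn0 : 0 ≤ Cn := by positivity
    have intR : IntervalIntegrable (fun t : ℝ => Cn * t^(a-1-(n:ℝ)))
        MeasureTheory.volume (1/p) (1/2) :=
      (intervalIntegrable_rpow (Or.inr h0uIcc)).const_mul Cn
    have mono2 : (∫ t in (1/p:ℝ)..(1/2), 2 * t^(a-1) * Real.exp (-(δ/3 * p * t)))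
        ≤ ∫ t in (1/p:ℝ)..(1/2), Cn * t^(a-1-(n:ℝ)) := by
      apply integral_mono_on hip intG2 intR
      intro t ht
      obtain ⟨ht1, ht2⟩ := ht
      have ht0 : (0:ℝ) < t := lt_of_lt_of_le hip0 ht1
      have hx0 : (0:ℝ) < δ/3 * p * t := by positivity
      have hexp : Real.exp (-(δ/3 * p * t)) ≤ (n.factorial:ℝ) / (δ/3 * p * t)^n :=
        exp_neg_le_fact_div _ hx0 n
      have key : 2 * t^(a-1) * ((n.factorial:ℝ) / (δ/3 * p * t)^n)
          = Cn * t^(a-1-(n:ℝ)) := by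
        have e1 : t^(a-1-(n:ℝ)) = t^(a-1) * (t^n)⁻¹ := by
          rw [← Real.rpow_natCast t n, ← Real.rpow_neg ht0.le, ← Real.rpow_add ht0]
          congr 1
          try ring
        rw [e1, hCn]
        have e2 : ((δ/3 * p * t))^n = (δ/3*p)^n * t^n := by rw [← mul_pow]
        have e3 : ((3:ℝ)/δ)^n * (1/p)^n * (δ/3*p)^n = 1 := by
          rw [← mul_pow, ← mul_pow]
          rw [show (3/δ) * (1/p) * (δ/3*p) = 1 by field_simp]
          exact one_pow n
        field_simp [e2]
        try ring_nf
        simp only [inv_pow, one_div]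
        field_simp
      calc 2 * t^(a-1) * Real.exp (-(δ/3 * p * t))
          ≤ 2 * t^(a-1) * ((n.factorial:ℝ) / (δ/3 * p * t)^n) := by
            apply mul_le_mul_of_nonneg_left hexp
            positivity
        _ = Cn * t^(a-1-(n:ℝ)) := key
    refine mono2.trans ?_
    rw [integral_const_mul Cn (fun t : ℝ => t^(a-1-(n:ℝ)))]
    rw [integral_rpow (Or.inr ⟨by intro h; apply (show a ≠ (n:ℝ) from ne_of_lt hn); linarith, h0uIcc⟩)]
    rw [show a - 1 - (n:ℝ) + 1 = a - n by ring]
    have hnum : ((1/2:ℝ)^(a-(n:ℝ)) - (1/p)^(a-(n:ℝ))) / (a - (n:ℝ))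
        ≤ (1/p)^(a-(n:ℝ)) / ((n:ℝ)-a) := by
      rw [show ((1/2:ℝ)^(a-(n:ℝ)) - (1/p)^(a-(n:ℝ))) / (a - (n:ℝ))
          = ((1/p)^(a-(n:ℝ)) - (1/2)^(a-(n:ℝ))) / ((n:ℝ) - a) by
        rw [div_eq_div_iff (by linarith) (by linarith)]; ring]
      gcongr
      nlinarith [Real.rpow_nonneg (show (0:ℝ) ≤ 1/2 by norm_num) (a-(n:ℝ))]
    calc Cn * (((1/2:ℝ)^(a-(n:ℝ)) - (1/p)^(a-(n:ℝ))) / (a - (n:ℝ)))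
        ≤ Cn * ((1/p)^(a-(n:ℝ)) / ((n:ℝ)-a)) := mul_le_mul_of_nonneg_left hnum hCn0
      _ = (2*(n.factorial:ℝ)*(3/δ)^n/((n:ℝ)-a)) * p^(-a) := by
          rw [hCn]
          have e4 : ((1/p:ℝ))^n * (1/p)^(a-(n:ℝ)) = p^(-a) := by
            rw [← Real.rpow_natCast (1/p) n, ← Real.rpow_add hip0,
              one_div, Real.inv_rpow hp0.le, ← Real.rpow_neg hp0.le]
            congr 1
            try ring
          rw [show 2*(n.factorial:ℝ)*(3/δ)^n*(1/p)^n * ((1/p)^(a-(n:ℝ)) / ((n:ℝ)-a))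
              = 2*(n.factorial:ℝ)*(3/δ)^n/((n:ℝ)-a) * ((1/p)^n * (1/p)^(a-(n:ℝ))) by ring, e4]
  linarith

set_option maxHeartbeats 1000000 in
/-- **Lemma 3.3, inequality (3.7).** For every `a > 1` there is a constant
`C_a > 0` such that for every real `p ≥ 3` (`k_p = ⌊(p+1)/2⌋`):
`Σ_{k=0}^{k_p-1} C(p-2,k) B(a(k+1), a(p-k-1)) ≤ C_a (ap)^{-a}`. -/
theorem beta_binomial_sum_power_bound' (a : ℝ) (ha : 1 < a) :
    ∃ C : ℝ, 0 < C ∧ ∀ p : ℝ, 3 ≤ p →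
      ∑ k ∈ Finset.range ⌊(p + 1) / 2⌋₊,
          genBinom (p - 2) k * betaFn (a * (k + 1)) (a * (p - k - 1))
        ≤ C * (a * p) ^ (-a) := by
  have ha0 : (0:ℝ) < a := by linarith
  set s : ℝ := (1/2:ℝ)^(a-1) with hs
  have hs0 : 0 < s := Real.rpow_pos_of_pos (by norm_num) _
  have hs1 : s < 1 := Real.rpow_lt_one (by norm_num) (by norm_num) (by linarith)
  set δ : ℝ := 1 - s with hδdef
  have hδ : 0 < δ := by simp only [hδdef]; linarith
  have hδ1 : δ ≤ 1 := by simp only [hδdef]; linarith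
  set n : ℕ := ⌊a⌋₊ + 2 with hndef
  have hn : a < (n:ℕ) := by
    have h1 := Nat.lt_floor_add_one a
    have : ((⌊a⌋₊:ℝ) + 1) ≤ (n:ℝ) := by
      simp only [hndef]; push_cast; linarith
    linarith
  have hna : (0:ℝ) < (n:ℝ) - a := by linarith
  set C1 : ℝ := 2/a + 2*(n.factorial:ℝ)*(3/δ)^n/((n:ℝ)-a) with hC1def
  have hC10 : 0 < C1 := by
    apply add_pos (by positivity)
    apply div_pos (by positivity) hna
  set c : ℝ := (a-1)*Real.log 2 with hcdef
  have hc : 0 < c := mul_pos (by linarith) (Real.log_pos (by norm_num))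
  set CE : ℝ := Real.exp (a*(Real.log (a/c) - 1)) with hCEdef
  have hCE : 0 < CE := Real.exp_pos _
  set C2 : ℝ := (2:ℝ)^a * CE with hC2def
  have hC20 : 0 < C2 := by positivity
  refine ⟨(C1 + C2) * a^a, by positivity, ?_⟩
  intro p hp
  have hp0 : (0:ℝ) < p := by linarith
  set K : ℕ := ⌊(p+1)/2⌋₊ with hKdef
  set m : ℕ := ⌈p-2⌉₊ with hmdef
  have hm1 : p - 2 ≤ (m:ℝ) := Nat.le_ceil _
  have hm2 : (m:ℝ) ≤ p - 1 := by
    have := Nat.ceil_lt_add_one (show (0:ℝ) ≤ p - 2 by linarith)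
    simp only [hmdef]; linarith
  have hKr : (K:ℝ) ≤ (p+1)/2 := Nat.floor_le (by positivity)
  have hKm : K ≤ m + 1 := by
    have h1 : (K:ℝ) ≤ (m:ℝ) + 1 := by linarith
    exact_mod_cast h1
  -- per-k facts
  have hx1 : ∀ k ∈ range K, (1:ℝ) ≤ a * ((k:ℝ) + 1) := by
    intro k _
    nlinarith [Nat.cast_nonneg (α := ℝ) k]
  have hky : ∀ k ∈ range K, a * (p-1)/2 ≤ a * (p - (k:ℝ) - 1) := by
    intro k hk
    have h1 : (k:ℝ) + 1 ≤ (K:ℝ) := by exact_mod_cast Finset.mem_range.mp hk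
    have h2 : (k:ℝ) ≤ (p-1)/2 := by linarith
    nlinarith
  have hy1 : ∀ k ∈ range K, (1:ℝ) ≤ a * (p - (k:ℝ) - 1) := by
    intro k hk
    have := hky k hk
    nlinarith
  -- genBinom ≤ choose
  have hgen : ∀ k ∈ range K, genBinom (p-2) k ≤ (m.choose k : ℝ) := by
    intro k hk
    have hkK : k < K := Finset.mem_range.mp hk
    have hkm : k ≤ m := by omega
    have hkr : (k:ℝ) + 1 ≤ (K:ℝ) := by exact_mod_cast hkK
    have hfac : ∀ i ∈ range k, (0:ℝ) ≤ p - 2 - i ∧ p - 2 - i ≤ (m:ℝ) - i := by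
      intro i hi
      have hik : (i:ℝ) + 1 ≤ (k:ℝ) := by exact_mod_cast Finset.mem_range.mp hi
      constructor
      · linarith
      · linarith
    have hprod : ∏ i ∈ range k, (p - 2 - (i:ℝ)) ≤ ∏ i ∈ range k, ((m:ℝ) - i) :=
      Finset.prod_le_prod (fun i hi => (hfac i hi).1) (fun i hi => (hfac i hi).2)
    have hdc := descCast m k hkm
    have hchoose : (m.descFactorial k : ℝ) = (k.factorial : ℝ) * (m.choose k : ℝ) := by
      rw [← Nat.cast_mul, ← Nat.descFactorial_eq_factorial_mul_choose]
    unfold genBinom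
    rw [div_le_iff₀ (by positivity)]
    calc ∏ i ∈ range k, (p - 2 - (i:ℝ)) ≤ ∏ i ∈ range k, ((m:ℝ) - i) := hprod
      _ = (m.descFactorial k : ℝ) := hdc
      _ = (m.choose k : ℝ) * (k.factorial : ℝ) := by rw [hchoose]; ring
  -- betaFn nonneg
  have hbeta_nonneg : ∀ k : ℕ, 0 ≤ betaFn (a * ((k:ℝ) + 1)) (a * (p - (k:ℝ) - 1)) := by
    intro k
    unfold betaFn
    apply intervalIntegral.integral_nonneg (by norm_num)
    intro t ht
    obtain ⟨ht0, ht1⟩ := ht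
    have : (0:ℝ) ≤ 1 - t := by linarith
    positivity
  -- step: replace genBinom by choose
  have step0 : ∑ k ∈ range K, genBinom (p-2) k * betaFn (a * ((k:ℝ) + 1)) (a * (p - (k:ℝ) - 1))
      ≤ ∑ k ∈ range K, (m.choose k : ℝ) * betaFn (a * ((k:ℝ) + 1)) (a * (p - (k:ℝ) - 1)) := by
    apply Finset.sum_le_sum
    intro k hk
    exact mul_le_mul_of_nonneg_right (hgen k hk) (hbeta_nonneg k)
  refine step0.trans ?_
  -- split betaFn into two pieces
  have hcont : ∀ k ∈ range K,
      Continuous fun t : ℝ => t ^ (a*((k:ℝ)+1) - 1) * (1-t) ^ (a*(p-(k:ℝ)-1) - 1) :=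
    fun k hk => kernelCont (hx1 k hk) (hy1 k hk)
  have hsplit : ∀ k ∈ range K,
      betaFn (a * ((k:ℝ) + 1)) (a * (p - (k:ℝ) - 1))
        = (∫ t in (0:ℝ)..(1/2), t ^ (a*((k:ℝ)+1) - 1) * (1-t) ^ (a*(p-(k:ℝ)-1) - 1))
          + ∫ t in (1/2:ℝ)..1, t ^ (a*((k:ℝ)+1) - 1) * (1-t) ^ (a*(p-(k:ℝ)-1) - 1) := by
    intro k hk
    unfold betaFn
    exact (integral_add_adjacent_intervals ((hcont k hk).intervalIntegrable _ _)
      ((hcont k hk).intervalIntegrable _ _)).symm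
  rw [Finset.sum_congr rfl (fun k hk => by rw [hsplit k hk, mul_add]), Finset.sum_add_distrib]
  -- region 1
  have region1 : ∑ k ∈ range K, (m.choose k : ℝ) *
        (∫ t in (0:ℝ)..(1/2), t ^ (a*((k:ℝ)+1) - 1) * (1-t) ^ (a*(p-(k:ℝ)-1) - 1))
      ≤ C1 * p^(-a) := by
    have e1 : ∀ k ∈ range K, (m.choose k : ℝ) *
        (∫ t in (0:ℝ)..(1/2), t ^ (a*((k:ℝ)+1) - 1) * (1-t) ^ (a*(p-(k:ℝ)-1) - 1))
        = ∫ t in (0:ℝ)..(1/2), (m.choose k : ℝ) * (t ^ (a*((k:ℝ)+1) - 1) * (1-t) ^ (a*(p-(k:ℝ)-1) - 1)) := by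
      intro k hk
      exact (integral_const_mul _ _).symm
    rw [Finset.sum_congr rfl e1]
    rw [← intervalIntegral.integral_finset_sum (fun k hk =>
      (((hcont k hk).intervalIntegrable _ _).const_mul _))]
    have contG : Continuous fun t : ℝ => 2 * t^(a-1) * Real.exp (-(δ/3 * p * t)) := by
      apply Continuous.mul
      · exact continuous_const.mul (Real.continuous_rpow_const (by linarith))
      · exact Real.continuous_exp.comp ((continuous_const.mul continuous_id).neg)
    have contS : Continuous fun t : ℝ => ∑ k ∈ range K,
        (m.choose k : ℝ) * (t ^ (a*((k:ℝ)+1) - 1) * (1-t) ^ (a*(p-(k:ℝ)-1) - 1)) :=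
      continuous_finset_sum _ (fun k hk => continuous_const.mul (hcont k hk))
    have intS : IntervalIntegrable (fun t : ℝ => ∑ k ∈ range K,
        (m.choose k : ℝ) * (t ^ (a*((k:ℝ)+1) - 1) * (1-t) ^ (a*(p-(k:ℝ)-1) - 1)))
        MeasureTheory.volume 0 (1/2) := contS.intervalIntegrable _ _
    have intG : IntervalIntegrable (fun t : ℝ => 2 * t^(a-1) * Real.exp (-(δ/3 * p * t)))
        MeasureTheory.volume 0 (1/2) := contG.intervalIntegrable _ _
    have mono := integral_mono_on (show (0:ℝ) ≤ 1/2 by norm_num)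
      intS intG
      (fun t ht => by
        have h := region1_pointwise ha hp hm1 hm2 hKm ht
        rw [hδdef, hs]
        exact h)
    exact mono.trans (region1_integral ha hp hδ hδ1 hn)
  -- region 2
  have hbound2 : ∀ k ∈ range K,
      (∫ t in (1/2:ℝ)..1, t ^ (a*((k:ℝ)+1) - 1) * (1-t) ^ (a*(p-(k:ℝ)-1) - 1))
        ≤ (1/2) * (4 * 2^a * (1/2:ℝ)^(a*p)) := by
    intro k hk
    have intF : IntervalIntegrable
        (fun t : ℝ => t ^ (a*((k:ℝ)+1) - 1) * (1-t) ^ (a*(p-(k:ℝ)-1) - 1))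
        MeasureTheory.volume (1/2) 1 := (hcont k hk).intervalIntegrable _ _
    have intC : IntervalIntegrable (fun _ : ℝ => (4 * 2^a * (1/2:ℝ)^(a*p)))
        MeasureTheory.volume (1/2) 1 := intervalIntegrable_const
    have hmono := integral_mono_on (show (1/2:ℝ) ≤ 1 by norm_num)
      intF intC
      (fun t ht => region2_pointwise ha hp
        (show a*((k:ℝ)+1) + a*(p-(k:ℝ)-1) = a*p by ring)
        (by nlinarith [Nat.cast_nonneg (α := ℝ) k])
        (hky k hk) ht)
    rwa [integral_const, smul_eq_mul, show (1:ℝ) - 1/2 = 1/2 by norm_num] at hmono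
  have hsumchoose : ∑ k ∈ range K, (m.choose k : ℝ) ≤ (2:ℝ)^(m:ℕ) := by
    have h1 : ∑ k ∈ range K, (m.choose k : ℝ) ≤ ∑ k ∈ range (m+1), (m.choose k : ℝ) :=
      Finset.sum_le_sum_of_subset_of_nonneg (Finset.range_subset_range.mpr hKm)
        (fun i _ _ => by positivity)
    have h2 : ∑ k ∈ range (m+1), (m.choose k : ℝ) = (2:ℝ)^(m:ℕ) := by
      rw [← Nat.cast_sum, Nat.sum_range_choose]
      push_cast; ring
    linarith
  have region2 : ∑ k ∈ range K, (m.choose k : ℝ) *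
        (∫ t in (1/2:ℝ)..1, t ^ (a*((k:ℝ)+1) - 1) * (1-t) ^ (a*(p-(k:ℝ)-1) - 1))
      ≤ C2 * p^(-a) := by
    have hB0 : (0:ℝ) ≤ (1/2) * (4 * 2^a * (1/2:ℝ)^(a*p)) := by positivity
    have st1 : ∑ k ∈ range K, (m.choose k : ℝ) *
        (∫ t in (1/2:ℝ)..1, t ^ (a*((k:ℝ)+1) - 1) * (1-t) ^ (a*(p-(k:ℝ)-1) - 1))
        ≤ (∑ k ∈ range K, (m.choose k : ℝ)) * ((1/2) * (4 * 2^a * (1/2:ℝ)^(a*p))) := by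
      rw [Finset.sum_mul]
      apply Finset.sum_le_sum
      intro k hk
      exact mul_le_mul_of_nonneg_left (hbound2 k hk) (by positivity)
    refine st1.trans ?_
    have st2 : (∑ k ∈ range K, (m.choose k : ℝ)) * ((1/2) * (4 * 2^a * (1/2:ℝ)^(a*p)))
        ≤ (2:ℝ)^((p-1):ℝ) * ((1/2) * (4 * 2^a * (1/2:ℝ)^(a*p))) := by
      apply mul_le_mul_of_nonneg_right _ hB0
      refine hsumchoose.trans ?_
      rw [← Real.rpow_natCast (2:ℝ) m]
      exact Real.rpow_le_rpow_of_exponent_le one_le_two hm2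
    refine st2.trans ?_
    have st3 : (2:ℝ)^((p-1):ℝ) * ((1/2) * (4 * 2^a * (1/2:ℝ)^(a*p)))
        = (2:ℝ)^a * Real.exp (-(c*p)) := by
      have e0 : ((1:ℝ)/2)^(a*p) = (2:ℝ)^(-(a*p)) := by
        rw [one_div, Real.inv_rpow (by norm_num), ← Real.rpow_neg (by norm_num)]
      have e1 : (2:ℝ)^((p-1):ℝ) * (2:ℝ)^(-(a*p)) = (2:ℝ)^(p-1-a*p) := by
        rw [← Real.rpow_add (by norm_num : (0:ℝ) < 2)]
        congr 1
        try ring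
      have e2 : (2:ℝ)^(p-1-a*p) * 2 = (2:ℝ)^((1-a)*p) := by
        rw [← Real.rpow_add_one (by norm_num : (2:ℝ) ≠ 0)]
        congr 1
        try ring
      have e3 : (2:ℝ)^((1-a)*p) = Real.exp (-(c*p)) := by
        rw [Real.rpow_def_of_pos (by norm_num : (0:ℝ) < 2)]
        congr 1
        rw [hcdef]; ring
      calc (2:ℝ)^((p-1):ℝ) * ((1/2) * (4 * 2^a * (1/2:ℝ)^(a*p)))
          = (2:ℝ)^a * ((2:ℝ)^((p-1):ℝ) * (1/2:ℝ)^(a*p) * 2) := by ring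
        _ = (2:ℝ)^a * Real.exp (-(c*p)) := by rw [e0, e1, e2, e3]
    rw [st3, hC2def]
    have st4 := exp_le_rpow_bound ha0 hc hp0
    rw [← hCEdef] at st4
    calc (2:ℝ)^a * Real.exp (-(c*p)) ≤ (2:ℝ)^a * (CE * p^(-a)) :=
          mul_le_mul_of_nonneg_left st4 (by positivity)
      _ = (2:ℝ)^a * CE * p^(-a) := by ring
  -- combine
  have hfin : ((C1 + C2) * a^a) * (a*p)^(-a) = (C1 + C2) * p^(-a) := by
    rw [Real.mul_rpow ha0.le hp0.le]
    rw [show ((C1 + C2) * a^a) * (a^(-a) * p^(-a)) = (C1+C2) * (a^a * a^(-a)) * p^(-a) by ring]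
    rw [← Real.rpow_add ha0, add_neg_cancel, Real.rpow_zero, mul_one]
  rw [hfin]
  linarith
end

section
/- Let N ≥ 2 be an integer, let 1 < γ < 2, set ν := 2 − 2/γ ∈ (0,1), and let b : [−1,1] → [0,∞) be measurable with ∫₀^π b(cos θ) sin^{N−2ν} θ dθ < ∞ (which implies ∫₀^π b(cos θ) sin^N θ dθ < ∞). For real p ≥ 3 define e_p := ∫₀^π ( ∫₀¹ t (1 − (sin²θ / 2) t)^{p−2} dt ) b(cos θ) sin^N θ dθ. Then p^ν e_p → 0 as p → ∞. -/
open Real Filter MeasureTheory intervalIntegral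

private lemma xexp_le_one' {x : ℝ} (hx : 0 ≤ x) : x * Real.exp (-x) ≤ 1 := by
  have h := Real.add_one_le_exp x
  have hx' : x ≤ Real.exp x := by linarith
  calc x * Real.exp (-x) ≤ Real.exp x * Real.exp (-x) :=
        mul_le_mul_of_nonneg_right hx' (Real.exp_nonneg _)
    _ = 1 := by rw [← Real.exp_add]; simp

private lemma inner_cont' (p : ℝ) (hq : 0 ≤ p - 2) :
    Continuous fun θ : ℝ => ∫ t in (0:ℝ)..1, t * (1 - Real.sin θ ^ 2 / 2 * t) ^ (p - 2) := by
  apply intervalIntegral.continuous_parametric_intervalIntegral_of_continuous'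
  have hc : Continuous fun q : ℝ × ℝ => (1 - Real.sin q.1 ^ 2 / 2 * q.2) := by fun_prop
  exact continuous_snd.mul ((Real.continuous_rpow_const hq).comp hc)

private lemma inner_intble' (p s : ℝ) (hq : 0 ≤ p - 2) :
    IntervalIntegrable (fun t : ℝ => t * (1 - s * t) ^ (p - 2)) volume 0 1 := by
  have hc : Continuous fun t : ℝ => t * (1 - s * t) ^ (p - 2) := by
    have : Continuous fun t : ℝ => 1 - s * t := by fun_prop
    exact continuous_id.mul ((Real.continuous_rpow_const hq).comp this)
  exact hc.intervalIntegrable 0 1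

private lemma inner_nonneg' {p s : ℝ} (hp : 3 ≤ p) (hs0 : 0 ≤ s) (hs : s ≤ 1/2) :
    0 ≤ ∫ t in (0:ℝ)..1, t * (1 - s * t) ^ (p - 2) := by
  apply intervalIntegral.integral_nonneg (by norm_num)
  intro t ht
  have h1 : 0 ≤ 1 - s * t := by nlinarith [ht.1, ht.2]
  exact mul_nonneg ht.1 (Real.rpow_nonneg h1 _)

private lemma inner_le_half' {p s : ℝ} (hp : 3 ≤ p) (hs0 : 0 ≤ s) (hs : s ≤ 1/2) :
    (∫ t in (0:ℝ)..1, t * (1 - s * t) ^ (p - 2)) ≤ 1 / 2 := by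
  have h : (∫ t in (0:ℝ)..1, t * (1 - s * t) ^ (p - 2)) ≤ ∫ t in (0:ℝ)..1, t := by
    apply intervalIntegral.integral_mono_on (by norm_num)
      (inner_intble' p s (by linarith)) (continuous_id.intervalIntegrable 0 1)
    intro t ht
    have h1 : 0 ≤ 1 - s * t := by nlinarith [ht.1, ht.2]
    have h2 : 1 - s * t ≤ 1 := by nlinarith [ht.1, ht.2]
    calc t * (1 - s * t) ^ (p - 2) ≤ t * 1 :=
          mul_le_mul_of_nonneg_left (Real.rpow_le_one h1 h2 (by linarith)) ht.1
      _ = t := mul_one t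
  have h2 : (∫ t in (0:ℝ)..1, t) = 1 / 2 := by
    rw [integral_id]; norm_num
  linarith [h, h2.le]

private lemma inner_le_inv' {p s : ℝ} (hp : 3 ≤ p) (hs0 : 0 < s) (hs : s ≤ 1/2) :
    (∫ t in (0:ℝ)..1, t * (1 - s * t) ^ (p - 2)) ≤ 1 / ((p - 2) * s) := by
  have hq0 : (0:ℝ) < p - 2 := by linarith
  have h : (∫ t in (0:ℝ)..1, t * (1 - s * t) ^ (p - 2))
      ≤ ∫ _t in (0:ℝ)..1, 1 / ((p - 2) * s) := by
    apply intervalIntegral.integral_mono_on (by norm_num)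
      (inner_intble' p s (by linarith)) intervalIntegrable_const
    intro t ht
    have h1 : 0 ≤ 1 - s * t := by nlinarith [ht.1, ht.2]
    have hexp : (1 - s * t) ^ (p - 2) ≤ Real.exp (-((p - 2) * (s * t))) := by
      have hle : 1 - s * t ≤ Real.exp (-(s * t)) := by
        have := Real.add_one_le_exp (-(s * t)); linarith
      calc (1 - s * t) ^ (p - 2) ≤ (Real.exp (-(s * t))) ^ (p - 2) :=
            Real.rpow_le_rpow h1 hle (by linarith)
        _ = Real.exp (-((p - 2) * (s * t))) := by
            rw [← Real.exp_mul]; ring_nf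
    have hst : 0 ≤ s * t := mul_nonneg hs0.le ht.1
    have hx : 0 ≤ (p - 2) * (s * t) := mul_nonneg hq0.le hst
    have key : ((p - 2) * s) * (t * Real.exp (-((p - 2) * (s * t)))) ≤ 1 := by
      have h0 := xexp_le_one' hx
      calc ((p - 2) * s) * (t * Real.exp (-((p - 2) * (s * t))))
          = ((p - 2) * (s * t)) * Real.exp (-((p - 2) * (s * t))) := by ring
        _ ≤ 1 := h0
    have hpos : 0 < (p - 2) * s := mul_pos hq0 hs0
    calc t * (1 - s * t) ^ (p - 2) ≤ t * Real.exp (-((p - 2) * (s * t))) :=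
          mul_le_mul_of_nonneg_left hexp ht.1
      _ ≤ 1 / ((p - 2) * s) := by
          rw [le_div_iff₀ hpos]; linarith [key]
  simpa using h

/-- **Lemma 3.4, second part, under (H2).** Let `N ≥ 2`, `1 < γ < 2`,
`ν = 2 - 2/γ ∈ (0,1)`, and let `b : [-1,1] → [0,∞)` be measurable with
`∫₀^π b(cos θ) sin^{N-2ν} θ dθ < ∞`. For real `p ≥ 3` set
`e_p = ∫₀^π (∫₀¹ t (1 - (sin²θ/2) t)^{p-2} dt) b(cos θ) sin^N θ dθ`.
Then `p^ν e_p → 0` as `p → ∞`. -/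
theorem cutoff_remainder_tendsto_zero_weighted (N : ℕ) (hN : 2 ≤ N)
    (γ : ℝ) (hγ1 : 1 < γ) (hγ2 : γ < 2) (ν : ℝ) (hν : ν = 2 - 2 / γ)
    (b : ℝ → ℝ) (hbm : Measurable b) (hb0 : ∀ x, 0 ≤ b x)
    (hbint : IntervalIntegrable
      (fun θ => b (Real.cos θ) * Real.sin θ ^ ((N : ℝ) - 2 * ν)) volume 0 π) :
    Tendsto (fun p : ℝ =>
        p ^ ν *
          ∫ θ in (0:ℝ)..π,
            (∫ t in (0:ℝ)..1, t * (1 - Real.sin θ ^ 2 / 2 * t) ^ (p - 2)) *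
              (b (Real.cos θ) * Real.sin θ ^ N))
      atTop (nhds 0) := by
  have hγ0 : (0:ℝ) < γ := by linarith
  have hν0 : 0 < ν := by
    rw [hν]
    have : 2 / γ < 2 := by rw [div_lt_iff₀ hγ0]; linarith
    linarith
  have hν1 : ν < 1 := by
    rw [hν]
    have : 1 < 2 / γ := by rw [lt_div_iff₀ hγ0]; linarith
    linarith
  set μ := volume.restrict (Set.Ioc (0:ℝ) π) with hμ
  set F : ℝ → ℝ → ℝ := fun p θ =>
    p ^ ν * ((∫ t in (0:ℝ)..1, t * (1 - Real.sin θ ^ 2 / 2 * t) ^ (p - 2)) *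
      (b (Real.cos θ) * Real.sin θ ^ N)) with hF
  have hsin_mem : ∀ θ ∈ Set.Ioc (0:ℝ) π, 0 ≤ Real.sin θ ∧ Real.sin θ ≤ 1 := fun θ hθ =>
    ⟨Real.sin_nonneg_of_nonneg_of_le_pi hθ.1.le hθ.2, Real.sin_le_one θ⟩
  -- the main pointwise bound
  have key_bound : ∀ p : ℝ, 3 ≤ p → ∀ θ ∈ Set.Ioc (0:ℝ) π,
      F p θ ≤ 6 * (b (Real.cos θ) * Real.sin θ ^ ((N:ℝ) - 2 * ν)) := by
    intro p hp θ hθ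
    obtain ⟨hx0, hx1⟩ := hsin_mem θ hθ
    have hs0 : 0 ≤ Real.sin θ ^ 2 / 2 := by positivity
    have hs12 : Real.sin θ ^ 2 / 2 ≤ 1 / 2 := by nlinarith
    have hp0 : (0:ℝ) < p := by linarith
    have hB0 : 0 ≤ b (Real.cos θ) := hb0 _
    have hI0 : 0 ≤ ∫ t in (0:ℝ)..1, t * (1 - Real.sin θ ^ 2 / 2 * t) ^ (p - 2) :=
      inner_nonneg' hp hs0 hs12
    rcases eq_or_lt_of_le hx0 with hx | hx
    · -- sin θ = 0
      have hx' : Real.sin θ = 0 := hx.symm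
      have h0 : F p θ = 0 := by
        simp only [hF, hx', zero_pow (show N ≠ 0 by omega), mul_zero]
      rw [h0]
      positivity
    · -- sin θ > 0
      set x := Real.sin θ with hxdef
      set I := ∫ t in (0:ℝ)..1, t * (1 - x ^ 2 / 2 * t) ^ (p - 2) with hIdef
      have hspos : 0 < x ^ 2 / 2 := by positivity
      have hq0 : (0:ℝ) < p - 2 := by linarith
      have hxne : x ≠ 0 := hx.ne'
      have hIa : I ≤ 1 / 2 := inner_le_half' hp hs0 hs12
      have hIb : I ≤ 2 / ((p - 2) * x ^ 2) := by
        calc I ≤ 1 / ((p - 2) * (x ^ 2 / 2)) := inner_le_inv' hp hspos hs12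
          _ = 2 / ((p - 2) * x ^ 2) := by
            field_simp
      have hIc : I ≤ (1/2 : ℝ) ^ (1 - ν) * (2 / ((p - 2) * x ^ 2)) ^ ν := by
        rcases eq_or_lt_of_le hI0 with h0 | h0
        · rw [← h0]; positivity
        · have hsplit : I = I ^ (1 - ν) * I ^ ν := by
            rw [← Real.rpow_add h0]; norm_num
          rw [hsplit]
          exact mul_le_mul (Real.rpow_le_rpow hI0 hIa (by linarith))
            (Real.rpow_le_rpow hI0 hIb (by linarith))
            (Real.rpow_nonneg hI0 _) (Real.rpow_nonneg (by norm_num) _)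
      have hB0' : 0 ≤ b (Real.cos θ) * x ^ N := mul_nonneg hB0 (pow_nonneg hx0 N)
      have hpν : 0 ≤ p ^ ν := Real.rpow_nonneg hp0.le _
      have step1 : F p θ ≤ p ^ ν * ((1/2 : ℝ) ^ (1 - ν) * (2 / ((p - 2) * x ^ 2)) ^ ν
          * (b (Real.cos θ) * x ^ N)) := by
        simp only [hF]
        exact mul_le_mul_of_nonneg_left (mul_le_mul_of_nonneg_right hIc hB0') hpν
      have hxN : x ^ N = x ^ ((N:ℝ) - 2 * ν) * x ^ (2 * ν) := by
        rw [← Real.rpow_natCast x N, ← Real.rpow_add hx]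
        congr 1
        ring
      have hrw : (2 / ((p - 2) * x ^ 2)) ^ ν = 2 ^ ν / ((p - 2) ^ ν * x ^ (2 * ν)) := by
        rw [Real.div_rpow (by norm_num) (by positivity),
          Real.mul_rpow hq0.le (by positivity)]
        congr 2
        rw [← Real.rpow_natCast x 2, ← Real.rpow_mul hx0]
        norm_num
      have hqν : (0:ℝ) < (p - 2) ^ ν := Real.rpow_pos_of_pos hq0 _
      have hxν : (0:ℝ) < x ^ (2 * ν) := Real.rpow_pos_of_pos hx _
      have step2 : p ^ ν * ((1/2 : ℝ) ^ (1 - ν) * (2 / ((p - 2) * x ^ 2)) ^ ν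
          * (b (Real.cos θ) * x ^ N))
          = (1/2 : ℝ) ^ (1 - ν) * 2 ^ ν * (p ^ ν / (p - 2) ^ ν)
            * (b (Real.cos θ) * x ^ ((N:ℝ) - 2 * ν)) := by
        rw [hrw, hxN]
        field_simp
      have hconst : (1/2 : ℝ) ^ (1 - ν) ≤ 1 :=
        Real.rpow_le_one (by norm_num) (by norm_num) (by linarith)
      have h2ν : (2:ℝ) ^ ν ≤ 2 := by
        calc (2:ℝ) ^ ν ≤ 2 ^ (1:ℝ) :=
              Real.rpow_le_rpow_of_exponent_le one_le_two hν1.le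
          _ = 2 := Real.rpow_one 2
      have hpq : p ^ ν / (p - 2) ^ ν ≤ 3 := by
        have hd : p / (p - 2) ≤ 3 := by rw [div_le_iff₀ hq0]; linarith
        have h1 : (1:ℝ) ≤ p / (p - 2) := by rw [le_div_iff₀ hq0]; linarith
        calc p ^ ν / (p - 2) ^ ν = (p / (p - 2)) ^ ν :=
              (Real.div_rpow hp0.le hq0.le ν).symm
          _ ≤ (p / (p - 2)) ^ (1:ℝ) :=
              Real.rpow_le_rpow_of_exponent_le h1 hν1.le
          _ = p / (p - 2) := Real.rpow_one _
          _ ≤ 3 := hd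
      have hW0 : 0 ≤ b (Real.cos θ) * x ^ ((N:ℝ) - 2 * ν) :=
        mul_nonneg hB0 (Real.rpow_nonneg hx0 _)
      have hABC : (1/2 : ℝ) ^ (1 - ν) * 2 ^ ν * (p ^ ν / (p - 2) ^ ν) ≤ 6 := by
        have hA : 0 ≤ (1/2:ℝ) ^ (1-ν) := Real.rpow_nonneg (by norm_num) _
        have hB : 0 ≤ (2:ℝ) ^ ν := Real.rpow_nonneg (by norm_num) _
        have hC : 0 ≤ p ^ ν / (p - 2) ^ ν := by positivity
        have h12 : (1/2 : ℝ) ^ (1 - ν) * 2 ^ ν ≤ 2 := by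
          have := mul_le_mul hconst h2ν hB (by norm_num : (0:ℝ) ≤ 1)
          linarith
        have h12' : 0 ≤ (1/2 : ℝ) ^ (1 - ν) * 2 ^ ν := mul_nonneg hA hB
        have := mul_le_mul h12 hpq hC (by norm_num : (0:ℝ) ≤ 2)
        linarith
      calc F p θ ≤ _ := step1
        _ = _ := step2
        _ ≤ 6 * (b (Real.cos θ) * x ^ ((N:ℝ) - 2 * ν)) :=
            mul_le_mul_of_nonneg_right hABC hW0
  -- nonnegativity of F
  have hF_nonneg : ∀ p : ℝ, 3 ≤ p → ∀ θ ∈ Set.Ioc (0:ℝ) π, 0 ≤ F p θ := by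
    intro p hp θ hθ
    obtain ⟨hx0, hx1⟩ := hsin_mem θ hθ
    have hs0 : 0 ≤ Real.sin θ ^ 2 / 2 := by positivity
    have hs12 : Real.sin θ ^ 2 / 2 ≤ 1 / 2 := by nlinarith
    have hp0 : (0:ℝ) < p := by linarith
    have hI0 := inner_nonneg' hp hs0 hs12
    have hB1 := hb0 (Real.cos θ)
    have hB2 : 0 ≤ b (Real.cos θ) * Real.sin θ ^ N := mul_nonneg hB1 (pow_nonneg hx0 N)
    exact mul_nonneg (Real.rpow_nonneg hp0.le _) (mul_nonneg hI0 hB2)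
  -- integrable dominating function
  have hGint : Integrable (fun θ => 6 * (b (Real.cos θ) * Real.sin θ ^ ((N:ℝ) - 2 * ν))) μ := by
    have h := (intervalIntegrable_iff_integrableOn_Ioc_of_le Real.pi_pos.le).mp hbint
    exact h.const_mul 6
  -- dominated convergence
  have hmain : Tendsto (fun p : ℝ => ∫ θ, F p θ ∂μ) atTop (nhds 0) := by
    have h0 : (0:ℝ) = ∫ _θ, (0:ℝ) ∂μ := by simp
    rw [h0]
    apply MeasureTheory.tendsto_integral_filter_of_dominated_convergence
      (fun θ => 6 * (b (Real.cos θ) * Real.sin θ ^ ((N:ℝ) - 2 * ν)))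
    · filter_upwards [eventually_ge_atTop (3:ℝ)] with p hp
      have hc := inner_cont' p (by linarith)
      exact ((measurable_const.mul (hc.measurable.mul
        ((hbm.comp Real.measurable_cos).mul
          (Real.measurable_sin.pow_const N)))).aestronglyMeasurable)
    · filter_upwards [eventually_ge_atTop (3:ℝ)] with p hp
      rw [hμ, ae_restrict_iff' measurableSet_Ioc]
      filter_upwards with θ hθ
      rw [Real.norm_eq_abs, abs_of_nonneg (hF_nonneg p hp θ hθ)]
      exact key_bound p hp θ hθ
    · exact hGint
    · rw [hμ, ae_restrict_iff' measurableSet_Ioc]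
      filter_upwards with θ hθ
      obtain ⟨hx0, hx1⟩ := hsin_mem θ hθ
      rcases eq_or_lt_of_le hx0 with hx | hx
      · have hx' : Real.sin θ = 0 := hx.symm
        have hzero : ∀ p : ℝ, F p θ = 0 := by
          intro p
          simp only [hF, hx', zero_pow (show N ≠ 0 by omega), mul_zero]
        simpa [hzero] using (tendsto_const_nhds : Tendsto (fun _ : ℝ => (0:ℝ)) atTop (nhds 0))
      · set C := 2 * (b (Real.cos θ) * Real.sin θ ^ N) / Real.sin θ ^ 2 with hC
        have hC0 : 0 ≤ C := by
          have hB1 := hb0 (Real.cos θ)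
          have hB2 : 0 ≤ b (Real.cos θ) * Real.sin θ ^ N :=
            mul_nonneg hB1 (pow_nonneg hx0 N)
          positivity
        have hub : ∀ᶠ p in atTop, F p θ ≤ 3 * p ^ (ν - 1) * C := by
          filter_upwards [eventually_ge_atTop (3:ℝ)] with p hp
          have hs0 : 0 ≤ Real.sin θ ^ 2 / 2 := by positivity
          have hs12 : Real.sin θ ^ 2 / 2 ≤ 1 / 2 := by nlinarith
          have hspos : 0 < Real.sin θ ^ 2 / 2 := by positivity
          have hq0 : (0:ℝ) < p - 2 := by linarith
          have hp0 : (0:ℝ) < p := by linarith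
          have hxne : Real.sin θ ≠ 0 := hx.ne'
          have hIb : (∫ t in (0:ℝ)..1, t * (1 - Real.sin θ ^ 2 / 2 * t) ^ (p - 2))
              ≤ 2 / ((p - 2) * Real.sin θ ^ 2) := by
            calc (∫ t in (0:ℝ)..1, t * (1 - Real.sin θ ^ 2 / 2 * t) ^ (p - 2))
                ≤ 1 / ((p - 2) * (Real.sin θ ^ 2 / 2)) := inner_le_inv' hp hspos hs12
              _ = 2 / ((p - 2) * Real.sin θ ^ 2) := by field_simp
          have hB2 : 0 ≤ b (Real.cos θ) * Real.sin θ ^ N :=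
            mul_nonneg (hb0 _) (pow_nonneg hx0 N)
          have hpν : 0 ≤ p ^ ν := Real.rpow_nonneg hp0.le _
          have h2 : 2 / ((p - 2) * Real.sin θ ^ 2) * (b (Real.cos θ) * Real.sin θ ^ N)
              = (1 / (p - 2)) * C := by
            rw [hC]; field_simp
          have step : F p θ ≤ p ^ ν / (p - 2) * C := by
            simp only [hF]
            calc p ^ ν * ((∫ t in (0:ℝ)..1, t * (1 - Real.sin θ ^ 2 / 2 * t) ^ (p - 2))
                  * (b (Real.cos θ) * Real.sin θ ^ N))
                ≤ p ^ ν * ((1 / (p - 2)) * C) := by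
                  apply mul_le_mul_of_nonneg_left _ hpν
                  rw [← h2]
                  exact mul_le_mul_of_nonneg_right hIb hB2
              _ = p ^ ν / (p - 2) * C := by ring
          have hfrac : p ^ ν / (p - 2) ≤ 3 * p ^ (ν - 1) := by
            have h3 : p / 3 ≤ p - 2 := by linarith
            have hpν' : 0 < p ^ ν := Real.rpow_pos_of_pos hp0 _
            have heq : 3 * p ^ (ν - 1) = p ^ ν / (p / 3) := by
              rw [Real.rpow_sub hp0, Real.rpow_one]
              field_simp
            rw [heq]
            gcongr
            all_goals first | exact hpν'.le | positivity | linarith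
          calc F p θ ≤ p ^ ν / (p - 2) * C := step
            _ ≤ 3 * p ^ (ν - 1) * C := mul_le_mul_of_nonneg_right hfrac hC0
        have hlb : ∀ᶠ p in atTop, 0 ≤ F p θ := by
          filter_upwards [eventually_ge_atTop (3:ℝ)] with p hp
          exact hF_nonneg p hp θ hθ
        have hten : Tendsto (fun p : ℝ => 3 * p ^ (ν - 1) * C) atTop (nhds 0) := by
          have h1 : Tendsto (fun p : ℝ => p ^ (ν - 1)) atTop (nhds 0) := by
            have hne : ν - 1 = -(1 - ν) := by ring
            rw [hne]
            exact tendsto_rpow_neg_atTop (by linarith)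
          have := (h1.const_mul 3).mul_const C
          simpa using this
        exact squeeze_zero' hlb hub hten
  -- transfer back to the interval-integral formulation
  apply hmain.congr'
  filter_upwards [eventually_ge_atTop (3:ℝ)] with p hp
  rw [hμ]
  rw [show (∫ θ in (0:ℝ)..π,
      (∫ t in (0:ℝ)..1, t * (1 - Real.sin θ ^ 2 / 2 * t) ^ (p - 2)) *
        (b (Real.cos θ) * Real.sin θ ^ N))
    = ∫ θ in Set.Ioc (0:ℝ) π,
      (∫ t in (0:ℝ)..1, t * (1 - Real.sin θ ^ 2 / 2 * t) ^ (p - 2)) *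
        (b (Real.cos θ) * Real.sin θ ^ N) from
    intervalIntegral.integral_of_le Real.pi_pos.le]
  rw [← MeasureTheory.integral_const_mul]
end
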